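/- arXiv:2502.16254 — 18 statements merged into one kernel-verified Lean document; each statement's English description precedes it below -/
import Mathlib

section
/- Let (g, [·,·]_g, N) be a Nijenhuis Lie algebra and (V, ρ, S) a Nijenhuis representation of it. Then the bracket [(x,u), (y,v)]_⋉ := ([x,y]_g, ρ_x v − ρ_y u) makes the vector space g ⊕ V into a Lie algebra, and the map (N ⊕ S)(x,u) := (N x, S u) is a Nijenhuis operator on (g ⊕ V, [·,·]_⋉); hence the semidirect product is a Nijenhuis Lie algebra. -/
/-- The semidirect product of a Nijenhuis Lie algebra with a Nijenhuis
representation is a Nijenhuis Lie algebra: the bracket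
`[(x,u),(y,v)] = ([x,y], ρ x v - ρ y u)` is a Lie bracket on `g × V` and
`(N ⊕ S)(x,u) = (N x, S u)` is a Nijenhuis operator for it. -/
theorem stmt_0 {k g V : Type*} [Field k]
    [LieRing g] [LieAlgebra k g]
    [AddCommGroup V] [Module k V]
    (N : g →ₗ[k] g)
    (hN : ∀ x y : g, ⁅N x, N y⁆ = N (⁅N x, y⁆ + ⁅x, N y⁆ - N ⁅x, y⁆))
    (ρ : g →ₗ[k] V →ₗ[k] V)
    (hρ : ∀ x y : g, ∀ v : V, ρ ⁅x, y⁆ v = ρ x (ρ y v) - ρ y (ρ x v))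
    (S : V →ₗ[k] V)
    (hS : ∀ (x : g) (v : V), ρ (N x) (S v) = S (ρ (N x) v + ρ x (S v) - S (ρ x v))) :
    ∀ br : g × V → g × V → g × V,
      br = (fun a b => (⁅a.1, b.1⁆, ρ a.1 b.2 - ρ b.1 a.2)) →
    ∀ NS : g × V → g × V, NS = (fun a => (N a.1, S a.2)) →
      -- the bracket is bilinear
      (∀ a b c : g × V, br (a + b) c = br a c + br b c) ∧
      (∀ a b c : g × V, br a (b + c) = br a b + br a c) ∧
      (∀ (t : k) (a b : g × V), br (t • a) b = t • br a b) ∧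
      (∀ (t : k) (a b : g × V), br a (t • b) = t • br a b) ∧
      -- the bracket is alternating and satisfies the Jacobi identity
      (∀ a : g × V, br a a = 0) ∧
      (∀ a b c : g × V, br a (br b c) + br b (br c a) + br c (br a b) = 0) ∧
      -- N ⊕ S is a Nijenhuis operator for this bracket
      (∀ a b : g × V, br (NS a) (NS b)
        = NS (br (NS a) b + br a (NS b) - NS (br a b))) := by
  intro br hbr NS hNS
  subst hbr hNS
  refine ⟨?_, ?_, ?_, ?_, ?_, ?_, ?_⟩
  · intro a b c
    simp [Prod.ext_iff, add_lie, map_add]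
    abel
  · intro a b c
    simp [Prod.ext_iff, lie_add, map_add]
    abel
  · intro t a b
    simp [Prod.ext_iff, smul_lie, map_smul, smul_sub]
  · intro t a b
    simp [Prod.ext_iff, lie_smul, map_smul, smul_sub]
  · intro a
    simp [Prod.ext_iff]
  · intro a b c
    simp only [Prod.mk_add_mk, Prod.ext_iff, Prod.fst_add, Prod.snd_add, map_sub,
      hρ, Prod.fst_zero, Prod.snd_zero]
    constructor
    · exact lie_jacobi a.1 b.1 c.1
    · abel
  · intro a b
    have key : ∀ (x y : g) (u v : V),
        ρ (N x) (S v) - ρ (N y) (S u)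
        = S ((ρ (N x) v - ρ y (S u)) + (ρ x (S v) - ρ (N y) u)
            - S (ρ x v - ρ y u)) := by
      intro x y u v
      simp only [map_add, map_sub, hS]
      abel
    simp only [Prod.ext_iff, Prod.fst_add, Prod.snd_add, Prod.fst_sub, Prod.snd_sub,
      map_add, map_sub]
    refine ⟨hN _ _ ▸ by simp [map_add, map_sub], ?_⟩
    rw [key a.1 b.1 a.2 b.2]
    simp only [map_add, map_sub]
end

section
/- Let 0 → (h, [·,·]_h, S) →ⁱ (e, [·,·]_e, U) →ᵖ (g, [·,·]_g, N) → 0 be a non-abelian extension of Nijenhuis Lie algebras and let s : g → e be a section of p. Then the maps χ(x,y) := [s x, s y]_e − s[x,y]_g and F := U ∘ s − s ∘ N take values in h, each ψ_x := [s x, −]_e restricts to a Lie algebra derivation of h, and the triple (χ, ψ, F) is a non-abelian 2-cocycle of (g, [·,·]_g, N) with values in (h, [·,·]_h, S), i.e. it satisfies identities (nc1)–(nc4). -/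
set_option maxHeartbeats 2000000


/-- Given a non-abelian extension
`0 → (h,S) →ⁱ (e,U) →ᵖ (g,N) → 0` of Nijenhuis Lie algebras and a section `s` of `p`,
the maps `χ(x,y) = [s x, s y] - s[x,y]`, `ψ_x = [s x, -]` and `F = U∘s - s∘N` take
values in `h` (i.e. lift along the injection `i`), each `ψ_x` restricts to a derivation
of `h`, and the triple `(χ, ψ, F)` is a non-abelian 2-cocycle (identities (nc1)-(nc4)). -/
theorem stmt_1 {k g h e : Type*} [Field k]
    [LieRing g] [LieAlgebra k g] [LieRing h] [LieAlgebra k h]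
    [LieRing e] [LieAlgebra k e]
    (N : g →ₗ[k] g) (S : h →ₗ[k] h) (U : e →ₗ[k] e)
    (hN : ∀ x y : g, ⁅N x, N y⁆ = N (⁅N x, y⁆ + ⁅x, N y⁆ - N ⁅x, y⁆))
    (hS : ∀ a b : h, ⁅S a, S b⁆ = S (⁅S a, b⁆ + ⁅a, S b⁆ - S ⁅a, b⁆))
    (hU : ∀ a b : e, ⁅U a, U b⁆ = U (⁅U a, b⁆ + ⁅a, U b⁆ - U ⁅a, b⁆))
    (i : h →ₗ[k] e) (p : e →ₗ[k] g)
    (hi : ∀ a b : h, i ⁅a, b⁆ = ⁅i a, i b⁆)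
    (hp : ∀ a b : e, p ⁅a, b⁆ = ⁅p a, p b⁆)
    (hiInj : Function.Injective i) (hpSurj : Function.Surjective p)
    (hexact : LinearMap.range i = LinearMap.ker p)
    (hUi : ∀ a : h, U (i a) = i (S a))
    (hpU : ∀ a : e, p (U a) = N (p a))
    (s : g →ₗ[k] e) (hs : ∀ x : g, p (s x) = x) :
    ∃ (χ : g → g → h) (ψ : g → h → h) (F : g → h),
      -- χ, ψ, F are the lifts to h of the indicated maps
      (∀ x y : g, i (χ x y) = ⁅s x, s y⁆ - s ⁅x, y⁆) ∧
      (∀ (x : g) (a : h), i (ψ x a) = ⁅s x, i a⁆) ∧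
      (∀ x : g, i (F x) = U (s x) - s (N x)) ∧
      -- each ψ_x is a Lie algebra derivation of h
      (∀ (x : g) (a b : h), ψ x ⁅a, b⁆ = ⁅ψ x a, b⁆ + ⁅a, ψ x b⁆) ∧
      -- (nc1)
      (∀ (x y : g) (a : h), ψ x (ψ y a) - ψ y (ψ x a) - ψ ⁅x, y⁆ a = ⁅χ x y, a⁆) ∧
      -- (nc2)
      (∀ x y z : g, ψ x (χ y z) + ψ y (χ z x) + ψ z (χ x y)
          - χ ⁅x, y⁆ z - χ ⁅y, z⁆ x - χ ⁅z, x⁆ y = 0) ∧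
      -- (nc3)
      (∀ (x : g) (a : h), ψ (N x) (S a)
          = S (ψ (N x) a + ψ x (S a) - S (ψ x a)) + S ⁅F x, a⁆ - ⁅F x, S a⁆) ∧
      -- (nc4)
      (∀ x y : g, χ (N x) (N y) - S (χ (N x) y + χ x (N y) - S (χ x y))
          - F (⁅N x, y⁆ + ⁅x, N y⁆ - N ⁅x, y⁆)
          + ψ (N x) (F y) - ψ (N y) (F x)
          - S (ψ x (F y) - ψ y (F x) - F ⁅x, y⁆) + ⁅F x, F y⁆ = 0) := by
  classical
  have hmem : ∀ z : e, p z = 0 → ∃ a : h, i a = z := by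
    intro z hz
    have : z ∈ LinearMap.ker p := hz
    rw [← hexact] at this
    exact this
  set lf : e → h := fun z => if hz : p z = 0 then Classical.choose (hmem z hz) else 0
    with hlf_def
  have hlf : ∀ (z : e) (hz : p z = 0), i (lf z) = z := by
    intro z hz
    simp only [hlf_def, dif_pos hz]
    exact Classical.choose_spec (hmem z hz)
  have hpi : ∀ a : h, p (i a) = 0 := by
    intro a
    have : i a ∈ LinearMap.range i := ⟨a, rfl⟩
    rw [hexact] at this
    exact this
  have hχ : ∀ x y : g, i (lf (⁅s x, s y⁆ - s ⁅x, y⁆)) = ⁅s x, s y⁆ - s ⁅x, y⁆ :=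
    fun x y => hlf _ (by simp [hp, hs])
  have hψ : ∀ (x : g) (a : h), i (lf ⁅s x, i a⁆) = ⁅s x, i a⁆ :=
    fun x a => hlf _ (by simp [hp, hs, hpi])
  have hF : ∀ x : g, i (lf (U (s x) - s (N x))) = U (s x) - s (N x) :=
    fun x => hlf _ (by simp [hpU, hs])
  have hiS : ∀ a : h, i (S a) = U (i a) := fun a => (hUi a).symm
  refine ⟨fun x y => lf (⁅s x, s y⁆ - s ⁅x, y⁆),
          fun x a => lf ⁅s x, i a⁆,
          fun x => lf (U (s x) - s (N x)),
          hχ, hψ, hF, ?_, ?_, ?_, ?_, ?_⟩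
  · -- derivation
    intro x a b
    apply hiInj
    beta_reduce
    rw [hψ]
    simp only [map_add, hi, hψ]
    rw [lie_lie]
    abel
  · -- nc1
    intro x y a
    apply hiInj
    beta_reduce
    have hψψ : ∀ (u v : g) (c : h), i (lf ⁅s u, ⁅s v, i c⁆⁆) = ⁅s u, ⁅s v, i c⁆⁆ := by
      intro u v c
      have h0 := hψ u (lf ⁅s v, i c⁆)
      rwa [hψ v c] at h0
    simp only [map_sub, hψ, hψψ, hi, hχ]
    rw [sub_lie, lie_lie]
  · -- nc2
    intro x y z
    apply hiInj
    beta_reduce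
    have hψχ : ∀ u v w : g, i (lf ⁅s u, ⁅s v, s w⁆ - s ⁅v, w⁆⁆) = ⁅s u, ⁅s v, s w⁆ - s ⁅v, w⁆⁆ := by
      intro u v w
      have h0 := hψ u (lf (⁅s v, s w⁆ - s ⁅v, w⁆))
      rwa [hχ v w] at h0
    simp only [map_zero, map_sub, map_add, hψ, hψχ, hi, hχ]
    rw [show ⁅s ⁅y, z⁆, s x⁆ = -⁅s x, s ⁅y, z⁆⁆ from (lie_skew _ _).symm,
        show ⁅s ⁅z, x⁆, s y⁆ = -⁅s y, s ⁅z, x⁆⁆ from (lie_skew _ _).symm,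
        show ⁅s ⁅x, y⁆, s z⁆ = -⁅s z, s ⁅x, y⁆⁆ from (lie_skew _ _).symm]
    have jg : s ⁅⁅x, y⁆, z⁆ + s ⁅⁅y, z⁆, x⁆ + s ⁅⁅z, x⁆, y⁆ = 0 := by
      rw [← map_add, ← map_add, ← map_zero s]
      congr 1
      rw [lie_lie, lie_lie, lie_lie]
      linear_combination (norm := abel) lie_jacobi x y z - lie_jacobi y x z
    have je : ⁅s x, ⁅s y, s z⁆⁆ + ⁅s y, ⁅s z, s x⁆⁆ + ⁅s z, ⁅s x, s y⁆⁆ = 0 :=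
      lie_jacobi _ _ _
    simp only [lie_sub]
    linear_combination (norm := abel) jg + je
  · -- nc3
    intro x a
    apply hiInj
    beta_reduce
    have hψ2 : ∀ (u : g) (c : h), i (lf ⁅s u, U (i c)⁆) = ⁅s u, U (i c)⁆ := by
      intro u c
      have h0 := hψ u (S c)
      rwa [← hUi] at h0
    simp only [map_add, map_sub, ← hUi, hi, hψ, hψ2, hF, hχ]
    simp only [lie_sub, sub_lie, lie_add, add_lie, hU, map_add, map_sub]
    abel
  · -- nc4
    intro x y
    apply hiInj
    beta_reduce
    have hψF : ∀ u v : g, i (lf ⁅s u, U (s v) - s (N v)⁆) = ⁅s u, U (s v) - s (N v)⁆ := by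
      intro u v
      have h0 := hψ u (lf (U (s v) - s (N v)))
      rwa [hF v] at h0
    have hNw : N (⁅N x, y⁆ + ⁅x, N y⁆ - N ⁅x, y⁆) = ⁅N x, N y⁆ := (hN x y).symm
    set w : g := ⁅N x, y⁆ + ⁅x, N y⁆ - N ⁅x, y⁆ with hw
    simp only [map_zero, map_add, map_sub, ← hUi, hi, hχ, hψ, hψF, hF]
    rw [hNw, hw]
    simp only [map_add, map_sub]
    simp only [lie_sub, sub_lie, lie_add, add_lie, hU, map_add, map_sub]
    rw [show ⁅s (N y), U (s x)⁆ = -⁅U (s x), s (N y)⁆ from (lie_skew _ _).symm,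
        show ⁅s (N y), s (N x)⁆ = -⁅s (N x), s (N y)⁆ from (lie_skew _ _).symm,
        show ⁅s y, U (s x)⁆ = -⁅U (s x), s y⁆ from (lie_skew _ _).symm,
        show ⁅s y, s (N x)⁆ = -⁅s (N x), s y⁆ from (lie_skew _ _).symm]
    simp only [map_neg, neg_neg]
    abel
end

section
/- Let 0 → (h, [·,·]_h, S) →ⁱ (e, [·,·]_e, U) →ᵖ (g, [·,·]_g, N) → 0 be a non-abelian extension of Nijenhuis Lie algebras, and let s and s̃ be two sections of p with associated non-abelian 2-cocycles (χ, ψ, F) and (χ̃, ψ̃, F̃). Then φ := s − s̃ takes values in h and (χ, ψ, F) and (χ̃, ψ̃, F̃) are equivalent via φ; that is, for all x, y ∈ g, h ∈ h: ψ_x h − ψ̃_x h = [φ x, h]_h; χ(x,y) − χ̃(x,y) = ψ̃_x(φ y) − ψ̃_y(φ x) − φ([x,y]_g) + [φ x, φ y]_h; and F x − F̃ x = S(φ x) − φ(N x). -/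
/-- If `s` and `s̃` are two sections of a non-abelian extension of
Nijenhuis Lie algebras, with associated non-abelian 2-cocycles `(χ, ψ, F)` and
`(χ̃, ψ̃, F̃)` (given here as lifts along `i`), then `φ := s - s̃` takes values in `h`
and the two cocycles are equivalent via `φ`. -/
theorem stmt_2 {k g h e : Type*} [Field k]
    [LieRing g] [LieAlgebra k g] [LieRing h] [LieAlgebra k h]
    [LieRing e] [LieAlgebra k e]
    (N : g →ₗ[k] g) (S : h →ₗ[k] h) (U : e →ₗ[k] e)
    (hN : ∀ x y : g, ⁅N x, N y⁆ = N (⁅N x, y⁆ + ⁅x, N y⁆ - N ⁅x, y⁆))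
    (hS : ∀ a b : h, ⁅S a, S b⁆ = S (⁅S a, b⁆ + ⁅a, S b⁆ - S ⁅a, b⁆))
    (hU : ∀ a b : e, ⁅U a, U b⁆ = U (⁅U a, b⁆ + ⁅a, U b⁆ - U ⁅a, b⁆))
    (i : h →ₗ[k] e) (p : e →ₗ[k] g)
    (hi : ∀ a b : h, i ⁅a, b⁆ = ⁅i a, i b⁆)
    (hp : ∀ a b : e, p ⁅a, b⁆ = ⁅p a, p b⁆)
    (hiInj : Function.Injective i) (hpSurj : Function.Surjective p)
    (hexact : LinearMap.range i = LinearMap.ker p)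
    (hUi : ∀ a : h, U (i a) = i (S a))
    (hpU : ∀ a : e, p (U a) = N (p a))
    -- two sections of p
    (s st : g →ₗ[k] e) (hs : ∀ x : g, p (s x) = x) (hst : ∀ x : g, p (st x) = x)
    -- the non-abelian 2-cocycle associated to s
    (χ : g → g → h) (ψ : g → h → h) (F : g → h)
    (hχ : ∀ x y : g, i (χ x y) = ⁅s x, s y⁆ - s ⁅x, y⁆)
    (hψ : ∀ (x : g) (a : h), i (ψ x a) = ⁅s x, i a⁆)
    (hF : ∀ x : g, i (F x) = U (s x) - s (N x))
    -- the non-abelian 2-cocycle associated to s̃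
    (χt : g → g → h) (ψt : g → h → h) (Ft : g → h)
    (hχt : ∀ x y : g, i (χt x y) = ⁅st x, st y⁆ - st ⁅x, y⁆)
    (hψt : ∀ (x : g) (a : h), i (ψt x a) = ⁅st x, i a⁆)
    (hFt : ∀ x : g, i (Ft x) = U (st x) - st (N x)) :
    ∃ φ : g → h,
      -- φ is the lift to h of s - s̃
      (∀ x : g, i (φ x) = s x - st x) ∧
      -- the two cocycles are equivalent via φ
      (∀ (x : g) (a : h), ψ x a - ψt x a = ⁅φ x, a⁆) ∧
      (∀ x y : g, χ x y - χt x y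
          = ψt x (φ y) - ψt y (φ x) - φ ⁅x, y⁆ + ⁅φ x, φ y⁆) ∧
      (∀ x : g, F x - Ft x = S (φ x) - φ (N x)) := by

  have hmem : ∀ x : g, ∃ a : h, i a = s x - st x := by
    intro x
    have : s x - st x ∈ LinearMap.ker p := by
      simp [LinearMap.mem_ker, map_sub, hs, hst]
    rw [← hexact] at this
    exact this
  choose φ hφ using hmem
  refine ⟨φ, hφ, ?_, ?_, ?_⟩
  · intro x a
    apply hiInj
    rw [map_sub, hψ, hψt, hi, hφ, sub_lie]
  · intro x y
    apply hiInj
    rw [map_sub, hχ, hχt]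
    rw [map_add, map_sub, map_sub, hψt, hψt, hi, hφ, hφ, hφ]
    simp only [lie_sub, sub_lie, ← lie_skew (st y) (s x), ← lie_skew (st y) (st x)]
    abel
  · intro x
    apply hiInj
    rw [map_sub, hF, hFt, map_sub, ← hUi, hφ, hφ, map_sub]
    abel
end

section
/- Let (χ, ψ, F) be a non-abelian 2-cocycle of a Nijenhuis Lie algebra (g, [·,·]_g, N) with values in a Nijenhuis Lie algebra (h, [·,·]_h, S). Then the skew-symmetric bracket [(x,h), (y,k)]_{χ,ψ} := ([x,y]_g, ψ_x k − ψ_y h + χ(x,y) + [h,k]_h) is a Lie bracket on g ⊕ h, and the linear map U_F(x,h) := (N x, S h + F x) is a Nijenhuis operator on (g ⊕ h, [·,·]_{χ,ψ}); moreover, with the inclusion of h and projection onto g, this is a non-abelian extension of (g, N) by (h, S). -/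
/-- A non-abelian 2-cocycle of the Nijenhuis Lie algebra `(g, N)` with values in the
Nijenhuis Lie algebra `(h, S)`: linear maps `χ : Λ²g → h`, `ψ : g → Der(h)`,
`F : g → h` satisfying identities (nc1)-(nc4). -/
def IsNijNonabelian2Cocycle (k : Type*) {g h : Type*} [Field k]
    [LieRing g] [LieAlgebra k g] [LieRing h] [LieAlgebra k h]
    (N : g → g) (S : h → h) (χ : g → g → h) (ψ : g → h → h) (F : g → h) : Prop :=
  (∀ x : g, IsLinearMap k (χ x)) ∧ (∀ y : g, IsLinearMap k (fun x => χ x y)) ∧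
  (∀ x : g, IsLinearMap k (ψ x)) ∧ (∀ a : h, IsLinearMap k (fun x => ψ x a)) ∧
  IsLinearMap k F ∧
  (∀ x : g, χ x x = 0) ∧
  (∀ (x : g) (a b : h), ψ x ⁅a, b⁆ = ⁅ψ x a, b⁆ + ⁅a, ψ x b⁆) ∧
  (∀ (x y : g) (a : h), ψ x (ψ y a) - ψ y (ψ x a) - ψ ⁅x, y⁆ a = ⁅χ x y, a⁆) ∧
  (∀ x y z : g, ψ x (χ y z) + ψ y (χ z x) + ψ z (χ x y)
      - χ ⁅x, y⁆ z - χ ⁅y, z⁆ x - χ ⁅z, x⁆ y = 0) ∧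
  (∀ (x : g) (a : h), ψ (N x) (S a)
      = S (ψ (N x) a + ψ x (S a) - S (ψ x a)) + S ⁅F x, a⁆ - ⁅F x, S a⁆) ∧
  (∀ x y : g, χ (N x) (N y) - S (χ (N x) y + χ x (N y) - S (χ x y))
      - F (⁅N x, y⁆ + ⁅x, N y⁆ - N ⁅x, y⁆)
      + ψ (N x) (F y) - ψ (N y) (F x)
      - S (ψ x (F y) - ψ y (F x) - F ⁅x, y⁆) + ⁅F x, F y⁆ = 0)

/-- A non-abelian 2-cocycle `(χ, ψ, F)` gives a Lie bracket
`[(x,h),(y,k)] = ([x,y], ψ x k - ψ y h + χ x y + [h,k])` on `g ⊕ h` for which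
`U_F(x,h) = (N x, S h + F x)` is a Nijenhuis operator; together with the inclusion
of `h` and the projection to `g` it is a non-abelian extension of `(g,N)` by `(h,S)`. -/
theorem stmt_3 {k g h : Type*} [Field k]
    [LieRing g] [LieAlgebra k g] [LieRing h] [LieAlgebra k h]
    (N : g →ₗ[k] g) (S : h →ₗ[k] h)
    (hN : ∀ x y : g, ⁅N x, N y⁆ = N (⁅N x, y⁆ + ⁅x, N y⁆ - N ⁅x, y⁆))
    (hS : ∀ a b : h, ⁅S a, S b⁆ = S (⁅S a, b⁆ + ⁅a, S b⁆ - S ⁅a, b⁆))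
    (χ : g → g → h) (ψ : g → h → h) (F : g → h)
    (hc : IsNijNonabelian2Cocycle k (⇑N) (⇑S) χ ψ F) :
    ∀ br : g × h → g × h → g × h,
      br = (fun a b => (⁅a.1, b.1⁆, ψ a.1 b.2 - ψ b.1 a.2 + χ a.1 b.1 + ⁅a.2, b.2⁆)) →
    ∀ UF : g × h → g × h, UF = (fun a => (N a.1, S a.2 + F a.1)) →
    ∀ inc : h → g × h, inc = (fun a => ((0 : g), a)) →
    ∀ pr : g × h → g, pr = (fun a => a.1) →
      -- br is a bilinear bracket
      (∀ a b c : g × h, br (a + b) c = br a c + br b c) ∧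
      (∀ a b c : g × h, br a (b + c) = br a b + br a c) ∧
      (∀ (t : k) (a b : g × h), br (t • a) b = t • br a b) ∧
      (∀ (t : k) (a b : g × h), br a (t • b) = t • br a b) ∧
      -- br is alternating and satisfies the Jacobi identity
      (∀ a : g × h, br a a = 0) ∧
      (∀ a b c : g × h, br a (br b c) + br b (br c a) + br c (br a b) = 0) ∧
      -- U_F is a Nijenhuis operator for br
      (∀ a b : g × h, br (UF a) (UF b)
        = UF (br (UF a) b + br a (UF b) - UF (br a b))) ∧
      -- the inclusion of h is a morphism intertwining S and U_F
      (∀ a b : h, br (inc a) (inc b) = inc ⁅a, b⁆) ∧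
      (∀ a : h, UF (inc a) = inc (S a)) ∧
      Function.Injective inc ∧
      -- the projection onto g is a morphism intertwining U_F and N
      (∀ a b : g × h, pr (br a b) = ⁅pr a, pr b⁆) ∧
      (∀ a : g × h, pr (UF a) = N (pr a)) ∧
      Function.Surjective pr ∧
      -- exactness: the image of the inclusion is the kernel of the projection
      (∀ z : g × h, pr z = 0 ↔ ∃ a : h, z = inc a) := by
  
  obtain ⟨hχl, hχr, hψl, hψr, hF, hχalt, hder, hnc1, hnc2, hnc3, hnc4⟩ := hc
  -- helper expansion lemmas
  have pa : ∀ (x : g) (u v : h), ψ x (u + v) = ψ x u + ψ x v := fun x u v => (hψl x).map_add u v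
  have ps : ∀ (x : g) (u v : h), ψ x (u - v) = ψ x u - ψ x v := fun x u v => (hψl x).map_sub u v
  have psm : ∀ (t : k) (x : g) (u : h), ψ x (t • u) = t • ψ x u := fun t x u => (hψl x).map_smul t u
  have pa' : ∀ (x y : g) (u : h), ψ (x + y) u = ψ x u + ψ y u := fun x y u => (hψr u).map_add x y
  have psm' : ∀ (t : k) (x : g) (u : h), ψ (t • x) u = t • ψ x u := fun t x u => (hψr u).map_smul t x
  have pz' : ∀ u : h, ψ 0 u = 0 := fun u => (hψr u).map_zero
  have ca : ∀ (x y z : g), χ x (y + z) = χ x y + χ x z := fun x y z => (hχl x).map_add y z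
  have csm : ∀ (t : k) (x y : g), χ x (t • y) = t • χ x y := fun t x y => (hχl x).map_smul t y
  have ca' : ∀ (x y z : g), χ (x + y) z = χ x z + χ y z := fun x y z => (hχr z).map_add x y
  have csm' : ∀ (t : k) (x y : g), χ (t • x) y = t • χ x y := fun t x y => (hχr y).map_smul t x
  have Fa : ∀ u v : g, F (u + v) = F u + F v := fun u v => hF.map_add u v
  have Fs : ∀ u v : g, F (u - v) = F u - F v := fun u v => hF.map_sub u v
  have F0 : F 0 = 0 := hF.map_zero
  have hχskew : ∀ x y : g, χ x y = - χ y x := by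
    intro x y
    have h1 : (0 : h) = χ x y + χ y x := by
      calc (0 : h) = χ (x + y) (x + y) := (hχalt _).symm
        _ = χ x (x + y) + χ y (x + y) := ca' x y (x + y)
        _ = (χ x x + χ x y) + (χ y x + χ y y) := by rw [ca, ca]
        _ = χ x y + χ y x := by rw [hχalt, hχalt]; abel
    exact eq_neg_of_add_eq_zero_left h1.symm
  intro br hbr UF hUF inc hinc pr hpr
  subst hbr; subst hUF; subst hinc; subst hpr
  refine ⟨?_, ?_, ?_, ?_, ?_, ?_, ?_, ?_, ?_, ?_, ?_, ?_, ?_, ?_⟩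
  · -- additivity in first argument
    intro a b c
    refine Prod.ext ?_ ?_ <;>
      simp only [Prod.fst_add, Prod.snd_add, add_lie, pa', ca', pa] <;> abel
  · -- additivity in second argument
    intro a b c
    refine Prod.ext ?_ ?_ <;>
      simp only [Prod.fst_add, Prod.snd_add, lie_add, pa', ca, pa] <;> abel
  · -- smul in first argument
    intro t a b
    refine Prod.ext ?_ ?_ <;>
      simp only [Prod.smul_fst, Prod.smul_snd, smul_lie, lie_smul, psm', csm', psm,
        smul_add, smul_sub] <;> abel
  · -- smul in second argument
    intro t a b
    refine Prod.ext ?_ ?_ <;>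
      simp only [Prod.smul_fst, Prod.smul_snd, smul_lie, lie_smul, psm', csm, psm,
        smul_add, smul_sub] <;> abel
  · -- alternating
    intro a
    refine Prod.ext ?_ ?_ <;> simp [hχalt]
  · -- Jacobi identity
    rintro ⟨x, a⟩ ⟨y, b⟩ ⟨z, c⟩
    refine Prod.ext ?_ ?_
    · simpa using lie_jacobi x y z
    · simp only [Prod.fst_add, Prod.snd_add, Prod.fst_zero, Prod.snd_zero,
        pa, ps, lie_add, lie_sub, hder]
      have e1 : ψ x (ψ y c) - ψ y (ψ x c) - ψ ⁅x, y⁆ c + ⁅c, χ x y⁆ = 0 := by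
        rw [hnc1 x y c, ← lie_skew, neg_add_cancel]
      have e2 : ψ y (ψ z a) - ψ z (ψ y a) - ψ ⁅y, z⁆ a + ⁅a, χ y z⁆ = 0 := by
        rw [hnc1 y z a, ← lie_skew, neg_add_cancel]
      have e3 : ψ z (ψ x b) - ψ x (ψ z b) - ψ ⁅z, x⁆ b + ⁅b, χ z x⁆ = 0 := by
        rw [hnc1 z x b, ← lie_skew, neg_add_cancel]
      have e4 : ψ x (χ y z) + ψ y (χ z x) + ψ z (χ x y)
          + χ x ⁅y, z⁆ + χ y ⁅z, x⁆ + χ z ⁅x, y⁆ = 0 := by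
        have h2 := hnc2 x y z
        rw [hχskew x ⁅y, z⁆, hχskew y ⁅z, x⁆, hχskew z ⁅x, y⁆]
        abel_nf at h2 ⊢
        exact h2
      have e5 : ⁅a, ⁅b, c⁆⁆ + ⁅b, ⁅c, a⁆⁆ + ⁅c, ⁅a, b⁆⁆ = 0 := lie_jacobi a b c
      have e6 : ⁅ψ x b, c⁆ + ⁅c, ψ x b⁆ = 0 := by rw [← lie_skew, neg_add_cancel]
      have e7 : ⁅ψ y c, a⁆ + ⁅a, ψ y c⁆ = 0 := by rw [← lie_skew, neg_add_cancel]
      have e8 : ⁅ψ z a, b⁆ + ⁅b, ψ z a⁆ = 0 := by rw [← lie_skew, neg_add_cancel]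
      have total :
          (ψ x (ψ y c) - ψ y (ψ x c) - ψ ⁅x, y⁆ c + ⁅c, χ x y⁆)
          + (ψ y (ψ z a) - ψ z (ψ y a) - ψ ⁅y, z⁆ a + ⁅a, χ y z⁆)
          + (ψ z (ψ x b) - ψ x (ψ z b) - ψ ⁅z, x⁆ b + ⁅b, χ z x⁆)
          + (ψ x (χ y z) + ψ y (χ z x) + ψ z (χ x y)
              + χ x ⁅y, z⁆ + χ y ⁅z, x⁆ + χ z ⁅x, y⁆)
          + (⁅a, ⁅b, c⁆⁆ + ⁅b, ⁅c, a⁆⁆ + ⁅c, ⁅a, b⁆⁆)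
          + (⁅ψ x b, c⁆ + ⁅c, ψ x b⁆) + (⁅ψ y c, a⁆ + ⁅a, ψ y c⁆)
          + (⁅ψ z a, b⁆ + ⁅b, ψ z a⁆) = 0 := by
        rw [e1, e2, e3, e4, e5, e6, e7, e8]; simp
      conv_rhs => rw [← total]
      abel
  · -- Nijenhuis condition
    rintro ⟨x, a⟩ ⟨y, b⟩
    refine Prod.ext ?_ ?_
    · simp only [Prod.fst_add, Prod.fst_sub]
      rw [hN x y]
    · simp only [Prod.fst_add, Prod.snd_add, Prod.fst_sub, Prod.snd_sub,
        map_add, map_sub, pa, ps, lie_add, add_lie, lie_sub, sub_lie, Fa, Fs]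
      have n3b : ψ (N x) (S b) - (S (ψ (N x) b) + S (ψ x (S b)) - S (S (ψ x b)))
          - S ⁅F x, b⁆ + ⁅F x, S b⁆ = 0 := by
        have h3 := hnc3 x b
        simp only [map_add, map_sub] at h3
        rw [h3]; abel
      have n3a : ψ (N y) (S a) - (S (ψ (N y) a) + S (ψ y (S a)) - S (S (ψ y a)))
          - S ⁅F y, a⁆ + ⁅F y, S a⁆ = 0 := by
        have h3 := hnc3 y a
        simp only [map_add, map_sub] at h3
        rw [h3]; abel
      have hS' : ⁅S a, S b⁆ - (S ⁅S a, b⁆ + S ⁅a, S b⁆ - S (S ⁅a, b⁆)) = 0 := by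
        have h4 := hS a b
        simp only [map_add, map_sub] at h4
        rw [h4]; abel
      have n4 : χ (N x) (N y) - (S (χ (N x) y) + S (χ x (N y)) - S (S (χ x y)))
          - (F ⁅N x, y⁆ + F ⁅x, N y⁆ - F (N ⁅x, y⁆))
          + ψ (N x) (F y) - ψ (N y) (F x)
          - (S (ψ x (F y)) - S (ψ y (F x)) - S (F ⁅x, y⁆)) + ⁅F x, F y⁆ = 0 := by
        have h5 := hnc4 x y
        simp only [map_add, map_sub, Fa, Fs] at h5
        rw [← h5]
      have o1 : ⁅S a, F y⁆ + ⁅F y, S a⁆ = 0 := by rw [← lie_skew, neg_add_cancel]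
      have o2 : S ⁅F y, a⁆ + S ⁅a, F y⁆ = 0 := by
        rw [← map_add, ← lie_skew, neg_add_cancel, map_zero]
      have total :
          (ψ (N x) (S b) - (S (ψ (N x) b) + S (ψ x (S b)) - S (S (ψ x b)))
              - S ⁅F x, b⁆ + ⁅F x, S b⁆)
          - (ψ (N y) (S a) - (S (ψ (N y) a) + S (ψ y (S a)) - S (S (ψ y a)))
              - S ⁅F y, a⁆ + ⁅F y, S a⁆)
          + (⁅S a, S b⁆ - (S ⁅S a, b⁆ + S ⁅a, S b⁆ - S (S ⁅a, b⁆)))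
          + (χ (N x) (N y) - (S (χ (N x) y) + S (χ x (N y)) - S (S (χ x y)))
              - (F ⁅N x, y⁆ + F ⁅x, N y⁆ - F (N ⁅x, y⁆))
              + ψ (N x) (F y) - ψ (N y) (F x)
              - (S (ψ x (F y)) - S (ψ y (F x)) - S (F ⁅x, y⁆)) + ⁅F x, F y⁆)
          + (⁅S a, F y⁆ + ⁅F y, S a⁆)
          - (S ⁅F y, a⁆ + S ⁅a, F y⁆) = 0 := by
        rw [n3b, n3a, hS', n4, o1, o2]; simp
      rw [← sub_eq_zero]
      conv_rhs => rw [← total]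
      abel
  · -- inclusion is a morphism
    intro a b
    refine Prod.ext ?_ ?_ <;> simp [hχalt, pz']
  · -- inclusion intertwines S and UF
    intro a
    refine Prod.ext ?_ ?_ <;> simp [F0]
  · -- inclusion injective
    intro a b hab
    exact congrArg Prod.snd hab
  · -- projection is a morphism
    intro a b; rfl
  · -- projection intertwines UF and N
    intro a; rfl
  · -- projection surjective
    intro x; exact ⟨(x, 0), rfl⟩
  · -- exactness
    intro z
    constructor
    · intro hz; exact ⟨z.2, Prod.ext hz rfl⟩
    · rintro ⟨a, rfl⟩; rfl
end

section
/- Let (χ, ψ, F) and (χ', ψ', F') be two non-abelian 2-cocycles of a Nijenhuis Lie algebra (g, [·,·]_g, N) with values in a Nijenhuis Lie algebra (h, [·,·]_h, S) that are equivalent via a linear map φ : g → h. Then the linear bijection Φ : g ⊕ h → g ⊕ h, Φ(x,h) := (x, φ x + h), satisfies Φ([(x,h),(y,k)]_{χ,ψ}) = [Φ(x,h), Φ(y,k)]_{χ',ψ'} and U_{F'} ∘ Φ = Φ ∘ U_F; hence Φ is an isomorphism of the corresponding non-abelian extensions (it restricts to the identity on h and covers the identity on g). -/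
/-- If two non-abelian 2-cocycles `(χ, ψ, F)` and `(χ', ψ', F')` are
equivalent via a linear map `φ : g → h`, then `Φ(x,h) = (x, φ x + h)` intertwines
the brackets `[·,·]_{χ,ψ}` and `[·,·]_{χ',ψ'}` and the operators `U_F` and `U_{F'}`;
it is bijective, restricts to the identity on `h` and covers the identity on `g`,
hence is an isomorphism of the corresponding non-abelian extensions. -/
theorem stmt_4 {k g h : Type*} [Field k]
    [LieRing g] [LieAlgebra k g] [LieRing h] [LieAlgebra k h]
    (N : g →ₗ[k] g) (S : h →ₗ[k] h)
    (hN : ∀ x y : g, ⁅N x, N y⁆ = N (⁅N x, y⁆ + ⁅x, N y⁆ - N ⁅x, y⁆))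
    (hS : ∀ a b : h, ⁅S a, S b⁆ = S (⁅S a, b⁆ + ⁅a, S b⁆ - S ⁅a, b⁆))
    (χ χ' : g → g → h) (ψ ψ' : g → h → h) (F F' : g → h)
    (hc : IsNijNonabelian2Cocycle k (⇑N) (⇑S) χ ψ F)
    (hc' : IsNijNonabelian2Cocycle k (⇑N) (⇑S) χ' ψ' F')
    -- the two cocycles are equivalent via the linear map φ
    (φ : g →ₗ[k] h)
    (heq1 : ∀ (x : g) (a : h), ψ x a - ψ' x a = ⁅φ x, a⁆)
    (heq2 : ∀ x y : g, χ x y - χ' x y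
        = ψ' x (φ y) - ψ' y (φ x) - φ ⁅x, y⁆ + ⁅φ x, φ y⁆)
    (heq3 : ∀ x : g, F x - F' x = S (φ x) - φ (N x)) :
    ∀ br : g × h → g × h → g × h,
      br = (fun a b => (⁅a.1, b.1⁆, ψ a.1 b.2 - ψ b.1 a.2 + χ a.1 b.1 + ⁅a.2, b.2⁆)) →
    ∀ br' : g × h → g × h → g × h,
      br' = (fun a b => (⁅a.1, b.1⁆, ψ' a.1 b.2 - ψ' b.1 a.2 + χ' a.1 b.1 + ⁅a.2, b.2⁆)) →
    ∀ UF : g × h → g × h, UF = (fun a => (N a.1, S a.2 + F a.1)) →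
    ∀ UF' : g × h → g × h, UF' = (fun a => (N a.1, S a.2 + F' a.1)) →
    ∀ Φ : g × h → g × h, Φ = (fun z => (z.1, φ z.1 + z.2)) →
      (∀ a b : g × h, Φ (br a b) = br' (Φ a) (Φ b)) ∧
      (∀ z : g × h, UF' (Φ z) = Φ (UF z)) ∧
      Function.Bijective Φ ∧
      (∀ a : h, Φ ((0 : g), a) = ((0 : g), a)) ∧
      (∀ z : g × h, (Φ z).1 = z.1) := by
  intro br hbr br' hbr' UF hUF UF' hUF' Φ hΦ
  subst hbr hbr' hUF hUF' hΦ
  obtain ⟨-, -, hψ, -, -, -, -, -, -, -, -⟩ := hc'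
  refine ⟨?_, ?_, ?_, ?_, ?_⟩
  · rintro ⟨x, a⟩ ⟨y, b⟩
    simp only [Prod.mk.injEq]
    refine ⟨trivial, ?_⟩
    have h1x := heq1 x b
    have h1y := heq1 y a
    have h2 := heq2 x y
    have hadd1 := (hψ x).map_add (φ y) b
    have hadd2 := (hψ y).map_add (φ x) a
    have hψxb : ψ x b = ψ' x b + ⁅φ x, b⁆ := by linear_combination (norm := abel) h1x
    have hψya : ψ y a = ψ' y a + ⁅φ y, a⁆ := by linear_combination (norm := abel) h1y
    have hχ : χ x y = χ' x y + (ψ' x (φ y) - ψ' y (φ x) - φ ⁅x, y⁆ + ⁅φ x, φ y⁆) := by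
      linear_combination (norm := abel) h2
    rw [hψxb, hψya, hχ, hadd1, hadd2]
    have hba : ⁅φ y, a⁆ = -⁅a, φ y⁆ := (lie_skew _ _).symm
    rw [hba]
    simp only [lie_add, add_lie]
    abel
  · rintro ⟨x, a⟩
    simp only [Prod.mk.injEq]
    refine ⟨trivial, ?_⟩
    have h3 := heq3 x
    rw [map_add]
    linear_combination (norm := abel) -h3
  · constructor
    · rintro ⟨x, a⟩ ⟨y, b⟩ hxy
      simp only [Prod.mk.injEq] at hxy
      obtain ⟨h1, h2⟩ := hxy
      subst h1
      simp only [add_right_inj] at h2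
      simp [h2]
    · rintro ⟨x, a⟩
      exact ⟨(x, a - φ x), by simp⟩
  · intro a; simp
  · intro z; rfl
end

section
/- Let 0 → (h,S) →ⁱ (e, [·,·]_e, U) →ᵖ (g,N) → 0 and 0 → (h,S) →ⁱ' (e', [·,·]_{e'}, U') →ᵖ' (g,N) → 0 be two non-abelian extensions of Nijenhuis Lie algebras and let Φ : e → e' be an isomorphism of these extensions (a Lie algebra isomorphism with Φ ∘ U = U' ∘ Φ, Φ|_h = id_h and p' ∘ Φ = p). If s is a section of p, then s' := Φ ∘ s is a section of p', and the non-abelian 2-cocycle (χ', ψ', F') associated to s' equals the non-abelian 2-cocycle (χ, ψ, F) associated to s. -/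
/-- If `Φ : e → e'` is an isomorphism of non-abelian extensions of
Nijenhuis Lie algebras (a Lie algebra isomorphism commuting with the Nijenhuis
operators, restricting to the identity on `h` and covering the identity on `g`)
and `s` is a section of `p`, then `s' := Φ ∘ s` is a section of `p'`, and the
non-abelian 2-cocycle associated to `s'` equals the one associated to `s`. -/
theorem stmt_5 {k g h e e' : Type*} [Field k]
    [LieRing g] [LieAlgebra k g] [LieRing h] [LieAlgebra k h]
    [LieRing e] [LieAlgebra k e] [LieRing e'] [LieAlgebra k e']
    (N : g →ₗ[k] g) (S : h →ₗ[k] h) (U : e →ₗ[k] e) (U' : e' →ₗ[k] e')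
    (hN : ∀ x y : g, ⁅N x, N y⁆ = N (⁅N x, y⁆ + ⁅x, N y⁆ - N ⁅x, y⁆))
    (hS : ∀ a b : h, ⁅S a, S b⁆ = S (⁅S a, b⁆ + ⁅a, S b⁆ - S ⁅a, b⁆))
    (hU : ∀ a b : e, ⁅U a, U b⁆ = U (⁅U a, b⁆ + ⁅a, U b⁆ - U ⁅a, b⁆))
    (hU' : ∀ a b : e', ⁅U' a, U' b⁆ = U' (⁅U' a, b⁆ + ⁅a, U' b⁆ - U' ⁅a, b⁆))
    -- first extension
    (i : h →ₗ[k] e) (p : e →ₗ[k] g)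
    (hi : ∀ a b : h, i ⁅a, b⁆ = ⁅i a, i b⁆)
    (hp : ∀ a b : e, p ⁅a, b⁆ = ⁅p a, p b⁆)
    (hiInj : Function.Injective i) (hpSurj : Function.Surjective p)
    (hexact : LinearMap.range i = LinearMap.ker p)
    (hUi : ∀ a : h, U (i a) = i (S a))
    (hpU : ∀ a : e, p (U a) = N (p a))
    -- second extension
    (i' : h →ₗ[k] e') (p' : e' →ₗ[k] g)
    (hi' : ∀ a b : h, i' ⁅a, b⁆ = ⁅i' a, i' b⁆)
    (hp' : ∀ a b : e', p' ⁅a, b⁆ = ⁅p' a, p' b⁆)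
    (hiInj' : Function.Injective i') (hpSurj' : Function.Surjective p')
    (hexact' : LinearMap.range i' = LinearMap.ker p')
    (hUi' : ∀ a : h, U' (i' a) = i' (S a))
    (hpU' : ∀ a : e', p' (U' a) = N (p' a))
    -- isomorphism of extensions
    (Φ : e →ₗ[k] e')
    (hΦLie : ∀ a b : e, Φ ⁅a, b⁆ = ⁅Φ a, Φ b⁆)
    (hΦbij : Function.Bijective Φ)
    (hΦU : ∀ a : e, Φ (U a) = U' (Φ a))
    (hΦi : ∀ a : h, Φ (i a) = i' a)
    (hΦp : ∀ a : e, p' (Φ a) = p a)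
    -- a section s of p and its associated 2-cocycle
    (s : g →ₗ[k] e) (hs : ∀ x : g, p (s x) = x)
    (χ : g → g → h) (ψ : g → h → h) (F : g → h)
    (hχ : ∀ x y : g, i (χ x y) = ⁅s x, s y⁆ - s ⁅x, y⁆)
    (hψ : ∀ (x : g) (a : h), i (ψ x a) = ⁅s x, i a⁆)
    (hF : ∀ x : g, i (F x) = U (s x) - s (N x))
    -- the 2-cocycle associated to s' = Φ ∘ s
    (χ' : g → g → h) (ψ' : g → h → h) (F' : g → h)
    (hχ' : ∀ x y : g, i' (χ' x y) = ⁅Φ (s x), Φ (s y)⁆ - Φ (s ⁅x, y⁆))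
    (hψ' : ∀ (x : g) (a : h), i' (ψ' x a) = ⁅Φ (s x), i' a⁆)
    (hF' : ∀ x : g, i' (F' x) = U' (Φ (s x)) - Φ (s (N x))) :
    -- s' = Φ ∘ s is a section of p', and the two cocycles coincide
    (∀ x : g, p' (Φ (s x)) = x) ∧ χ' = χ ∧ ψ' = ψ ∧ F' = F := by
  refine ⟨fun x => by rw [hΦp, hs], ?_, ?_, ?_⟩
  · funext x y
    apply hiInj'
    rw [hχ' x y, ← hΦLie, ← map_sub, ← hχ, hΦi]
  · funext x a
    apply hiInj'
    rw [hψ' x a, ← hΦi, ← hΦLie, ← hψ, hΦi]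
  · funext x
    apply hiInj'
    rw [hF' x, ← hΦU, ← map_sub, ← hF, hΦi]
end

section
/- Let (χ, ψ, F) be a non-abelian 2-cocycle of a Nijenhuis Lie algebra (g, [·,·]_g, N) with values in a Nijenhuis Lie algebra (h, [·,·]_h, S). Define χ̄(x,y) := χ(N x, y) + χ(x, N y) − S χ(x,y) + ψ_x F y − ψ_y F x − F[x,y]_g and ψ̄_x h := ψ_{N x} h + ψ_x (S h) − S(ψ_x h) + [F x, h]_h. Then (χ̄, ψ̄) is a non-abelian 2-cocycle of the deformed Lie algebra g_N with values in the deformed Lie algebra h_S; that is, each ψ̄_x is a derivation of (h, [·,·]_S), and for all x, y, z ∈ g, h ∈ h: ψ̄_x ψ̄_y h − ψ̄_y ψ̄_x h − ψ̄_{[x,y]_N} h = [χ̄(x,y), h]_S and ψ̄_x χ̄(y,z) + ψ̄_y χ̄(z,x) + ψ̄_z χ̄(x,y) − χ̄([x,y]_N, z) − χ̄([y,z]_N, x) − χ̄([z,x]_N, y) = 0. -/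
set_option maxHeartbeats 8000000 in
/-- For a non-abelian 2-cocycle `(χ, ψ, F)` of `(g, N)` with values in
`(h, S)`, the pair `(χ̄, ψ̄)` defined by
`χ̄(x,y) = χ(N x, y) + χ(x, N y) - S χ(x,y) + ψ_x F y - ψ_y F x - F[x,y]` and
`ψ̄_x h = ψ_{N x} h + ψ_x (S h) - S(ψ_x h) + [F x, h]` is a non-abelian 2-cocycle of
the deformed Lie algebra `g_N` with values in the deformed Lie algebra `h_S`. -/
theorem stmt_6 {k g h : Type*} [Field k]
    [LieRing g] [LieAlgebra k g] [LieRing h] [LieAlgebra k h]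
    (N : g →ₗ[k] g) (S : h →ₗ[k] h)
    (hN : ∀ x y : g, ⁅N x, N y⁆ = N (⁅N x, y⁆ + ⁅x, N y⁆ - N ⁅x, y⁆))
    (hS : ∀ a b : h, ⁅S a, S b⁆ = S (⁅S a, b⁆ + ⁅a, S b⁆ - S ⁅a, b⁆))
    (χ : g → g → h) (ψ : g → h → h) (F : g → h)
    (hc : IsNijNonabelian2Cocycle k (⇑N) (⇑S) χ ψ F) :
    -- the deformed brackets
    ∀ brN : g → g → g, brN = (fun x y => ⁅N x, y⁆ + ⁅x, N y⁆ - N ⁅x, y⁆) →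
    ∀ brS : h → h → h, brS = (fun a b => ⁅S a, b⁆ + ⁅a, S b⁆ - S ⁅a, b⁆) →
    -- the deformed cocycle
    ∀ χb : g → g → h, χb = (fun x y =>
        χ (N x) y + χ x (N y) - S (χ x y) + ψ x (F y) - ψ y (F x) - F ⁅x, y⁆) →
    ∀ ψb : g → h → h, ψb = (fun x a =>
        ψ (N x) a + ψ x (S a) - S (ψ x a) + ⁅F x, a⁆) →
      -- each ψ̄_x is a derivation of the deformed Lie algebra h_S
      (∀ (x : g) (a b : h), ψb x (brS a b) = brS (ψb x a) b + brS a (ψb x b)) ∧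
      -- (nc1) for the deformed Lie algebras
      (∀ (x y : g) (a : h),
        ψb x (ψb y a) - ψb y (ψb x a) - ψb (brN x y) a = brS (χb x y) a) ∧
      -- (nc2) for the deformed Lie algebras
      (∀ x y z : g, ψb x (χb y z) + ψb y (χb z x) + ψb z (χb x y)
          - χb (brN x y) z - χb (brN y z) x - χb (brN z x) y = 0) := by
  obtain ⟨hχl, hχr, hψl, hψr, hFl, halt, hder, hnc1, hnc2, hnc3, hnc4⟩ := hc
  intro brN hbrN brS hbrS χb hχb ψb hψb
  have hch1add : ∀ (u v w : g), χ (u + v) w = χ u w + χ v w := fun u v w => (hχr w).map_add u v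
  have hch1sub : ∀ (u v w : g), χ (u - v) w = χ u w - χ v w := fun u v w => (hχr w).map_sub u v
  have hch1zero : ∀ w : g, χ 0 w = 0 := fun w => (hχr w).map_zero
  have hch2add : ∀ (u : g) (p q : g), χ u (p + q) = χ u p + χ u q := fun u p q => (hχl u).map_add p q
  have hch2sub : ∀ (u : g) (p q : g), χ u (p - q) = χ u p - χ u q := fun u p q => (hχl u).map_sub p q
  have hch2zero : ∀ u : g, χ u 0 = 0 := fun u => (hχl u).map_zero
  have hps1add : ∀ (u v : g) (p : h), ψ (u + v) p = ψ u p + ψ v p := fun u v p => (hψr p).map_add u v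
  have hps1sub : ∀ (u v : g) (p : h), ψ (u - v) p = ψ u p - ψ v p := fun u v p => (hψr p).map_sub u v
  have hps1zero : ∀ p : h, ψ 0 p = 0 := fun p => (hψr p).map_zero
  have hps2add : ∀ (u : g) (p q : h), ψ u (p + q) = ψ u p + ψ u q := fun u p q => (hψl u).map_add p q
  have hps2sub : ∀ (u : g) (p q : h), ψ u (p - q) = ψ u p - ψ u q := fun u p q => (hψl u).map_sub p q
  have hps2zero : ∀ u : g, ψ u 0 = 0 := fun u => (hψl u).map_zero
  have hFadd : ∀ u v : g, F (u + v) = F u + F v := fun u v => hFl.map_add u v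
  have hFsub : ∀ u v : g, F (u - v) = F u - F v := fun u v => hFl.map_sub u v
  have hF0 : F 0 = 0 := hFl.map_zero
  have gsk : ∀ u v : g, ⁅u, v⁆ + ⁅v, u⁆ = 0 := fun u v => by
    rw [← lie_skew u v]; abel
  have gja : ∀ u v w : g, ⁅⁅u, v⁆, w⁆ + ⁅⁅v, w⁆, u⁆ + ⁅⁅w, u⁆, v⁆ = 0 := fun u v w => by
    have h1 := lie_jacobi u v w
    have h2 : ⁅⁅u, v⁆, w⁆ + ⁅⁅v, w⁆, u⁆ + ⁅⁅w, u⁆, v⁆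
        = -(⁅u, ⁅v, w⁆⁆ + ⁅v, ⁅w, u⁆⁆ + ⁅w, ⁅u, v⁆⁆) := by
      rw [← lie_skew ⁅u, v⁆ w, ← lie_skew ⁅v, w⁆ u, ← lie_skew ⁅w, u⁆ v]; abel
    rw [h2, h1, neg_zero]
  have skewH : ∀ p q : h, ⁅p, q⁆ + ⁅q, p⁆ = 0 := fun p q => by
    rw [← lie_skew p q]; abel
  have jacH : ∀ p q r : h, ⁅⁅p, q⁆, r⁆ + ⁅⁅q, r⁆, p⁆ + ⁅⁅r, p⁆, q⁆ = 0 := fun p q r => by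
    have h1 := lie_jacobi p q r
    have h2 : ⁅⁅p, q⁆, r⁆ + ⁅⁅q, r⁆, p⁆ + ⁅⁅r, p⁆, q⁆
        = -(⁅p, ⁅q, r⁆⁆ + ⁅q, ⁅r, p⁆⁆ + ⁅r, ⁅p, q⁆⁆) := by
      rw [← lie_skew ⁅p, q⁆ r, ← lie_skew ⁅q, r⁆ p, ← lie_skew ⁅r, p⁆ q]; abel
    rw [h2, h1, neg_zero]
  have chisk1 : ∀ u v w : g, χ ⁅u, v⁆ w + χ ⁅v, u⁆ w = 0 := fun u v w => by
    rw [← hch1add, gsk u v]; exact hch1zero w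
  have Fja : ∀ u v w : g, F ⁅⁅u, v⁆, w⁆ + F ⁅⁅v, w⁆, u⁆ + F ⁅⁅w, u⁆, v⁆ = 0 := fun u v w => by
    rw [← hFadd, ← hFadd, gja u v w]; exact hF0
  refine ⟨?_, ?_, ?_⟩
  · intro x a b
    simp only [hbrS, hψb]
    rw [← sub_eq_zero]
    have E0 : (ψ x ⁅(S a), (S b)⁆) - (⁅ψ x (S a), (S b)⁆ + ⁅(S a), ψ x (S b)⁆) = 0 := sub_eq_zero.mpr (hder x (S a) (S b))
    have E1 : (ψ (N x) ⁅(S a), b⁆) - (⁅ψ (N x) (S a), b⁆ + ⁅(S a), ψ (N x) b⁆) = 0 := sub_eq_zero.mpr (hder (N x) (S a) b)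
    have E2 : (ψ (N x) ⁅a, (S b)⁆) - (⁅ψ (N x) a, (S b)⁆ + ⁅a, ψ (N x) (S b)⁆) = 0 := sub_eq_zero.mpr (hder (N x) a (S b))
    have E3 : (S (ψ x ⁅(S a), b⁆)) - (S (⁅ψ x (S a), b⁆ + ⁅(S a), ψ x b⁆)) = 0 := sub_eq_zero.mpr (congrArg (⇑S) (hder x (S a) b))
    have E4 : (S (ψ x ⁅a, (S b)⁆)) - (S (⁅ψ x a, (S b)⁆ + ⁅a, ψ x (S b)⁆)) = 0 := sub_eq_zero.mpr (congrArg (⇑S) (hder x a (S b)))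
    have E5 : (S (ψ (N x) ⁅a, b⁆)) - (S (⁅ψ (N x) a, b⁆ + ⁅a, ψ (N x) b⁆)) = 0 := sub_eq_zero.mpr (congrArg (⇑S) (hder (N x) a b))
    have E6 : (S (S (ψ x ⁅a, b⁆))) - (S (S (⁅ψ x a, b⁆ + ⁅a, ψ x b⁆))) = 0 := sub_eq_zero.mpr (congrArg (⇑S) (congrArg (⇑S) (hder x a b)))
    have E7 : (ψ (N x) (S ⁅a, b⁆)) - (S (ψ (N x) ⁅a, b⁆ + ψ x (S ⁅a, b⁆) - S (ψ x ⁅a, b⁆)) + S ⁅F x, ⁅a, b⁆⁆ - ⁅F x, S ⁅a, b⁆⁆) = 0 := sub_eq_zero.mpr (hnc3 x ⁅a, b⁆)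
    have E8 : ⁅(ψ (N x) (S a)), b⁆ - ⁅(S (ψ (N x) a + ψ x (S a) - S (ψ x a)) + S ⁅F x, a⁆ - ⁅F x, S a⁆), b⁆ = 0 := sub_eq_zero.mpr (congrArg (⁅·, b⁆) (hnc3 x a))
    have E9 : ⁅a, (ψ (N x) (S b))⁆ - ⁅a, (S (ψ (N x) b + ψ x (S b) - S (ψ x b)) + S ⁅F x, b⁆ - ⁅F x, S b⁆)⁆ = 0 := sub_eq_zero.mpr (congrArg (⁅a, ·⁆) (hnc3 x b))
    have E10 : (ψ x ⁅S a, S b⁆) - (ψ x (S (⁅S a, b⁆ + ⁅a, S b⁆ - S ⁅a, b⁆))) = 0 := sub_eq_zero.mpr (congrArg (ψ x) (hS a b))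
    have E11 : ⁅S (ψ x a), S b⁆ - (S (⁅S (ψ x a), b⁆ + ⁅(ψ x a), S b⁆ - S ⁅(ψ x a), b⁆)) = 0 := sub_eq_zero.mpr (hS (ψ x a) b)
    have E12 : ⁅S a, S (ψ x b)⁆ - (S (⁅S a, (ψ x b)⁆ + ⁅a, S (ψ x b)⁆ - S ⁅a, (ψ x b)⁆)) = 0 := sub_eq_zero.mpr (hS a (ψ x b))
    have E13 : (⁅⁅(F x), (S a)⁆, b⁆ + ⁅⁅(S a), b⁆, (F x)⁆ + ⁅⁅b, (F x)⁆, (S a)⁆) - (0 : h) = 0 := sub_eq_zero.mpr (jacH (F x) (S a) b)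
    have E14 : (⁅⁅(F x), a⁆, (S b)⁆ + ⁅⁅a, (S b)⁆, (F x)⁆ + ⁅⁅(S b), (F x)⁆, a⁆) - (0 : h) = 0 := sub_eq_zero.mpr (jacH (F x) a (S b))
    have E15 : (S (⁅⁅(F x), a⁆, b⁆ + ⁅⁅a, b⁆, (F x)⁆ + ⁅⁅b, (F x)⁆, a⁆)) - (S (0 : h)) = 0 := sub_eq_zero.mpr (congrArg (⇑S) (jacH (F x) a b))
    have E16 : (S (⁅(F x), ⁅a, b⁆⁆ + ⁅⁅a, b⁆, (F x)⁆)) - (S (0 : h)) = 0 := sub_eq_zero.mpr (congrArg (⇑S) (skewH (F x) ⁅a, b⁆))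
    have E17 : (⁅(S a), ⁅(F x), b⁆⁆ + ⁅⁅(F x), b⁆, (S a)⁆) - (0 : h) = 0 := sub_eq_zero.mpr (skewH (S a) ⁅(F x), b⁆)
    have E18 : (⁅a, ⁅(F x), (S b)⁆⁆ + ⁅⁅(F x), (S b)⁆, a⁆) - (0 : h) = 0 := sub_eq_zero.mpr (skewH a ⁅(F x), (S b)⁆)
    have E19 : (⁅⁅(S a), b⁆, (F x)⁆ + ⁅(F x), ⁅(S a), b⁆⁆) - (0 : h) = 0 := sub_eq_zero.mpr (skewH ⁅(S a), b⁆ (F x))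
    have E20 : (⁅⁅a, (S b)⁆, (F x)⁆ + ⁅(F x), ⁅a, (S b)⁆⁆) - (0 : h) = 0 := sub_eq_zero.mpr (skewH ⁅a, (S b)⁆ (F x))
    have E21 : (S (⁅a, ⁅(F x), b⁆⁆ + ⁅⁅(F x), b⁆, a⁆)) - (S (0 : h)) = 0 := sub_eq_zero.mpr (congrArg (⇑S) (skewH a ⁅(F x), b⁆))
    have E22 : (S ⁅(⁅(F x), b⁆ + ⁅b, (F x)⁆), a⁆) - (S ⁅(0 : h), a⁆) = 0 := sub_eq_zero.mpr (congrArg (⇑S) (congrArg (⁅·, a⁆) (skewH (F x) b)))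
    have E23 : ⁅(⁅(F x), b⁆ + ⁅b, (F x)⁆), (S a)⁆ - ⁅(0 : h), (S a)⁆ = 0 := sub_eq_zero.mpr (congrArg (⁅·, (S a)⁆) (skewH (F x) b))
    have E24 : ⁅(⁅(F x), (S b)⁆ + ⁅(S b), (F x)⁆), a⁆ - ⁅(0 : h), a⁆ = 0 := sub_eq_zero.mpr (congrArg (⁅·, a⁆) (skewH (F x) (S b)))
    have key : ((ψ x ⁅(S a), (S b)⁆) - (⁅ψ x (S a), (S b)⁆ + ⁅(S a), ψ x (S b)⁆)) + ((ψ (N x) ⁅(S a), b⁆) - (⁅ψ (N x) (S a), b⁆ + ⁅(S a), ψ (N x) b⁆)) + ((ψ (N x) ⁅a, (S b)⁆) - (⁅ψ (N x) a, (S b)⁆ + ⁅a, ψ (N x) (S b)⁆)) - ((S (ψ x ⁅(S a), b⁆)) - (S (⁅ψ x (S a), b⁆ + ⁅(S a), ψ x b⁆))) - ((S (ψ x ⁅a, (S b)⁆)) - (S (⁅ψ x a, (S b)⁆ + ⁅a, ψ x (S b)⁆))) - ((S (ψ (N x) ⁅a, b⁆)) - (S (⁅ψ (N x) a, b⁆ +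 ⁅a, ψ (N x) b⁆))) + ((S (S (ψ x ⁅a, b⁆))) - (S (S (⁅ψ x a, b⁆ + ⁅a, ψ x b⁆)))) - ((ψ (N x) (S ⁅a, b⁆)) - (S (ψ (N x) ⁅a, b⁆ + ψ x (S ⁅a, b⁆) - S (ψ x ⁅a, b⁆)) + S ⁅F x, ⁅a, b⁆⁆ - ⁅F x, S ⁅a, b⁆⁆)) + (⁅(ψ (N x) (S a)), b⁆ - ⁅(S (ψ (N x) a + ψ x (S a) - S (ψ x a)) + S ⁅F x, a⁆ - ⁅F x, S a⁆), b⁆) + (⁅a, (ψ (N x) (S b))⁆ - ⁅a, (S (ψ (N x) b + ψ x (S b) - S (ψ x b)) + S ⁅F x, b⁆ - ⁅F x, S b⁆)⁆) - ((ψ x ⁅S a, S b⁆) - (ψ x (S (⁅S a, b⁆ + ⁅a, S b⁆ - S ⁅a, b⁆)))) + (⁅S (ψ x a), S b⁆ - (S (⁅S (ψ x a), b⁆ + ⁅(ψ x a), S b⁆ - S ⁅(ψ x a), b⁆))) + (⁅S a, S (ψ x b)⁆ - (S (⁅S a, (ψ x b)⁆ + ⁅a, S (ψ x b)⁆ - S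 ⁅a, (ψ x b)⁆))) - ((⁅⁅(F x), (S a)⁆, b⁆ + ⁅⁅(S a), b⁆, (F x)⁆ + ⁅⁅b, (F x)⁆, (S a)⁆) - (0 : h)) - ((⁅⁅(F x), a⁆, (S b)⁆ + ⁅⁅a, (S b)⁆, (F x)⁆ + ⁅⁅(S b), (F x)⁆, a⁆) - (0 : h)) + ((S (⁅⁅(F x), a⁆, b⁆ + ⁅⁅a, b⁆, (F x)⁆ + ⁅⁅b, (F x)⁆, a⁆)) - (S (0 : h))) - ((S (⁅(F x), ⁅a, b⁆⁆ + ⁅⁅a, b⁆, (F x)⁆)) - (S (0 : h))) - ((⁅(S a), ⁅(F x), b⁆⁆ + ⁅⁅(F x), b⁆, (S a)⁆) - (0 : h)) - ((⁅a, ⁅(F x), (S b)⁆⁆ + ⁅⁅(F x), (S b)⁆, a⁆) - (0 : h)) + ((⁅⁅(S a), b⁆, (F x)⁆ + ⁅(F x), ⁅(S a), b⁆⁆) - (0 : h)) + ((⁅⁅a, (S b)⁆, (F x)⁆ + ⁅(F x), ⁅a, (S b)⁆⁆) - (0 : h)) + ((S (⁅a, ⁅(F x), b⁆⁆ + ⁅⁅(F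 x), b⁆, a⁆)) - (S (0 : h))) - ((S ⁅(⁅(F x), b⁆ + ⁅b, (F x)⁆), a⁆) - (S ⁅(0 : h), a⁆)) + (⁅(⁅(F x), b⁆ + ⁅b, (F x)⁆), (S a)⁆ - ⁅(0 : h), (S a)⁆) + (⁅(⁅(F x), (S b)⁆ + ⁅(S b), (F x)⁆), a⁆ - ⁅(0 : h), a⁆) = 0 := by
      rw [E0, E1, E2, E3, E4, E5, E6, E7, E8, E9, E10, E11, E12, E13, E14, E15, E16, E17, E18, E19, E20, E21, E22, E23, E24]
      simp
    rw [← key]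
    simp only [map_add, map_sub, map_zero, lie_add, add_lie, lie_sub, sub_lie, lie_zero,
      zero_lie, hch1add, hch1sub, hch1zero, hch2add, hch2sub, hch2zero, hps1add, hps1sub,
      hps1zero, hps2add, hps2sub, hps2zero, hFadd, hFsub, hF0]
    abel
  · intro x y a
    simp only [hbrN, hbrS, hχb, hψb]
    rw [← sub_eq_zero]
    have E0 : (S (S (ψ x (ψ y a) - ψ y (ψ x a) - ψ ⁅x, y⁆ a))) - (S (S ⁅χ x y, a⁆)) = 0 := sub_eq_zero.mpr (congrArg (⇑S) (congrArg (⇑S) (hnc1 x y a)))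
    have E1 : (S (ψ x (ψ y (S a)) - ψ y (ψ x (S a)) - ψ ⁅x, y⁆ (S a))) - (S ⁅χ x y, (S a)⁆) = 0 := sub_eq_zero.mpr (congrArg (⇑S) (hnc1 x y (S a)))
    have E2 : (S (ψ x (ψ (N y) a) - ψ (N y) (ψ x a) - ψ ⁅x, (N y)⁆ a)) - (S ⁅χ x (N y), a⁆) = 0 := sub_eq_zero.mpr (congrArg (⇑S) (hnc1 x (N y) a))
    have E3 : (ψ x (ψ (N y) (S a)) - ψ (N y) (ψ x (S a)) - ψ ⁅x, (N y)⁆ (S a)) - ⁅χ x (N y), (S a)⁆ = 0 := sub_eq_zero.mpr (hnc1 x (N y) (S a))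
    have E4 : (S (ψ (N x) (ψ y a) - ψ y (ψ (N x) a) - ψ ⁅(N x), y⁆ a)) - (S ⁅χ (N x) y, a⁆) = 0 := sub_eq_zero.mpr (congrArg (⇑S) (hnc1 (N x) y a))
    have E5 : (ψ (N x) (ψ y (S a)) - ψ y (ψ (N x) (S a)) - ψ ⁅(N x), y⁆ (S a)) - ⁅χ (N x) y, (S a)⁆ = 0 := sub_eq_zero.mpr (hnc1 (N x) y (S a))
    have E6 : (ψ (N x) (ψ (N y) a) - ψ (N y) (ψ (N x) a) - ψ ⁅(N x), (N y)⁆ a) - ⁅χ (N x) (N y), a⁆ = 0 := sub_eq_zero.mpr (hnc1 (N x) (N y) a)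
    have E7 : (ψ (N x) (S (ψ y a))) - (S (ψ (N x) (ψ y a) + ψ x (S (ψ y a)) - S (ψ x (ψ y a))) + S ⁅F x, (ψ y a)⁆ - ⁅F x, S (ψ y a)⁆) = 0 := sub_eq_zero.mpr (hnc3 x (ψ y a))
    have E8 : (ψ (N y) (S (ψ x a))) - (S (ψ (N y) (ψ x a) + ψ y (S (ψ x a)) - S (ψ y (ψ x a))) + S ⁅F y, (ψ x a)⁆ - ⁅F y, S (ψ x a)⁆) = 0 := sub_eq_zero.mpr (hnc3 y (ψ x a))
    have E9 : (S (ψ x ⁅(F y), a⁆)) - (S (⁅ψ x (F y), a⁆ + ⁅(F y), ψ x a⁆)) = 0 := sub_eq_zero.mpr (congrArg (⇑S) (hder x (F y) a))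
    have E10 : (ψ x ⁅(F y), (S a)⁆) - (⁅ψ x (F y), (S a)⁆ + ⁅(F y), ψ x (S a)⁆) = 0 := sub_eq_zero.mpr (hder x (F y) (S a))
    have E11 : (S (ψ y ⁅(F x), a⁆)) - (S (⁅ψ y (F x), a⁆ + ⁅(F x), ψ y a⁆)) = 0 := sub_eq_zero.mpr (congrArg (⇑S) (hder y (F x) a))
    have E12 : (ψ y ⁅(F x), (S a)⁆) - (⁅ψ y (F x), (S a)⁆ + ⁅(F x), ψ y (S a)⁆) = 0 := sub_eq_zero.mpr (hder y (F x) (S a))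
    have E13 : (ψ (N x) ⁅(F y), a⁆) - (⁅ψ (N x) (F y), a⁆ + ⁅(F y), ψ (N x) a⁆) = 0 := sub_eq_zero.mpr (hder (N x) (F y) a)
    have E14 : (ψ (N y) ⁅(F x), a⁆) - (⁅ψ (N y) (F x), a⁆ + ⁅(F x), ψ (N y) a⁆) = 0 := sub_eq_zero.mpr (hder (N y) (F x) a)
    have E15 : ⁅S (χ x y), S a⁆ - (S (⁅S (χ x y), a⁆ + ⁅(χ x y), S a⁆ - S ⁅(χ x y), a⁆)) = 0 := sub_eq_zero.mpr (hS (χ x y) a)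
    have E16 : ⁅(χ (N x) (N y) - S (χ (N x) y + χ x (N y) - S (χ x y)) - F (⁅N x, y⁆ + ⁅x, N y⁆ - N ⁅x, y⁆) + ψ (N x) (F y) - ψ (N y) (F x) - S (ψ x (F y) - ψ y (F x) - F ⁅x, y⁆) + ⁅F x, F y⁆), a⁆ - ⁅(0 : h), a⁆ = 0 := sub_eq_zero.mpr (congrArg (⁅·, a⁆) (hnc4 x y))
    have E17 : (ψ ⁅N x, N y⁆ a) - (ψ (N (⁅N x, y⁆ + ⁅x, N y⁆ - N ⁅x, y⁆)) a) = 0 := sub_eq_zero.mpr (congrArg (fun u => ψ u a) (hN x y))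
    have E18 : (⁅⁅(F x), (F y)⁆, a⁆ + ⁅⁅(F y), a⁆, (F x)⁆ + ⁅⁅a, (F x)⁆, (F y)⁆) - (0 : h) = 0 := sub_eq_zero.mpr (jacH (F x) (F y) a)
    have E19 : ⁅(⁅(F x), a⁆ + ⁅a, (F x)⁆), (F y)⁆ - ⁅(0 : h), (F y)⁆ = 0 := sub_eq_zero.mpr (congrArg (⁅·, (F y)⁆) (skewH (F x) a))
    have E20 : (ψ y (ψ (N x) (S a))) - (ψ y (S (ψ (N x) a + ψ x (S a) - S (ψ x a)) + S ⁅F x, a⁆ - ⁅F x, S a⁆)) = 0 := sub_eq_zero.mpr (congrArg (ψ y) (hnc3 x a))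
    have E21 : (ψ x (ψ (N y) (S a))) - (ψ x (S (ψ (N y) a + ψ y (S a) - S (ψ y a)) + S ⁅F y, a⁆ - ⁅F y, S a⁆)) = 0 := sub_eq_zero.mpr (congrArg (ψ x) (hnc3 y a))
    have E22 : (ψ (N ⁅x, y⁆) (S a)) - (S (ψ (N ⁅x, y⁆) a + ψ ⁅x, y⁆ (S a) - S (ψ ⁅x, y⁆ a)) + S ⁅F ⁅x, y⁆, a⁆ - ⁅F ⁅x, y⁆, S a⁆) = 0 := sub_eq_zero.mpr (hnc3 ⁅x, y⁆ a)
    have E23 : (⁅⁅(F x), a⁆, (F y)⁆ + ⁅(F y), ⁅(F x), a⁆⁆) - (0 : h) = 0 := sub_eq_zero.mpr (skewH ⁅(F x), a⁆ (F y))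
    have E24 : (⁅⁅(F y), a⁆, (F x)⁆ + ⁅(F x), ⁅(F y), a⁆⁆) - (0 : h) = 0 := sub_eq_zero.mpr (skewH ⁅(F y), a⁆ (F x))
    have key : ((S (S (ψ x (ψ y a) - ψ y (ψ x a) - ψ ⁅x, y⁆ a))) - (S (S ⁅χ x y, a⁆))) - ((S (ψ x (ψ y (S a)) - ψ y (ψ x (S a)) - ψ ⁅x, y⁆ (S a))) - (S ⁅χ x y, (S a)⁆)) - ((S (ψ x (ψ (N y) a) - ψ (N y) (ψ x a) - ψ ⁅x, (N y)⁆ a)) - (S ⁅χ x (N y), a⁆)) + ((ψ x (ψ (N y) (S a)) - ψ (N y) (ψ x (S a)) - ψ ⁅x, (N y)⁆ (S a)) - ⁅χ x (N y), (S a)⁆) - ((S (ψ (N x) (ψ y a) - ψ y (ψ (N x) a) - ψ ⁅(N x), y⁆ a)) - (S ⁅χ (N x) y, a⁆)) + ((ψ (N x) (ψ y (S a)) - ψ y (ψ (N x) (S a)) - ψ ⁅(N x), y⁆ (S a)) - ⁅χ (N x) y, (S a)⁆) + ((ψ (N x) (ψ (N y) a) - ψ (N y) (ψ (N x) a) - ψ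 ⁅(N x), (N y)⁆ a) - ⁅χ (N x) (N y), a⁆) - ((ψ (N x) (S (ψ y a))) - (S (ψ (N x) (ψ y a) + ψ x (S (ψ y a)) - S (ψ x (ψ y a))) + S ⁅F x, (ψ y a)⁆ - ⁅F x, S (ψ y a)⁆)) + ((ψ (N y) (S (ψ x a))) - (S (ψ (N y) (ψ x a) + ψ y (S (ψ x a)) - S (ψ y (ψ x a))) + S ⁅F y, (ψ x a)⁆ - ⁅F y, S (ψ x a)⁆)) - ((S (ψ x ⁅(F y), a⁆)) - (S (⁅ψ x (F y), a⁆ + ⁅(F y), ψ x a⁆))) + ((ψ x ⁅(F y), (S a)⁆) - (⁅ψ x (F y), (S a)⁆ + ⁅(F y), ψ x (S a)⁆)) + ((S (ψ y ⁅(F x), a⁆)) - (S (⁅ψ y (F x), a⁆ + ⁅(F x), ψ y a⁆))) - ((ψ y ⁅(F x), (S a)⁆) - (⁅ψ y (F x), (S a)⁆ + ⁅(F x), ψ y (S a)⁆)) + ((ψ (N x) ⁅(F y), a⁆) - (⁅ψ (N x) (F y), a⁆ + ⁅(F y), ψ (N x) a⁆)) - ((ψ (N y) ⁅(F x), a⁆)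 - (⁅ψ (N y) (F x), a⁆ + ⁅(F x), ψ (N y) a⁆)) + (⁅S (χ x y), S a⁆ - (S (⁅S (χ x y), a⁆ + ⁅(χ x y), S a⁆ - S ⁅(χ x y), a⁆))) + (⁅(χ (N x) (N y) - S (χ (N x) y + χ x (N y) - S (χ x y)) - F (⁅N x, y⁆ + ⁅x, N y⁆ - N ⁅x, y⁆) + ψ (N x) (F y) - ψ (N y) (F x) - S (ψ x (F y) - ψ y (F x) - F ⁅x, y⁆) + ⁅F x, F y⁆), a⁆ - ⁅(0 : h), a⁆) + ((ψ ⁅N x, N y⁆ a) - (ψ (N (⁅N x, y⁆ + ⁅x, N y⁆ - N ⁅x, y⁆)) a)) - ((⁅⁅(F x), (F y)⁆, a⁆ + ⁅⁅(F y), a⁆, (F x)⁆ + ⁅⁅a, (F x)⁆, (F y)⁆) - (0 : h)) + (⁅(⁅(F x), a⁆ + ⁅a, (F x)⁆), (F y)⁆ - ⁅(0 : h), (F y)⁆) + ((ψ y (ψ (N x) (S a))) - (ψ y (S (ψ (N x) a + ψ x (S a) - S (ψ x a)) + S ⁅F x, a⁆ - ⁅F x, S a⁆))) - ((ψ x (ψ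 (N y) (S a))) - (ψ x (S (ψ (N y) a + ψ y (S a) - S (ψ y a)) + S ⁅F y, a⁆ - ⁅F y, S a⁆))) + ((ψ (N ⁅x, y⁆) (S a)) - (S (ψ (N ⁅x, y⁆) a + ψ ⁅x, y⁆ (S a) - S (ψ ⁅x, y⁆ a)) + S ⁅F ⁅x, y⁆, a⁆ - ⁅F ⁅x, y⁆, S a⁆)) - ((⁅⁅(F x), a⁆, (F y)⁆ + ⁅(F y), ⁅(F x), a⁆⁆) - (0 : h)) + ((⁅⁅(F y), a⁆, (F x)⁆ + ⁅(F x), ⁅(F y), a⁆⁆) - (0 : h)) = 0 := by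
      rw [E0, E1, E2, E3, E4, E5, E6, E7, E8, E9, E10, E11, E12, E13, E14, E15, E16, E17, E18, E19, E20, E21, E22, E23, E24]
      simp
    rw [← key]
    simp only [map_add, map_sub, map_zero, lie_add, add_lie, lie_sub, sub_lie, lie_zero,
      zero_lie, hch1add, hch1sub, hch1zero, hch2add, hch2sub, hch2zero, hps1add, hps1sub,
      hps1zero, hps2add, hps2sub, hps2zero, hFadd, hFsub, hF0]
    abel
  · intro x y z
    simp only [hbrN, hχb, hψb]
    have E0 : (ψ (N y) (χ z (N x)) + ψ z (χ (N x) (N y)) + ψ (N x) (χ (N y) z) - χ ⁅(N y), z⁆ (N x) - χ ⁅z, (N x)⁆ (N y) - χ ⁅(N x), (N y)⁆ z) - (0 : h) = 0 := sub_eq_zero.mpr (hnc2 (N y) z (N x))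
    have E1 : (S (ψ z (χ (N x) y) + ψ (N x) (χ y z) + ψ y (χ z (N x)) - χ ⁅z, (N x)⁆ y - χ ⁅(N x), y⁆ z - χ ⁅y, z⁆ (N x))) - (S (0 : h)) = 0 := sub_eq_zero.mpr (congrArg (⇑S) (hnc2 z (N x) y))
    have E2 : (S (ψ z (χ x (N y)) + ψ x (χ (N y) z) + ψ (N y) (χ z x) - χ ⁅z, x⁆ (N y) - χ ⁅x, (N y)⁆ z - χ ⁅(N y), z⁆ x)) - (S (0 : h)) = 0 := sub_eq_zero.mpr (congrArg (⇑S) (hnc2 z x (N y)))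
    have E3 : (ψ (N z) (χ (N x) y) + ψ (N x) (χ y (N z)) + ψ y (χ (N z) (N x)) - χ ⁅(N z), (N x)⁆ y - χ ⁅(N x), y⁆ (N z) - χ ⁅y, (N z)⁆ (N x)) - (0 : h) = 0 := sub_eq_zero.mpr (hnc2 (N z) (N x) y)
    have E4 : (S (S (ψ x (χ y z) + ψ y (χ z x) + ψ z (χ x y) - χ ⁅x, y⁆ z - χ ⁅y, z⁆ x - χ ⁅z, x⁆ y))) - (S (S (0 : h))) = 0 := sub_eq_zero.mpr (congrArg (⇑S) (congrArg (⇑S) (hnc2 x y z)))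
    have E5 : (S (ψ y (χ (N z) x) + ψ (N z) (χ x y) + ψ x (χ y (N z)) - χ ⁅y, (N z)⁆ x - χ ⁅(N z), x⁆ y - χ ⁅x, y⁆ (N z))) - (S (0 : h)) = 0 := sub_eq_zero.mpr (congrArg (⇑S) (hnc2 y (N z) x))
    have E6 : (ψ (N y) (χ (N z) x) + ψ (N z) (χ x (N y)) + ψ x (χ (N y) (N z)) - χ ⁅(N y), (N z)⁆ x - χ ⁅(N z), x⁆ (N y) - χ ⁅x, (N y)⁆ (N z)) - (0 : h) = 0 := sub_eq_zero.mpr (hnc2 (N y) (N z) x)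
    have E7 : (ψ z (χ (N x) (N y) - S (χ (N x) y + χ x (N y) - S (χ x y)) - F (⁅N x, y⁆ + ⁅x, N y⁆ - N ⁅x, y⁆) + ψ (N x) (F y) - ψ (N y) (F x) - S (ψ x (F y) - ψ y (F x) - F ⁅x, y⁆) + ⁅F x, F y⁆)) - (ψ z (0 : h)) = 0 := sub_eq_zero.mpr (congrArg (ψ z) (hnc4 x y))
    have E8 : (ψ x (χ (N y) (N z) - S (χ (N y) z + χ y (N z) - S (χ y z)) - F (⁅N y, z⁆ + ⁅y, N z⁆ - N ⁅y, z⁆) + ψ (N y) (F z) - ψ (N z) (F y) - S (ψ y (F z) - ψ z (F y) - F ⁅y, z⁆) + ⁅F y, F z⁆)) - (ψ x (0 : h)) = 0 := sub_eq_zero.mpr (congrArg (ψ x) (hnc4 y z))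
    have E9 : (ψ y (χ (N z) (N x) - S (χ (N z) x + χ z (N x) - S (χ z x)) - F (⁅N z, x⁆ + ⁅z, N x⁆ - N ⁅z, x⁆) + ψ (N z) (F x) - ψ (N x) (F z) - S (ψ z (F x) - ψ x (F z) - F ⁅z, x⁆) + ⁅F z, F x⁆)) - (ψ y (0 : h)) = 0 := sub_eq_zero.mpr (congrArg (ψ y) (hnc4 z x))
    have E10 : (ψ (N x) (S (χ y z))) - (S (ψ (N x) (χ y z) + ψ x (S (χ y z)) - S (ψ x (χ y z))) + S ⁅F x, (χ y z)⁆ - ⁅F x, S (χ y z)⁆) = 0 := sub_eq_zero.mpr (hnc3 x (χ y z))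
    have E11 : (ψ (N y) (S (χ z x))) - (S (ψ (N y) (χ z x) + ψ y (S (χ z x)) - S (ψ y (χ z x))) + S ⁅F y, (χ z x)⁆ - ⁅F y, S (χ z x)⁆) = 0 := sub_eq_zero.mpr (hnc3 y (χ z x))
    have E12 : (ψ (N z) (S (χ x y))) - (S (ψ (N z) (χ x y) + ψ z (S (χ x y)) - S (ψ z (χ x y))) + S ⁅F z, (χ x y)⁆ - ⁅F z, S (χ x y)⁆) = 0 := sub_eq_zero.mpr (hnc3 z (χ x y))
    have E13 : (S (ψ x (ψ y (F z)) - ψ y (ψ x (F z)) - ψ ⁅x, y⁆ (F z))) - (S ⁅χ x y, (F z)⁆) = 0 := sub_eq_zero.mpr (congrArg (⇑S) (hnc1 x y (F z)))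
    have E14 : (ψ x (ψ (N y) (F z)) - ψ (N y) (ψ x (F z)) - ψ ⁅x, (N y)⁆ (F z)) - ⁅χ x (N y), (F z)⁆ = 0 := sub_eq_zero.mpr (hnc1 x (N y) (F z))
    have E15 : (S (ψ y (ψ z (F x)) - ψ z (ψ y (F x)) - ψ ⁅y, z⁆ (F x))) - (S ⁅χ y z, (F x)⁆) = 0 := sub_eq_zero.mpr (congrArg (⇑S) (hnc1 y z (F x)))
    have E16 : (ψ y (ψ (N z) (F x)) - ψ (N z) (ψ y (F x)) - ψ ⁅y, (N z)⁆ (F x)) - ⁅χ y (N z), (F x)⁆ = 0 := sub_eq_zero.mpr (hnc1 y (N z) (F x))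
    have E17 : (S (ψ z (ψ x (F y)) - ψ x (ψ z (F y)) - ψ ⁅z, x⁆ (F y))) - (S ⁅χ z x, (F y)⁆) = 0 := sub_eq_zero.mpr (congrArg (⇑S) (hnc1 z x (F y)))
    have E18 : (ψ z (ψ (N x) (F y)) - ψ (N x) (ψ z (F y)) - ψ ⁅z, (N x)⁆ (F y)) - ⁅χ z (N x), (F y)⁆ = 0 := sub_eq_zero.mpr (hnc1 z (N x) (F y))
    have E19 : (ψ (N x) (ψ y (F z)) - ψ y (ψ (N x) (F z)) - ψ ⁅(N x), y⁆ (F z)) - ⁅χ (N x) y, (F z)⁆ = 0 := sub_eq_zero.mpr (hnc1 (N x) y (F z))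
    have E20 : (ψ (N y) (ψ z (F x)) - ψ z (ψ (N y) (F x)) - ψ ⁅(N y), z⁆ (F x)) - ⁅χ (N y) z, (F x)⁆ = 0 := sub_eq_zero.mpr (hnc1 (N y) z (F x))
    have E21 : (ψ (N z) (ψ x (F y)) - ψ x (ψ (N z) (F y)) - ψ ⁅(N z), x⁆ (F y)) - ⁅χ (N z) x, (F y)⁆ = 0 := sub_eq_zero.mpr (hnc1 (N z) x (F y))
    have E22 : (ψ x ⁅(F y), (F z)⁆) - (⁅ψ x (F y), (F z)⁆ + ⁅(F y), ψ x (F z)⁆) = 0 := sub_eq_zero.mpr (hder x (F y) (F z))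
    have E23 : (ψ y ⁅(F z), (F x)⁆) - (⁅ψ y (F z), (F x)⁆ + ⁅(F z), ψ y (F x)⁆) = 0 := sub_eq_zero.mpr (hder y (F z) (F x))
    have E24 : (ψ z ⁅(F x), (F y)⁆) - (⁅ψ z (F x), (F y)⁆ + ⁅(F x), ψ z (F y)⁆) = 0 := sub_eq_zero.mpr (hder z (F x) (F y))
    have E25 : (χ ⁅N x, N y⁆ z) - (χ (N (⁅N x, y⁆ + ⁅x, N y⁆ - N ⁅x, y⁆)) z) = 0 := sub_eq_zero.mpr (congrArg (fun u => χ u z) (hN x y))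
    have E26 : (χ ⁅N x, N z⁆ y) - (χ (N (⁅N x, z⁆ + ⁅x, N z⁆ - N ⁅x, z⁆)) y) = 0 := sub_eq_zero.mpr (congrArg (fun u => χ u y) (hN x z))
    have E27 : (χ ⁅N y, N z⁆ x) - (χ (N (⁅N y, z⁆ + ⁅y, N z⁆ - N ⁅y, z⁆)) x) = 0 := sub_eq_zero.mpr (congrArg (fun u => χ u x) (hN y z))
    have E28 : (χ ⁅(N x), (N z)⁆ y + χ ⁅(N z), (N x)⁆ y) - (0 : h) = 0 := sub_eq_zero.mpr (chisk1 (N x) (N z) y)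
    have E29 : (S (F ⁅⁅x, y⁆, z⁆ + F ⁅⁅y, z⁆, x⁆ + F ⁅⁅z, x⁆, y⁆)) - (S (0 : h)) = 0 := sub_eq_zero.mpr (congrArg (⇑S) (Fja x y z))
    have E30 : (F ⁅⁅(N x), y⁆, z⁆ + F ⁅⁅y, z⁆, (N x)⁆ + F ⁅⁅z, (N x)⁆, y⁆) - (0 : h) = 0 := sub_eq_zero.mpr (Fja (N x) y z)
    have E31 : (F ⁅⁅x, (N y)⁆, z⁆ + F ⁅⁅(N y), z⁆, x⁆ + F ⁅⁅z, x⁆, (N y)⁆) - (0 : h) = 0 := sub_eq_zero.mpr (Fja x (N y) z)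
    have E32 : (F ⁅⁅x, y⁆, (N z)⁆ + F ⁅⁅y, (N z)⁆, x⁆ + F ⁅⁅(N z), x⁆, y⁆) - (0 : h) = 0 := sub_eq_zero.mpr (Fja x y (N z))
    have E33 : (S (⁅(F x), (χ y z)⁆ + ⁅(χ y z), (F x)⁆)) - (S (0 : h)) = 0 := sub_eq_zero.mpr (congrArg (⇑S) (skewH (F x) (χ y z)))
    have E34 : (S (⁅(F y), (χ z x)⁆ + ⁅(χ z x), (F y)⁆)) - (S (0 : h)) = 0 := sub_eq_zero.mpr (congrArg (⇑S) (skewH (F y) (χ z x)))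
    have E35 : (S (⁅(F z), (χ x y)⁆ + ⁅(χ x y), (F z)⁆)) - (S (0 : h)) = 0 := sub_eq_zero.mpr (congrArg (⇑S) (skewH (F z) (χ x y)))
    have E36 : (χ (N (⁅x, (N z)⁆ + ⁅(N z), x⁆)) y) - (χ (N (0 : g)) y) = 0 := sub_eq_zero.mpr (congrArg (fun u => χ u y) (congrArg (⇑N) (gsk x (N z))))
    have E37 : (χ (N (⁅z, (N x)⁆ + ⁅(N x), z⁆)) y) - (χ (N (0 : g)) y) = 0 := sub_eq_zero.mpr (congrArg (fun u => χ u y) (congrArg (⇑N) (gsk z (N x))))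
    have E38 : (F (N (⁅⁅x, y⁆, z⁆ + ⁅⁅y, z⁆, x⁆ + ⁅⁅z, x⁆, y⁆))) - (F (N (0 : g))) = 0 := sub_eq_zero.mpr (congrArg F (congrArg (⇑N) (gja x y z)))
    have E39 : (⁅(F x), (ψ y (F z))⁆ + ⁅(ψ y (F z)), (F x)⁆) - (0 : h) = 0 := sub_eq_zero.mpr (skewH (F x) (ψ y (F z)))
    have E40 : (⁅(F x), (F ⁅y, z⁆)⁆ + ⁅(F ⁅y, z⁆), (F x)⁆) - (0 : h) = 0 := sub_eq_zero.mpr (skewH (F x) (F ⁅y, z⁆))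
    have E41 : (⁅(F y), (ψ z (F x))⁆ + ⁅(ψ z (F x)), (F y)⁆) - (0 : h) = 0 := sub_eq_zero.mpr (skewH (F y) (ψ z (F x)))
    have E42 : (⁅(F y), (F ⁅z, x⁆)⁆ + ⁅(F ⁅z, x⁆), (F y)⁆) - (0 : h) = 0 := sub_eq_zero.mpr (skewH (F y) (F ⁅z, x⁆))
    have E43 : (⁅(F z), (ψ x (F y))⁆ + ⁅(ψ x (F y)), (F z)⁆) - (0 : h) = 0 := sub_eq_zero.mpr (skewH (F z) (ψ x (F y)))
    have E44 : (⁅(F z), (F ⁅x, y⁆)⁆ + ⁅(F ⁅x, y⁆), (F z)⁆) - (0 : h) = 0 := sub_eq_zero.mpr (skewH (F z) (F ⁅x, y⁆))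
    have E45 : (χ (N ⁅y, z⁆) (N x) - S (χ (N ⁅y, z⁆) x + χ ⁅y, z⁆ (N x) - S (χ ⁅y, z⁆ x)) - F (⁅N ⁅y, z⁆, x⁆ + ⁅⁅y, z⁆, N x⁆ - N ⁅⁅y, z⁆, x⁆) + ψ (N ⁅y, z⁆) (F x) - ψ (N x) (F ⁅y, z⁆) - S (ψ ⁅y, z⁆ (F x) - ψ x (F ⁅y, z⁆) - F ⁅⁅y, z⁆, x⁆) + ⁅F ⁅y, z⁆, F x⁆) - (0 : h) = 0 := sub_eq_zero.mpr (hnc4 ⁅y, z⁆ x)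
    have E46 : (χ (N ⁅z, x⁆) (N y) - S (χ (N ⁅z, x⁆) y + χ ⁅z, x⁆ (N y) - S (χ ⁅z, x⁆ y)) - F (⁅N ⁅z, x⁆, y⁆ + ⁅⁅z, x⁆, N y⁆ - N ⁅⁅z, x⁆, y⁆) + ψ (N ⁅z, x⁆) (F y) - ψ (N y) (F ⁅z, x⁆) - S (ψ ⁅z, x⁆ (F y) - ψ y (F ⁅z, x⁆) - F ⁅⁅z, x⁆, y⁆) + ⁅F ⁅z, x⁆, F y⁆) - (0 : h) = 0 := sub_eq_zero.mpr (hnc4 ⁅z, x⁆ y)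
    have E47 : (χ (N ⁅x, y⁆) (N z) - S (χ (N ⁅x, y⁆) z + χ ⁅x, y⁆ (N z) - S (χ ⁅x, y⁆ z)) - F (⁅N ⁅x, y⁆, z⁆ + ⁅⁅x, y⁆, N z⁆ - N ⁅⁅x, y⁆, z⁆) + ψ (N ⁅x, y⁆) (F z) - ψ (N z) (F ⁅x, y⁆) - S (ψ ⁅x, y⁆ (F z) - ψ z (F ⁅x, y⁆) - F ⁅⁅x, y⁆, z⁆) + ⁅F ⁅x, y⁆, F z⁆) - (0 : h) = 0 := sub_eq_zero.mpr (hnc4 ⁅x, y⁆ z)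
    have E48 : (⁅(χ (N x) y), (F z)⁆ + ⁅(F z), (χ (N x) y)⁆) - (0 : h) = 0 := sub_eq_zero.mpr (skewH (χ (N x) y) (F z))
    have E49 : (⁅(χ (N y) z), (F x)⁆ + ⁅(F x), (χ (N y) z)⁆) - (0 : h) = 0 := sub_eq_zero.mpr (skewH (χ (N y) z) (F x))
    have E50 : (⁅(χ (N z) x), (F y)⁆ + ⁅(F y), (χ (N z) x)⁆) - (0 : h) = 0 := sub_eq_zero.mpr (skewH (χ (N z) x) (F y))
    have E51 : (⁅(χ x (N y)), (F z)⁆ + ⁅(F z), (χ x (N y))⁆) - (0 : h) = 0 := sub_eq_zero.mpr (skewH (χ x (N y)) (F z))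
    have E52 : (⁅(χ y (N z)), (F x)⁆ + ⁅(F x), (χ y (N z))⁆) - (0 : h) = 0 := sub_eq_zero.mpr (skewH (χ y (N z)) (F x))
    have E53 : (⁅(χ z (N x)), (F y)⁆ + ⁅(F y), (χ z (N x))⁆) - (0 : h) = 0 := sub_eq_zero.mpr (skewH (χ z (N x)) (F y))
    have E54 : (χ (N (N (⁅x, z⁆ + ⁅z, x⁆))) y) - (χ (N (N (0 : g))) y) = 0 := sub_eq_zero.mpr (congrArg (fun u => χ u y) (congrArg (⇑N) (congrArg (⇑N) (gsk x z))))
    have key : ((ψ (N y) (χ z (N x)) + ψ z (χ (N x) (N y)) + ψ (N x) (χ (N y) z) - χ ⁅(N y), z⁆ (N x) - χ ⁅z, (N x)⁆ (N y) - χ ⁅(N x), (N y)⁆ z) - (0 : h)) - ((S (ψ z (χ (N x) y) + ψ (N x) (χ y z) + ψ y (χ z (N x)) - χ ⁅z, (N x)⁆ y - χ ⁅(N x), y⁆ z - χ ⁅y, z⁆ (N x))) - (S (0 : h))) - ((S (ψ z (χ x (N y)) + ψ x (χ (N y) z) + ψ (N y) (χ z x) - χ ⁅z, x⁆ (N y)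 - χ ⁅x, (N y)⁆ z - χ ⁅(N y), z⁆ x)) - (S (0 : h))) + ((ψ (N z) (χ (N x) y) + ψ (N x) (χ y (N z)) + ψ y (χ (N z) (N x)) - χ ⁅(N z), (N x)⁆ y - χ ⁅(N x), y⁆ (N z) - χ ⁅y, (N z)⁆ (N x)) - (0 : h)) + ((S (S (ψ x (χ y z) + ψ y (χ z x) + ψ z (χ x y) - χ ⁅x, y⁆ z - χ ⁅y, z⁆ x - χ ⁅z, x⁆ y))) - (S (S (0 : h)))) - ((S (ψ y (χ (N z) x) + ψ (N z) (χ x y) + ψ x (χ y (N z)) - χ ⁅y, (N z)⁆ x - χ ⁅(N z), x⁆ y - χ ⁅x, y⁆ (N z))) - (S (0 : h))) + ((ψ (N y) (χ (N z) x) + ψ (N z) (χ x (N y)) + ψ x (χ (N y) (N z)) - χ ⁅(N y), (N z)⁆ x - χ ⁅(N z), x⁆ (N y) - χ ⁅x, (N y)⁆ (N z)) - (0 : h)) - ((ψ z (χ (N x) (N y) - S (χ (N x) y + χ x (N y) - S (χ x y)) - F (⁅N x, y⁆ + ⁅x, N y⁆ - N ⁅x, y⁆) + ψ (N x) (F y)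 - ψ (N y) (F x) - S (ψ x (F y) - ψ y (F x) - F ⁅x, y⁆) + ⁅F x, F y⁆)) - (ψ z (0 : h))) - ((ψ x (χ (N y) (N z) - S (χ (N y) z + χ y (N z) - S (χ y z)) - F (⁅N y, z⁆ + ⁅y, N z⁆ - N ⁅y, z⁆) + ψ (N y) (F z) - ψ (N z) (F y) - S (ψ y (F z) - ψ z (F y) - F ⁅y, z⁆) + ⁅F y, F z⁆)) - (ψ x (0 : h))) - ((ψ y (χ (N z) (N x) - S (χ (N z) x + χ z (N x) - S (χ z x)) - F (⁅N z, x⁆ + ⁅z, N x⁆ - N ⁅z, x⁆) + ψ (N z) (F x) - ψ (N x) (F z) - S (ψ z (F x) - ψ x (F z) - F ⁅z, x⁆) + ⁅F z, F x⁆)) - (ψ y (0 : h))) - ((ψ (N x) (S (χ y z))) - (S (ψ (N x) (χ y z) + ψ x (S (χ y z)) - S (ψ x (χ y z))) + S ⁅F x, (χ y z)⁆ - ⁅F x, S (χ y z)⁆)) - ((ψ (N y) (S (χ z x))) - (S (ψ (N y) (χ z x) + ψ y (S (χ z x)) - S (ψ y (χ z x))) + S ⁅F y, (χ z x)⁆ -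 ⁅F y, S (χ z x)⁆)) - ((ψ (N z) (S (χ x y))) - (S (ψ (N z) (χ x y) + ψ z (S (χ x y)) - S (ψ z (χ x y))) + S ⁅F z, (χ x y)⁆ - ⁅F z, S (χ x y)⁆)) - ((S (ψ x (ψ y (F z)) - ψ y (ψ x (F z)) - ψ ⁅x, y⁆ (F z))) - (S ⁅χ x y, (F z)⁆)) + ((ψ x (ψ (N y) (F z)) - ψ (N y) (ψ x (F z)) - ψ ⁅x, (N y)⁆ (F z)) - ⁅χ x (N y), (F z)⁆) - ((S (ψ y (ψ z (F x)) - ψ z (ψ y (F x)) - ψ ⁅y, z⁆ (F x))) - (S ⁅χ y z, (F x)⁆)) + ((ψ y (ψ (N z) (F x)) - ψ (N z) (ψ y (F x)) - ψ ⁅y, (N z)⁆ (F x)) - ⁅χ y (N z), (F x)⁆) - ((S (ψ z (ψ x (F y)) - ψ x (ψ z (F y)) - ψ ⁅z, x⁆ (F y))) - (S ⁅χ z x, (F y)⁆)) + ((ψ z (ψ (N x) (F y)) - ψ (N x) (ψ z (F y)) - ψ ⁅z, (N x)⁆ (F y)) - ⁅χ z (N x), (F y)⁆) + ((ψ (N x)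 (ψ y (F z)) - ψ y (ψ (N x) (F z)) - ψ ⁅(N x), y⁆ (F z)) - ⁅χ (N x) y, (F z)⁆) + ((ψ (N y) (ψ z (F x)) - ψ z (ψ (N y) (F x)) - ψ ⁅(N y), z⁆ (F x)) - ⁅χ (N y) z, (F x)⁆) + ((ψ (N z) (ψ x (F y)) - ψ x (ψ (N z) (F y)) - ψ ⁅(N z), x⁆ (F y)) - ⁅χ (N z) x, (F y)⁆) + ((ψ x ⁅(F y), (F z)⁆) - (⁅ψ x (F y), (F z)⁆ + ⁅(F y), ψ x (F z)⁆)) + ((ψ y ⁅(F z), (F x)⁆) - (⁅ψ y (F z), (F x)⁆ + ⁅(F z), ψ y (F x)⁆)) + ((ψ z ⁅(F x), (F y)⁆) - (⁅ψ z (F x), (F y)⁆ + ⁅(F x), ψ z (F y)⁆)) + ((χ ⁅N x, N y⁆ z) - (χ (N (⁅N x, y⁆ + ⁅x, N y⁆ - N ⁅x, y⁆)) z)) - ((χ ⁅N x, N z⁆ y) - (χ (N (⁅N x, z⁆ + ⁅x, N z⁆ - N ⁅x, z⁆)) y)) + ((χ ⁅N y, N z⁆ x) - (χ (N (⁅N y,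 z⁆ + ⁅y, N z⁆ - N ⁅y, z⁆)) x)) + ((χ ⁅(N x), (N z)⁆ y + χ ⁅(N z), (N x)⁆ y) - (0 : h)) - ((S (F ⁅⁅x, y⁆, z⁆ + F ⁅⁅y, z⁆, x⁆ + F ⁅⁅z, x⁆, y⁆)) - (S (0 : h))) + ((F ⁅⁅(N x), y⁆, z⁆ + F ⁅⁅y, z⁆, (N x)⁆ + F ⁅⁅z, (N x)⁆, y⁆) - (0 : h)) + ((F ⁅⁅x, (N y)⁆, z⁆ + F ⁅⁅(N y), z⁆, x⁆ + F ⁅⁅z, x⁆, (N y)⁆) - (0 : h)) + ((F ⁅⁅x, y⁆, (N z)⁆ + F ⁅⁅y, (N z)⁆, x⁆ + F ⁅⁅(N z), x⁆, y⁆) - (0 : h)) - ((S (⁅(F x), (χ y z)⁆ + ⁅(χ y z), (F x)⁆)) - (S (0 : h))) - ((S (⁅(F y), (χ z x)⁆ + ⁅(χ z x), (F y)⁆)) - (S (0 : h))) - ((S (⁅(F z), (χ x y)⁆ + ⁅(χ x y), (F z)⁆)) - (S (0 : h))) - ((χ (N (⁅x, (N z)⁆ + ⁅(N z), x⁆)) y)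 - (χ (N (0 : g)) y)) - ((χ (N (⁅z, (N x)⁆ + ⁅(N x), z⁆)) y) - (χ (N (0 : g)) y)) - ((F (N (⁅⁅x, y⁆, z⁆ + ⁅⁅y, z⁆, x⁆ + ⁅⁅z, x⁆, y⁆))) - (F (N (0 : g)))) + ((⁅(F x), (ψ y (F z))⁆ + ⁅(ψ y (F z)), (F x)⁆) - (0 : h)) - ((⁅(F x), (F ⁅y, z⁆)⁆ + ⁅(F ⁅y, z⁆), (F x)⁆) - (0 : h)) + ((⁅(F y), (ψ z (F x))⁆ + ⁅(ψ z (F x)), (F y)⁆) - (0 : h)) - ((⁅(F y), (F ⁅z, x⁆)⁆ + ⁅(F ⁅z, x⁆), (F y)⁆) - (0 : h)) + ((⁅(F z), (ψ x (F y))⁆ + ⁅(ψ x (F y)), (F z)⁆) - (0 : h)) - ((⁅(F z), (F ⁅x, y⁆)⁆ + ⁅(F ⁅x, y⁆), (F z)⁆) - (0 : h)) + ((χ (N ⁅y, z⁆) (N x) - S (χ (N ⁅y, z⁆) x + χ ⁅y, z⁆ (N x) - S (χ ⁅y, z⁆ x)) - F (⁅N ⁅y, z⁆, x⁆ + ⁅⁅y,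 z⁆, N x⁆ - N ⁅⁅y, z⁆, x⁆) + ψ (N ⁅y, z⁆) (F x) - ψ (N x) (F ⁅y, z⁆) - S (ψ ⁅y, z⁆ (F x) - ψ x (F ⁅y, z⁆) - F ⁅⁅y, z⁆, x⁆) + ⁅F ⁅y, z⁆, F x⁆) - (0 : h)) + ((χ (N ⁅z, x⁆) (N y) - S (χ (N ⁅z, x⁆) y + χ ⁅z, x⁆ (N y) - S (χ ⁅z, x⁆ y)) - F (⁅N ⁅z, x⁆, y⁆ + ⁅⁅z, x⁆, N y⁆ - N ⁅⁅z, x⁆, y⁆) + ψ (N ⁅z, x⁆) (F y) - ψ (N y) (F ⁅z, x⁆) - S (ψ ⁅z, x⁆ (F y) - ψ y (F ⁅z, x⁆) - F ⁅⁅z, x⁆, y⁆) + ⁅F ⁅z, x⁆, F y⁆) - (0 : h)) + ((χ (N ⁅x, y⁆) (N z) - S (χ (N ⁅x, y⁆) z + χ ⁅x, y⁆ (N z) - S (χ ⁅x, y⁆ z)) - F (⁅N ⁅x, y⁆, z⁆ + ⁅⁅x, y⁆, N z⁆ - N ⁅⁅x, y⁆, z⁆) + ψ (N ⁅x, y⁆)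 (F z) - ψ (N z) (F ⁅x, y⁆) - S (ψ ⁅x, y⁆ (F z) - ψ z (F ⁅x, y⁆) - F ⁅⁅x, y⁆, z⁆) + ⁅F ⁅x, y⁆, F z⁆) - (0 : h)) + ((⁅(χ (N x) y), (F z)⁆ + ⁅(F z), (χ (N x) y)⁆) - (0 : h)) + ((⁅(χ (N y) z), (F x)⁆ + ⁅(F x), (χ (N y) z)⁆) - (0 : h)) + ((⁅(χ (N z) x), (F y)⁆ + ⁅(F y), (χ (N z) x)⁆) - (0 : h)) + ((⁅(χ x (N y)), (F z)⁆ + ⁅(F z), (χ x (N y))⁆) - (0 : h)) + ((⁅(χ y (N z)), (F x)⁆ + ⁅(F x), (χ y (N z))⁆) - (0 : h)) + ((⁅(χ z (N x)), (F y)⁆ + ⁅(F y), (χ z (N x))⁆) - (0 : h)) + ((χ (N (N (⁅x, z⁆ + ⁅z, x⁆))) y) - (χ (N (N (0 : g))) y)) = 0 := by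
      rw [E0, E1, E2, E3, E4, E5, E6, E7, E8, E9, E10, E11, E12, E13, E14, E15, E16, E17, E18, E19, E20, E21, E22, E23, E24, E25, E26, E27, E28, E29, E30, E31, E32, E33, E34, E35, E36, E37, E38, E39, E40, E41, E42, E43, E44, E45, E46, E47, E48, E49, E50, E51, E52, E53, E54]
      simp
    rw [← key]
    simp only [map_add, map_sub, map_zero, lie_add, add_lie, lie_sub, sub_lie, lie_zero,
      zero_lie, hch1add, hch1sub, hch1zero, hch2add, hch2sub, hch2zero, hps1add, hps1sub,
      hps1zero, hps2add, hps2sub, hps2zero, hFadd, hFsub, hF0]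
    abel
end

section
/- Let 0 → (h, [·,·]_h, S) →ⁱ (e, [·,·]_e, U) →ᵖ (g, [·,·]_g, N) → 0 be a non-abelian extension of Nijenhuis Lie algebras, s a section of p, and (χ, ψ, F) the associated non-abelian 2-cocycle. Then a pair (β, α) ∈ Aut(h, S) × Aut(g, N) is inducible if and only if there exists a linear map λ : g → h satisfying, for all x, y ∈ g and h ∈ h: (1) β(ψ_x h) − ψ_{α x}(β h) = [λ x, β h]_h; (2) β(χ(x,y)) − χ(α x, α y) = ψ_{α x}(λ y) − ψ_{α y}(λ x) − λ([x,y]_g) + [λ x, λ y]_h; (3) β(F x) − F(α x) = S(λ x) − λ(N x). -/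
/-- Given a non-abelian extension of Nijenhuis Lie algebras, a section
`s` of `p` and the associated non-abelian 2-cocycle `(χ, ψ, F)` (given as lifts along
`i`), a pair `(β, α) ∈ Aut(h,S) × Aut(g,N)` is inducible if and only if there is a
linear map `λ : g → h` satisfying identities (1)-(3). -/
theorem stmt_8 {k g h e : Type*} [Field k]
    [LieRing g] [LieAlgebra k g] [LieRing h] [LieAlgebra k h]
    [LieRing e] [LieAlgebra k e]
    (N : g →ₗ[k] g) (S : h →ₗ[k] h) (U : e →ₗ[k] e)
    (hN : ∀ x y : g, ⁅N x, N y⁆ = N (⁅N x, y⁆ + ⁅x, N y⁆ - N ⁅x, y⁆))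
    (hS : ∀ a b : h, ⁅S a, S b⁆ = S (⁅S a, b⁆ + ⁅a, S b⁆ - S ⁅a, b⁆))
    (hU : ∀ a b : e, ⁅U a, U b⁆ = U (⁅U a, b⁆ + ⁅a, U b⁆ - U ⁅a, b⁆))
    (i : h →ₗ[k] e) (p : e →ₗ[k] g)
    (hi : ∀ a b : h, i ⁅a, b⁆ = ⁅i a, i b⁆)
    (hp : ∀ a b : e, p ⁅a, b⁆ = ⁅p a, p b⁆)
    (hiInj : Function.Injective i) (hpSurj : Function.Surjective p)
    (hexact : LinearMap.range i = LinearMap.ker p)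
    (hUi : ∀ a : h, U (i a) = i (S a))
    (hpU : ∀ a : e, p (U a) = N (p a))
    -- a section of p and the associated non-abelian 2-cocycle
    (s : g →ₗ[k] e) (hs : ∀ x : g, p (s x) = x)
    (χ : g → g → h) (ψ : g → h → h) (F : g → h)
    (hχ : ∀ x y : g, i (χ x y) = ⁅s x, s y⁆ - s ⁅x, y⁆)
    (hψ : ∀ (x : g) (a : h), i (ψ x a) = ⁅s x, i a⁆)
    (hF : ∀ x : g, i (F x) = U (s x) - s (N x))
    -- (β, α) ∈ Aut(h, S) × Aut(g, N)
    (β : h ≃ₗ[k] h) (α : g ≃ₗ[k] g)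
    (hβLie : ∀ a b : h, β ⁅a, b⁆ = ⁅β a, β b⁆)
    (hβS : ∀ a : h, β (S a) = S (β a))
    (hαLie : ∀ x y : g, α ⁅x, y⁆ = ⁅α x, α y⁆)
    (hαN : ∀ x : g, α (N x) = N (α x)) :
    -- (β, α) is inducible
    (∃ γ : e →ₗ[k] e,
        (∀ a b : e, γ ⁅a, b⁆ = ⁅γ a, γ b⁆) ∧
        Function.Bijective γ ∧
        (∀ a : e, γ (U a) = U (γ a)) ∧
        (∀ a : h, γ (i a) = i (β a)) ∧
        (∀ x : g, p (γ (s x)) = α x))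
    ↔
    -- if and only if a linear map λ as in (1)-(3) exists
    (∃ lam : g →ₗ[k] h,
        (∀ (x : g) (a : h), β (ψ x a) - ψ (α x) (β a) = ⁅lam x, β a⁆) ∧
        (∀ x y : g, β (χ x y) - χ (α x) (α y)
            = ψ (α x) (lam y) - ψ (α y) (lam x) - lam ⁅x, y⁆ + ⁅lam x, lam y⁆) ∧
        (∀ x : g, β (F x) - F (α x) = S (lam x) - lam (N x))) := by
  -- preliminaries: retraction r with i (r a) = a - s (p a)
  have hpi : ∀ a : h, p (i a) = 0 := by
    intro a
    have : i a ∈ LinearMap.ker p := by rw [← hexact]; exact LinearMap.mem_range_self i a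
    exact this
  have hmem : ∀ a : e, ((LinearMap.id - s ∘ₗ p : e →ₗ[k] e)) a ∈ LinearMap.range i := by
    intro a; rw [hexact]; simp [hs]
  set iE : h ≃ₗ[k] LinearMap.range i := LinearEquiv.ofInjective i hiInj with hiE
  have hiEsymm : ∀ y : LinearMap.range i, i (iE.symm y) = (y : e) := by
    intro y
    conv_rhs => rw [← iE.apply_symm_apply y]
    exact (LinearEquiv.ofInjective_apply i _).symm
  obtain ⟨r, hir⟩ : ∃ r : e →ₗ[k] h, ∀ a : e, i (r a) = a - s (p a) := by
    refine ⟨iE.symm.toLinearMap ∘ₗ (LinearMap.codRestrict (LinearMap.range i)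
      ((LinearMap.id - s ∘ₗ p : e →ₗ[k] e)) hmem), ?_⟩
    intro a
    simp [hiEsymm]
  have hri : ∀ u : h, r (i u) = u := fun u => hiInj (by rw [hir]; simp [hpi])
  have hrs : ∀ x : g, r (s x) = 0 := fun x => hiInj (by rw [hir, hs]; simp)
  have hdecomp : ∀ a : e, i (r a) + s (p a) = a := fun a => by rw [hir]; abel
  -- master bracket formula
  have hbr : ∀ (u v : h) (x y : g),
      ⁅i u + s x, i v + s y⁆ = i (⁅u, v⁆ + ψ x v - ψ y u + χ x y) + s ⁅x, y⁆ := by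
    intro u v x y
    have e1 : ⁅i u, s y⁆ = -i (ψ y u) := by rw [hψ, ← lie_skew]
    have e2 : ⁅s x, s y⁆ = i (χ x y) + s ⁅x, y⁆ := by rw [hχ]; abel
    rw [add_lie, lie_add, lie_add, ← hi, ← hψ, e1, e2]
    simp only [map_add, map_sub]
    abel
  have hψadd : ∀ (x : g) (a b : h), ψ x (a + b) = ψ x a + ψ x b := fun x a b =>
    hiInj (by rw [map_add, hψ, hψ, hψ, map_add, lie_add])
  constructor
  · -- forward direction
    rintro ⟨γ, hγLie, hγBij, hγU, hγi, hγs⟩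
    refine ⟨r ∘ₗ (γ ∘ₗ s - s ∘ₗ (α : g →ₗ[k] g)), ?_, ?_, ?_⟩
    all_goals
      have hilam : ∀ x : g, i ((r ∘ₗ (γ ∘ₗ s - s ∘ₗ (α : g →ₗ[k] g))) x)
          = γ (s x) - s (α x) := by
        intro x
        have hx : (r ∘ₗ (γ ∘ₗ s - s ∘ₗ (α : g →ₗ[k] g))) x = r (γ (s x) - s (α x)) := by
          simp
        rw [hx, hir]
        simp [map_sub, hγs, hs]
      have hγsx : ∀ x : g, γ (s x)
          = i ((r ∘ₗ (γ ∘ₗ s - s ∘ₗ (α : g →ₗ[k] g))) x) + s (α x) := by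
        intro x; rw [hilam]; abel
      set lam : g →ₗ[k] h := r ∘ₗ (γ ∘ₗ s - s ∘ₗ (α : g →ₗ[k] g)) with hlam
    · -- identity (1)
      intro x a
      apply hiInj
      have e1 : i (β (ψ x a)) = ⁅i (lam x) + s (α x), i (β a)⁆ := by
        rw [← hγi, hψ, hγLie, hγsx, hγi]
      rw [map_sub, e1, hψ, hi, add_lie]
      abel
    · -- identity (2)
      intro x y
      apply hiInj
      have e2 : i (β (χ x y)) = ⁅i (lam x) + s (α x), i (lam y) + s (α y)⁆
          - (i (lam ⁅x, y⁆) + s (α ⁅x, y⁆)) := by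
        rw [← hγi, hχ, map_sub γ, hγLie, hγsx, hγsx, hγsx]
      rw [map_sub, e2, hχ, hαLie]
      simp only [map_add, map_sub, hψ, hi]
      rw [add_lie, lie_add, lie_add, ← lie_skew (i (lam x)) (s (α y))]
      abel
    · -- identity (3)
      intro x
      apply hiInj
      have e3 : i (β (F x)) = U (i (lam x) + s (α x)) - (i (lam (N x)) + s (α (N x))) := by
        rw [← hγi, hF, map_sub γ, hγU, hγsx, hγsx]
      rw [map_sub, e3, hF, hαN]
      simp only [map_add, map_sub, hUi]
      abel
  · -- backward direction
    rintro ⟨lam, h1, h2, h3⟩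
    have h1' : ∀ (x : g) (a : h), β (ψ x a) = ⁅lam x, β a⁆ + ψ (α x) (β a) := fun x a =>
      sub_eq_iff_eq_add.mp (h1 x a)
    have h2' : ∀ x y : g, β (χ x y) = ψ (α x) (lam y) - ψ (α y) (lam x) - lam ⁅x, y⁆
        + ⁅lam x, lam y⁆ + χ (α x) (α y) := fun x y => sub_eq_iff_eq_add.mp (h2 x y)
    have h3' : ∀ x : g, β (F x) = S (lam x) - lam (N x) + F (α x) := fun x =>
      sub_eq_iff_eq_add.mp (h3 x)
    set γ : e →ₗ[k] e := i ∘ₗ ((β : h →ₗ[k] h) ∘ₗ r) + i ∘ₗ (lam ∘ₗ p)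
      + s ∘ₗ ((α : g →ₗ[k] g) ∘ₗ p) with hγdef
    have hγa : ∀ a : e, γ a = i (β (r a) + lam (p a)) + s (α (p a)) := by
      intro a
      rw [hγdef]
      simp only [LinearMap.add_apply, LinearMap.comp_apply, LinearEquiv.coe_coe, map_add]
    have hγform : ∀ (u : h) (x : g), γ (i u + s x) = i (β u + lam x) + s (α x) := by
      intro u x
      rw [hγa]
      simp [hri, hrs, hpi, hs]
    have hUs : ∀ x : g, U (s x) = i (F x) + s (N x) := fun x => by rw [hF]; abel
    -- the key cocycle computation
    have key : ∀ (u v : h) (x y : g),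
        β (⁅u, v⁆ + ψ x v - ψ y u + χ x y) + lam ⁅x, y⁆
        = ⁅β u + lam x, β v + lam y⁆ + ψ (α x) (β v + lam y)
          - ψ (α y) (β u + lam x) + χ (α x) (α y) := by
      intro u v x y
      rw [map_add, map_sub, map_add, hβLie, h1', h1', h2', hψadd, hψadd,
        add_lie, lie_add, lie_add, ← lie_skew (β u) (lam y)]
      abel
    have hγLie : ∀ a b : e, γ ⁅a, b⁆ = ⁅γ a, γ b⁆ := by
      intro a b
      conv_lhs => rw [← hdecomp a, ← hdecomp b]
      conv_rhs => rw [← hdecomp a, ← hdecomp b]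
      rw [hbr, hγform, hγform, hγform, hbr, key, ← hαLie]
    have hγU : ∀ a : e, γ (U a) = U (γ a) := by
      intro a
      have l1 : γ (U a) = i (β (S (r a)) + β (F (p a)) + lam (N (p a))) + s (α (N (p a))) := by
        conv_lhs => rw [← hdecomp a]
        rw [map_add U, hUi, hUs, ← add_assoc, ← map_add i, hγform, map_add β]
      have l2 : U (γ a) = i (S (β (r a)) + S (lam (p a)) + F (α (p a))) + s (N (α (p a))) := by
        conv_lhs => rw [← hdecomp a]
        rw [hγform, map_add U, hUi, hUs, map_add S, ← add_assoc, ← map_add i]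
      rw [l1, l2]
      simp only [map_add, map_sub, hβS, h3', hαN]
      abel
    have hγi : ∀ a : h, γ (i a) = i (β a) := by
      intro a
      rw [hγa]
      simp [hri, hpi]
    have hpγ : ∀ a : e, p (γ a) = α (p a) := by
      intro a
      rw [hγa]
      simp [hpi, hs]
    -- inverse
    set δ : e →ₗ[k] e := i ∘ₗ ((β.symm : h →ₗ[k] h) ∘ₗ r)
      - i ∘ₗ ((β.symm : h →ₗ[k] h) ∘ₗ (lam ∘ₗ ((α.symm : g →ₗ[k] g) ∘ₗ p)))
      + s ∘ₗ ((α.symm : g →ₗ[k] g) ∘ₗ p) with hδdef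
    have hδa : ∀ a : e, δ a = i (β.symm (r a) - β.symm (lam (α.symm (p a))))
        + s (α.symm (p a)) := by
      intro a
      rw [hδdef]
      simp only [LinearMap.add_apply, LinearMap.sub_apply, LinearMap.comp_apply,
        LinearEquiv.coe_coe, map_sub]
    have hrγ : ∀ a : e, r (γ a) = β (r a) + lam (p a) := by
      intro a; rw [hγa]; simp [hri, hrs]
    have hrδ : ∀ a : e, r (δ a) = β.symm (r a) - β.symm (lam (α.symm (p a))) := by
      intro a; rw [hδa]; simp [hri, hrs]
    have hpδ : ∀ a : e, p (δ a) = α.symm (p a) := by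
      intro a; rw [hδa]; simp [hpi, hs]
    have hleft : ∀ a : e, δ (γ a) = a := by
      intro a
      rw [hδa, hrγ, hpγ]
      simp only [LinearEquiv.symm_apply_apply, map_add, map_sub]
      conv_rhs => rw [← hdecomp a]
      abel
    have hright : ∀ a : e, γ (δ a) = a := by
      intro a
      rw [hγa, hrδ, hpδ]
      simp only [LinearEquiv.apply_symm_apply, map_sub, map_add]
      conv_rhs => rw [← hdecomp a]
      abel
    refine ⟨γ, hγLie, ⟨Function.LeftInverse.injective hleft,
      Function.RightInverse.surjective hright⟩, hγU, hγi, fun x => by rw [hpγ, hs]⟩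
end

section
/- Let (χ, ψ, F) be a non-abelian 2-cocycle of a Nijenhuis Lie algebra (g, [·,·]_g, N) with values in a Nijenhuis Lie algebra (h, [·,·]_h, S), and let (β, α) ∈ Aut(h, S) × Aut(g, N). Then the triple (χ_{(β,α)}, ψ_{(β,α)}, F_{(β,α)}) defined by χ_{(β,α)}(x,y) := β(χ(α⁻¹ x, α⁻¹ y)), (ψ_{(β,α)})_x h := β(ψ_{α⁻¹ x}(β⁻¹ h)), and F_{(β,α)}(x) := β(F(α⁻¹ x)) is also a non-abelian 2-cocycle of (g, N) with values in (h, S). -/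
/-- If `(χ, ψ, F)` is a non-abelian 2-cocycle of `(g, N)` with values in
`(h, S)` and `(β, α) ∈ Aut(h,S) × Aut(g,N)`, then the transformed triple
`(χ_{(β,α)}, ψ_{(β,α)}, F_{(β,α)})` with `χ_{(β,α)}(x,y) = β(χ(α⁻¹x, α⁻¹y))`,
`(ψ_{(β,α)})_x h = β(ψ_{α⁻¹x}(β⁻¹ h))`, `F_{(β,α)}(x) = β(F(α⁻¹ x))` is also a
non-abelian 2-cocycle. -/
theorem stmt_9 {k g h : Type*} [Field k]
    [LieRing g] [LieAlgebra k g] [LieRing h] [LieAlgebra k h]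
    (N : g →ₗ[k] g) (S : h →ₗ[k] h)
    (hN : ∀ x y : g, ⁅N x, N y⁆ = N (⁅N x, y⁆ + ⁅x, N y⁆ - N ⁅x, y⁆))
    (hS : ∀ a b : h, ⁅S a, S b⁆ = S (⁅S a, b⁆ + ⁅a, S b⁆ - S ⁅a, b⁆))
    (χ : g → g → h) (ψ : g → h → h) (F : g → h)
    (hc : IsNijNonabelian2Cocycle k (⇑N) (⇑S) χ ψ F)
    (β : h ≃ₗ[k] h) (α : g ≃ₗ[k] g)
    (hβLie : ∀ a b : h, β ⁅a, b⁆ = ⁅β a, β b⁆)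
    (hβS : ∀ a : h, β (S a) = S (β a))
    (hαLie : ∀ x y : g, α ⁅x, y⁆ = ⁅α x, α y⁆)
    (hαN : ∀ x : g, α (N x) = N (α x)) :
    IsNijNonabelian2Cocycle k (⇑N) (⇑S)
      (fun x y => β (χ (α.symm x) (α.symm y)))
      (fun x a => β (ψ (α.symm x) (β.symm a)))
      (fun x => β (F (α.symm x))) := by
  obtain ⟨h1, h2, h3, h4, h5, h6, h7, h8, h9, h10, h11⟩ := hc
  have hαLie' : ∀ x y : g, α.symm ⁅x, y⁆ = ⁅α.symm x, α.symm y⁆ := by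
    intro x y
    apply α.injective
    rw [α.apply_symm_apply, hαLie, α.apply_symm_apply, α.apply_symm_apply]
  have hαN' : ∀ x : g, α.symm (N x) = N (α.symm x) := by
    intro x
    apply α.injective
    rw [α.apply_symm_apply, hαN, α.apply_symm_apply]
  have hβLie' : ∀ a b : h, β.symm ⁅a, b⁆ = ⁅β.symm a, β.symm b⁆ := by
    intro a b
    apply β.injective
    rw [β.apply_symm_apply, hβLie, β.apply_symm_apply, β.apply_symm_apply]
  have hβS' : ∀ a : h, β.symm (S a) = S (β.symm a) := by
    intro a
    apply β.injective
    rw [β.apply_symm_apply, hβS, β.apply_symm_apply]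
  refine ⟨?_, ?_, ?_, ?_, ?_, ?_, ?_, ?_, ?_, ?_, ?_⟩
  · intro x
    exact ⟨fun a b => by simp [(h1 _).map_add], fun c a => by simp [(h1 _).map_smul]⟩
  · intro y
    exact ⟨fun a b => by simp [(h2 _).map_add], fun c a => by simp [(h2 _).map_smul]⟩
  · intro x
    exact ⟨fun a b => by simp [(h3 _).map_add], fun c a => by simp [(h3 _).map_smul]⟩
  · intro a
    exact ⟨fun x y => by simp [(h4 _).map_add], fun c x => by simp [(h4 _).map_smul]⟩
  · exact ⟨fun a b => by simp [h5.map_add], fun c a => by simp [h5.map_smul]⟩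
  · intro x
    simp [h6]
  · intro x a b
    have := h7 (α.symm x) (β.symm a) (β.symm b)
    apply_fun β at this
    simp only [map_add, hβLie, β.apply_symm_apply] at this
    simpa [hβLie'] using this
  · intro x y a
    have := h8 (α.symm x) (α.symm y) (β.symm a)
    apply_fun β at this
    rw [map_sub, map_sub, hβLie, β.apply_symm_apply] at this
    simpa [β.symm_apply_apply, hαLie'] using this
  · intro x y z
    have := h9 (α.symm x) (α.symm y) (α.symm z)
    apply_fun β at this
    simp only [map_add, map_sub, map_zero] at this
    simpa [β.symm_apply_apply, hαLie'] using this
  · intro x a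
    have := h10 (α.symm x) (β.symm a)
    apply_fun β at this
    simp only [map_add, map_sub, hβS, hβLie, β.apply_symm_apply] at this
    simpa [β.symm_apply_apply, hαN', hβS'] using this
  · intro x y
    have := h11 (α.symm x) (α.symm y)
    apply_fun β at this
    simp only [map_add, map_sub, map_zero, hβS, hβLie] at this
    simpa [β.symm_apply_apply, hαN', hαLie', hβS'] using this
end

section
/- Let 0 → (h, [·,·]_h, S) →ⁱ (e, [·,·]_e, U) →ᵖ (g, [·,·]_g, N) → 0 be a non-abelian extension, let s and s̃ be two sections of p with associated non-abelian 2-cocycles (χ, ψ, F) and (χ̃, ψ̃, F̃), and let (β, α) ∈ Aut(h, S) × Aut(g, N). Set φ := s − s̃ (taking values in h). Then the non-abelian 2-cocycles (χ_{(β,α)}, ψ_{(β,α)}, F_{(β,α)}) and (χ̃_{(β,α)}, ψ̃_{(β,α)}, F̃_{(β,α)}) are equivalent via the map β ∘ φ ∘ α⁻¹ : g → h; consequently, the equivalence class of the difference (χ_{(β,α)}, ψ_{(β,α)}, F_{(β,α)}) − (χ, ψ, F) does not depend on the choice of section. -/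
/-- Let `s`, `s̃` be two sections of a non-abelian extension of
Nijenhuis Lie algebras, with associated non-abelian 2-cocycles `(χ, ψ, F)` and
`(χ̃, ψ̃, F̃)`, and let `(β, α) ∈ Aut(h,S) × Aut(g,N)`. Then `φ := s - s̃` takes values
in `h` and the transformed cocycles `(χ_{(β,α)}, ψ_{(β,α)}, F_{(β,α)})` and
`(χ̃_{(β,α)}, ψ̃_{(β,α)}, F̃_{(β,α)})` are equivalent via `β ∘ φ ∘ α⁻¹`; consequently
the class of the difference with the untransformed cocycle is section-independent. -/
theorem stmt_10 {k g h e : Type*} [Field k]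
    [LieRing g] [LieAlgebra k g] [LieRing h] [LieAlgebra k h]
    [LieRing e] [LieAlgebra k e]
    (N : g →ₗ[k] g) (S : h →ₗ[k] h) (U : e →ₗ[k] e)
    (hN : ∀ x y : g, ⁅N x, N y⁆ = N (⁅N x, y⁆ + ⁅x, N y⁆ - N ⁅x, y⁆))
    (hS : ∀ a b : h, ⁅S a, S b⁆ = S (⁅S a, b⁆ + ⁅a, S b⁆ - S ⁅a, b⁆))
    (hU : ∀ a b : e, ⁅U a, U b⁆ = U (⁅U a, b⁆ + ⁅a, U b⁆ - U ⁅a, b⁆))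
    (i : h →ₗ[k] e) (p : e →ₗ[k] g)
    (hi : ∀ a b : h, i ⁅a, b⁆ = ⁅i a, i b⁆)
    (hp : ∀ a b : e, p ⁅a, b⁆ = ⁅p a, p b⁆)
    (hiInj : Function.Injective i) (hpSurj : Function.Surjective p)
    (hexact : LinearMap.range i = LinearMap.ker p)
    (hUi : ∀ a : h, U (i a) = i (S a))
    (hpU : ∀ a : e, p (U a) = N (p a))
    -- two sections of p and their associated non-abelian 2-cocycles
    (s st : g →ₗ[k] e) (hs : ∀ x : g, p (s x) = x) (hst : ∀ x : g, p (st x) = x)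
    (χ : g → g → h) (ψ : g → h → h) (F : g → h)
    (hχ : ∀ x y : g, i (χ x y) = ⁅s x, s y⁆ - s ⁅x, y⁆)
    (hψ : ∀ (x : g) (a : h), i (ψ x a) = ⁅s x, i a⁆)
    (hF : ∀ x : g, i (F x) = U (s x) - s (N x))
    (χt : g → g → h) (ψt : g → h → h) (Ft : g → h)
    (hχt : ∀ x y : g, i (χt x y) = ⁅st x, st y⁆ - st ⁅x, y⁆)
    (hψt : ∀ (x : g) (a : h), i (ψt x a) = ⁅st x, i a⁆)
    (hFt : ∀ x : g, i (Ft x) = U (st x) - st (N x))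
    -- (β, α) ∈ Aut(h, S) × Aut(g, N)
    (β : h ≃ₗ[k] h) (α : g ≃ₗ[k] g)
    (hβLie : ∀ a b : h, β ⁅a, b⁆ = ⁅β a, β b⁆)
    (hβS : ∀ a : h, β (S a) = S (β a))
    (hαLie : ∀ x y : g, α ⁅x, y⁆ = ⁅α x, α y⁆)
    (hαN : ∀ x : g, α (N x) = N (α x)) :
    -- the transformed cocycles
    ∀ χB : g → g → h, χB = (fun x y => β (χ (α.symm x) (α.symm y))) →
    ∀ ψB : g → h → h, ψB = (fun x a => β (ψ (α.symm x) (β.symm a))) →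
    ∀ FB : g → h, FB = (fun x => β (F (α.symm x))) →
    ∀ χtB : g → g → h, χtB = (fun x y => β (χt (α.symm x) (α.symm y))) →
    ∀ ψtB : g → h → h, ψtB = (fun x a => β (ψt (α.symm x) (β.symm a))) →
    ∀ FtB : g → h, FtB = (fun x => β (Ft (α.symm x))) →
    ∃ φ : g → h,
      -- φ is the lift to h of s - s̃
      (∀ x : g, i (φ x) = s x - st x) ∧
      -- the transformed cocycles are equivalent via β ∘ φ ∘ α⁻¹
      (∀ (x : g) (a : h), ψB x a - ψtB x a = ⁅β (φ (α.symm x)), a⁆) ∧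
      (∀ x y : g, χB x y - χtB x y
          = ψtB x (β (φ (α.symm y))) - ψtB y (β (φ (α.symm x)))
            - β (φ (α.symm ⁅x, y⁆)) + ⁅β (φ (α.symm x)), β (φ (α.symm y))⁆) ∧
      (∀ x : g, FB x - FtB x = S (β (φ (α.symm x))) - β (φ (α.symm (N x)))) := by
  intro χB hχB ψB hψB FB hFB χtB hχtB ψtB hψtB FtB hFtB
  have hker : ∀ x : g, ∃ a : h, i a = s x - st x := by
    intro x
    have hx : s x - st x ∈ LinearMap.ker p := by
      simp [LinearMap.mem_ker, map_sub, hs, hst]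
    rw [← hexact] at hx
    exact hx
  choose φ hφ using hker
  have hαLie' : ∀ x y : g, α.symm ⁅x, y⁆ = ⁅α.symm x, α.symm y⁆ := by
    intro x y
    apply α.injective
    rw [α.apply_symm_apply, hαLie, α.apply_symm_apply, α.apply_symm_apply]
  have hαN' : ∀ x : g, α.symm (N x) = N (α.symm x) := by
    intro x
    apply α.injective
    rw [α.apply_symm_apply, hαN, α.apply_symm_apply]
  have hψd : ∀ (x : g) (a : h), ψ x a - ψt x a = ⁅φ x, a⁆ := by
    intro x a
    apply hiInj
    rw [map_sub, hψ, hψt, hi, hφ, sub_lie]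
  have hχd : ∀ x y : g, χ x y - χt x y
      = ψt x (φ y) - ψt y (φ x) - φ ⁅x, y⁆ + ⁅φ x, φ y⁆ := by
    intro x y
    apply hiInj
    simp only [map_sub, map_add, hχ, hχt, hψt, hi, hφ]
    rw [← lie_skew (st y) (s x - st x)]
    simp only [sub_lie, lie_sub]
    abel
  have hFd : ∀ x : g, F x - Ft x = S (φ x) - φ (N x) := by
    intro x
    apply hiInj
    rw [map_sub, hF, hFt, map_sub, ← hUi, hφ, hφ, map_sub]
    abel
  refine ⟨φ, hφ, ?_, ?_, ?_⟩
  · intro x a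
    rw [hψB, hψtB, ← map_sub, hψd, hβLie, β.apply_symm_apply]
  · intro x y
    simp only [hχB, hχtB, hψtB, β.symm_apply_apply]
    rw [← map_sub, hχd, hαLie']
    simp only [map_add, map_sub, hβLie]
  · intro x
    rw [hFB, hFtB, ← map_sub, hFd, hαN']
    rw [map_sub, hβS]
end

section
/- Let 0 → (h, [·,·]_h, S) →ⁱ (e, [·,·]_e, U) →ᵖ (g, [·,·]_g, N) → 0 be a non-abelian extension of Nijenhuis Lie algebras, s a section of p, and (χ, ψ, F) the associated non-abelian 2-cocycle. Then a pair (β, α) ∈ Aut(h, S) × Aut(g, N) is inducible if and only if the non-abelian 2-cocycles (χ_{(β,α)}, ψ_{(β,α)}, F_{(β,α)}) and (χ, ψ, F) are equivalent via some linear map φ : g → h (i.e. the Wells class W(β, α) vanishes). -/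
/-- Auxiliary pure Lie-ring identity used for the cocycle computation. -/
private lemma lie_aux {L : Type*} [LieRing L] (Ax Ay sx sy Az sz : L) :
    (⁅Ax, Ay⁆ - Az) - (⁅sx, sy⁆ - sz)
      = ⁅sx, Ay - sy⁆ - ⁅sy, Ax - sx⁆ - (Az - sz) + ⁅Ax - sx, Ay - sy⁆ := by
  have h1 : ⁅sy, Ax⁆ = -⁅Ax, sy⁆ := (lie_skew sy Ax).symm
  have h2 : ⁅sy, sx⁆ = -⁅sx, sy⁆ := (lie_skew sy sx).symm
  simp only [lie_sub, sub_lie, h1, h2]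
  abel

/-- Given a non-abelian extension of Nijenhuis Lie algebras, a section
`s` and the associated non-abelian 2-cocycle `(χ, ψ, F)`, a pair
`(β, α) ∈ Aut(h,S) × Aut(g,N)` is inducible if and only if the transformed cocycle
`(χ_{(β,α)}, ψ_{(β,α)}, F_{(β,α)})` is equivalent to `(χ, ψ, F)` via some linear map
`φ : g → h` (i.e. the Wells class `W(β, α)` vanishes). -/
theorem stmt_11 {k g h e : Type*} [Field k]
    [LieRing g] [LieAlgebra k g] [LieRing h] [LieAlgebra k h]
    [LieRing e] [LieAlgebra k e]
    (N : g →ₗ[k] g) (S : h →ₗ[k] h) (U : e →ₗ[k] e)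
    (hN : ∀ x y : g, ⁅N x, N y⁆ = N (⁅N x, y⁆ + ⁅x, N y⁆ - N ⁅x, y⁆))
    (hS : ∀ a b : h, ⁅S a, S b⁆ = S (⁅S a, b⁆ + ⁅a, S b⁆ - S ⁅a, b⁆))
    (hU : ∀ a b : e, ⁅U a, U b⁆ = U (⁅U a, b⁆ + ⁅a, U b⁆ - U ⁅a, b⁆))
    (i : h →ₗ[k] e) (p : e →ₗ[k] g)
    (hi : ∀ a b : h, i ⁅a, b⁆ = ⁅i a, i b⁆)
    (hp : ∀ a b : e, p ⁅a, b⁆ = ⁅p a, p b⁆)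
    (hiInj : Function.Injective i) (hpSurj : Function.Surjective p)
    (hexact : LinearMap.range i = LinearMap.ker p)
    (hUi : ∀ a : h, U (i a) = i (S a))
    (hpU : ∀ a : e, p (U a) = N (p a))
    -- a section of p and the associated non-abelian 2-cocycle
    (s : g →ₗ[k] e) (hs : ∀ x : g, p (s x) = x)
    (χ : g → g → h) (ψ : g → h → h) (F : g → h)
    (hχ : ∀ x y : g, i (χ x y) = ⁅s x, s y⁆ - s ⁅x, y⁆)
    (hψ : ∀ (x : g) (a : h), i (ψ x a) = ⁅s x, i a⁆)
    (hF : ∀ x : g, i (F x) = U (s x) - s (N x))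
    -- (β, α) ∈ Aut(h, S) × Aut(g, N)
    (β : h ≃ₗ[k] h) (α : g ≃ₗ[k] g)
    (hβLie : ∀ a b : h, β ⁅a, b⁆ = ⁅β a, β b⁆)
    (hβS : ∀ a : h, β (S a) = S (β a))
    (hαLie : ∀ x y : g, α ⁅x, y⁆ = ⁅α x, α y⁆)
    (hαN : ∀ x : g, α (N x) = N (α x)) :
    -- (β, α) is inducible
    (∃ γ : e →ₗ[k] e,
        (∀ a b : e, γ ⁅a, b⁆ = ⁅γ a, γ b⁆) ∧
        Function.Bijective γ ∧
        (∀ a : e, γ (U a) = U (γ a)) ∧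
        (∀ a : h, γ (i a) = i (β a)) ∧
        (∀ x : g, p (γ (s x)) = α x))
    ↔
    -- iff the transformed cocycle is equivalent to (χ, ψ, F) via some φ
    (∃ φ : g →ₗ[k] h,
        (∀ (x : g) (a : h),
          β (ψ (α.symm x) (β.symm a)) - ψ x a = ⁅φ x, a⁆) ∧
        (∀ x y : g,
          β (χ (α.symm x) (α.symm y)) - χ x y
            = ψ x (φ y) - ψ y (φ x) - φ ⁅x, y⁆ + ⁅φ x, φ y⁆) ∧
        (∀ x : g, β (F (α.symm x)) - F x = S (φ x) - φ (N x))) := by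
  classical
  -- basic facts
  have hpi : ∀ u : h, p (i u) = 0 := by
    intro u
    have : i u ∈ LinearMap.ker p := hexact ▸ LinearMap.mem_range_self i u
    simpa using this
  have hαsymmLie : ∀ x y : g, α.symm ⁅x, y⁆ = ⁅α.symm x, α.symm y⁆ := by
    intro x y
    apply α.injective
    rw [α.apply_symm_apply, hαLie, α.apply_symm_apply, α.apply_symm_apply]
  have hαsymmN : ∀ x : g, α.symm (N x) = N (α.symm x) := by
    intro x
    apply α.injective
    rw [α.apply_symm_apply, hαN, α.apply_symm_apply]
  -- the retraction r : e → h with i (r a) = a - s (p a)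
  set q : e →ₗ[k] e := LinearMap.id - s ∘ₗ p with hqdef
  have hq : ∀ a : e, q a ∈ LinearMap.range i := by
    intro a
    rw [hexact, LinearMap.mem_ker]
    simp [hqdef, hs]
  set r : h →ₗ[k] h := LinearMap.id with hrtriv  -- dummy to please elaborator ordering
  clear hrtriv
  set R : e →ₗ[k] h :=
    (LinearEquiv.ofInjective i hiInj).symm.toLinearMap ∘ₗ
      LinearMap.codRestrict (LinearMap.range i) q hq with hRdef
  have hir : ∀ a : e, i (R a) = a - s (p a) := by
    intro a
    have h2 : i (R a) = q a :=
      congrArg Subtype.val ((LinearEquiv.ofInjective i hiInj).apply_symm_apply ⟨q a, hq a⟩)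
    rw [h2]
    simp [hqdef]
  have hri : ∀ u : h, R (i u) = u := by
    intro u
    apply hiInj
    rw [hir, hpi, map_zero, sub_zero]
  have hrs : ∀ x : g, R (s x) = 0 := by
    intro x
    apply hiInj
    rw [hir, hs, map_zero, sub_self]
  have hdec : ∀ a : e, a = s (p a) + i (R a) := by
    intro a
    rw [hir]
    abel
  have hsi : ∀ (z : g) (w : h), ⁅s z, i w⁆ = i (ψ z w) := fun z w => (hψ z w).symm
  have his : ∀ (z : g) (w : h), ⁅i w, s z⁆ = -i (ψ z w) := by
    intro z w
    rw [← lie_skew, hψ]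
  have hbr : ∀ x y : g, ⁅s x, s y⁆ = s ⁅x, y⁆ + i (χ x y) := by
    intro x y
    rw [hχ]
    abel
  have hUs : ∀ x : g, U (s x) = s (N x) + i (F x) := by
    intro x
    rw [hF]
    abel
  constructor
  · -- inducible → equivalence
    rintro ⟨γ, hγLie, hγBij, hγU, hγim, hpγs⟩
    set Φ : g →ₗ[k] h := R ∘ₗ (γ ∘ₗ (s ∘ₗ (α.symm : g ≃ₗ[k] g).toLinearMap) - s) with hΦdef
    have hiΦ : ∀ x : g, i (Φ x) = γ (s (α.symm x)) - s x := by
      intro x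
      have h1 : Φ x = R (γ (s (α.symm x)) - s x) := rfl
      have hpz : p (γ (s (α.symm x)) - s x) = 0 := by
        rw [map_sub, hpγs, hs, α.apply_symm_apply, sub_self]
      rw [h1, hir, hpz, map_zero, sub_zero]
    refine ⟨Φ, ?_, ?_, ?_⟩
    · intro x a
      apply hiInj
      have e1 : i (β (ψ (α.symm x) (β.symm a))) = ⁅γ (s (α.symm x)), i a⁆ := by
        rw [← hγim, hψ, hγLie, hγim, β.apply_symm_apply]
      calc i (β (ψ (α.symm x) (β.symm a)) - ψ x a)
          = ⁅γ (s (α.symm x)), i a⁆ - ⁅s x, i a⁆ := by rw [map_sub, e1, hψ]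
        _ = ⁅γ (s (α.symm x)) - s x, i a⁆ := (sub_lie _ _ _).symm
        _ = ⁅i (Φ x), i a⁆ := by rw [hiΦ]
        _ = i ⁅Φ x, a⁆ := (hi _ _).symm
    · intro x y
      apply hiInj
      have e1 : i (β (χ (α.symm x) (α.symm y)))
          = ⁅γ (s (α.symm x)), γ (s (α.symm y))⁆ - γ (s (α.symm ⁅x, y⁆)) := by
        rw [← hγim, hχ, map_sub, hγLie, hαsymmLie]
      rw [map_sub, map_add, map_sub, map_sub, e1, hχ, hψ, hψ, hi, hiΦ, hiΦ, hiΦ]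
      exact lie_aux _ _ _ _ _ _
    · intro x
      apply hiInj
      have e1 : i (β (F (α.symm x))) = U (γ (s (α.symm x))) - γ (s (α.symm (N x))) := by
        rw [← hγim, hF, map_sub, hγU, hαsymmN]
      rw [map_sub, map_sub, e1, hF, hiΦ]
      have e2 : i (S (Φ x)) = U (i (Φ x)) := (hUi _).symm
      rw [e2, hiΦ, map_sub]
      abel
  · -- equivalence → inducible
    rintro ⟨φ, h1, h2, h3⟩
    set γ : e →ₗ[k] e :=
      (s ∘ₗ (α : g ≃ₗ[k] g).toLinearMap ∘ₗ p) + (i ∘ₗ (β : h ≃ₗ[k] h).toLinearMap ∘ₗ R)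
        + (i ∘ₗ φ ∘ₗ (α : g ≃ₗ[k] g).toLinearMap ∘ₗ p) with hγdef
    have hγs : ∀ x : g, γ (s x) = s (α x) + i (φ (α x)) := by
      intro x
      simp only [hγdef, LinearMap.add_apply, LinearMap.sub_apply, LinearMap.coe_comp, Function.comp_apply, LinearEquiv.coe_coe, hs, hrs, map_zero, add_zero]
    have hγi' : ∀ u : h, γ (i u) = i (β u) := by
      intro u
      simp only [hγdef, LinearMap.add_apply, LinearMap.sub_apply, LinearMap.coe_comp, Function.comp_apply, LinearEquiv.coe_coe, hpi, hri, map_zero, zero_add, add_zero]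
    -- the three structure cases for the Lie bracket
    have L1 : ∀ u v : h, γ ⁅i u, i v⁆ = ⁅γ (i u), γ (i v)⁆ := by
      intro u v
      rw [← hi, hγi', hγi', hγi', hβLie, hi]
    have L2 : ∀ (x : g) (u : h), γ ⁅s x, i u⁆ = ⁅γ (s x), γ (i u)⁆ := by
      intro x u
      have key := h1 (α x) (β u)
      rw [α.symm_apply_apply, β.symm_apply_apply] at key
      have key' : β (ψ x u) = ψ (α x) (β u) + ⁅φ (α x), β u⁆ := by
        rw [← key]; abel
      rw [hsi, hγi', hγi', hγs, add_lie, hsi, ← hi, key', map_add]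
    have L2' : ∀ (x : g) (u : h), γ ⁅i u, s x⁆ = ⁅γ (i u), γ (s x)⁆ := by
      intro x u
      have : ⁅i u, s x⁆ = -⁅s x, i u⁆ := (lie_skew _ _).symm
      rw [this, map_neg, L2, ← lie_skew, neg_neg]
    have L3 : ∀ x y : g, γ ⁅s x, s y⁆ = ⁅γ (s x), γ (s y)⁆ := by
      intro x y
      have key := h2 (α x) (α y)
      rw [α.symm_apply_apply, α.symm_apply_apply] at key
      have key' : β (χ x y) = ψ (α x) (φ (α y)) - ψ (α y) (φ (α x)) - φ ⁅α x, α y⁆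
          + ⁅φ (α x), φ (α y)⁆ + χ (α x) (α y) := by
        rw [← key]; abel
      calc γ ⁅s x, s y⁆ = γ (s ⁅x, y⁆) + γ (i (χ x y)) := by rw [hbr, map_add]
        _ = s (α ⁅x, y⁆) + i (φ (α ⁅x, y⁆)) + i (β (χ x y)) := by rw [hγs, hγi']
        _ = ⁅γ (s x), γ (s y)⁆ := by
            rw [hγs, hγs, add_lie, lie_add, lie_add, hbr, hsi, his, ← hi, hαLie, key']
            simp only [map_add, map_sub]
            abel
    have LLie : ∀ a b : e, γ ⁅a, b⁆ = ⁅γ a, γ b⁆ := by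
      intro a b
      obtain ⟨x, u, rfl⟩ : ∃ x u, a = s x + i u := ⟨p a, R a, hdec a⟩
      obtain ⟨y, v, rfl⟩ : ∃ y v, b = s y + i v := ⟨p b, R b, hdec b⟩
      simp only [add_lie, lie_add, map_add, L1, L2, L2', L3]
    -- commutation with U
    have LU : ∀ a : e, γ (U a) = U (γ a) := by
      intro a
      obtain ⟨x, u, rfl⟩ : ∃ x u, a = s x + i u := ⟨p a, R a, hdec a⟩
      have c1 : γ (U (s x)) = U (γ (s x)) := by
        have key := h3 (α x)
        rw [α.symm_apply_apply] at key
        have key' : β (F x) = S (φ (α x)) - φ (N (α x)) + F (α x) := by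
          rw [← key]; abel
        rw [hUs, map_add, hγs, hγi', hγs, map_add, hUs, hUi, key']
        rw [hαN x]
        simp only [map_add, map_sub]
        abel
      have c2 : γ (U (i u)) = U (γ (i u)) := by
        rw [hUi, hγi', hγi', hUi, hβS]
      simp only [map_add, c1, c2]
    -- bijectivity
    set δ : e →ₗ[k] e :=
      (s ∘ₗ (α.symm : g ≃ₗ[k] g).toLinearMap ∘ₗ p)
        + (i ∘ₗ (β.symm : h ≃ₗ[k] h).toLinearMap ∘ₗ R)
        - (i ∘ₗ (β.symm : h ≃ₗ[k] h).toLinearMap ∘ₗ φ ∘ₗ p) with hδdef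
    have hpγ : ∀ a : e, p (γ a) = α (p a) := by
      intro a
      simp only [hγdef, LinearMap.add_apply, LinearMap.sub_apply, LinearMap.coe_comp, Function.comp_apply, LinearEquiv.coe_coe, map_add, hs, hpi, add_zero]
    have hrγ : ∀ a : e, R (γ a) = β (R a) + φ (α (p a)) := by
      intro a
      simp only [hγdef, LinearMap.add_apply, LinearMap.sub_apply, LinearMap.coe_comp, Function.comp_apply, LinearEquiv.coe_coe, map_add, hrs, hri, map_zero, zero_add, add_zero]
    have hδγ : ∀ a : e, δ (γ a) = a := by
      intro a
      have : δ (γ a) = s (α.symm (p (γ a))) + i (β.symm (R (γ a)))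
          - i (β.symm (φ (p (γ a)))) := by
        simp only [hδdef, LinearMap.add_apply, LinearMap.sub_apply, LinearMap.coe_comp, Function.comp_apply, LinearEquiv.coe_coe]
      rw [this, hpγ, hrγ, α.symm_apply_apply, map_add, map_add, β.symm_apply_apply]
      conv_rhs => rw [hdec a]
      abel
    have hγδ : ∀ a : e, γ (δ a) = a := by
      intro a
      have hpδ : p (δ a) = α.symm (p a) := by
        simp only [hδdef, LinearMap.add_apply, LinearMap.sub_apply, LinearMap.coe_comp, Function.comp_apply, LinearEquiv.coe_coe, map_add, map_sub, hs, hpi, add_zero, sub_zero]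
      have hrδ : R (δ a) = β.symm (R a) - β.symm (φ (p a)) := by
        simp only [hδdef, LinearMap.add_apply, LinearMap.sub_apply, LinearMap.coe_comp, Function.comp_apply, LinearEquiv.coe_coe, map_add, map_sub, hrs, hri, map_zero, zero_add]
      have : γ (δ a) = s (α (p (δ a))) + i (β (R (δ a))) + i (φ (α (p (δ a)))) := by
        simp only [hγdef, LinearMap.add_apply, LinearMap.sub_apply, LinearMap.coe_comp, Function.comp_apply, LinearEquiv.coe_coe]
      rw [this, hpδ, hrδ, α.apply_symm_apply, map_sub, map_sub, β.apply_symm_apply,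
        β.apply_symm_apply]
      conv_rhs => rw [hdec a]
      abel
    refine ⟨γ, LLie, Function.bijective_iff_has_inverse.mpr ⟨δ, hδγ, hγδ⟩, LU, hγi', ?_⟩
    intro x
    rw [hγs, map_add, hs, hpi, add_zero]
end

section
/- Let 0 → (V, S) →ⁱ (e, [·,·]_e, U) →ᵖ (g, [·,·]_g, N) → 0 be an abelian extension of the Nijenhuis Lie algebra (g, N) with induced Nijenhuis representation (V, ρ, S), let s be a section of p and (χ, F) the associated 2-cocycle. Then a pair (β, α) ∈ Aut(V, S) × Aut(g, N) is inducible if and only if both: (1) β(ρ_x v) = ρ_{α x}(β v) for all x ∈ g, v ∈ V (i.e. (β, α) is a compatible pair), and (2) there exists a linear map φ : g → V with β(χ(α⁻¹ x, α⁻¹ y)) − χ(x,y) = ρ_x(φ y) − ρ_y(φ x) − φ([x,y]_g) and β(F(α⁻¹ x)) − F(x) = S(φ x) − φ(N x) for all x, y ∈ g. -/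
/-- Given an abelian extension of the Nijenhuis Lie algebra `(g, N)`
by `(V, S)` with induced Nijenhuis representation `(V, ρ, S)`, a section `s` and the
associated 2-cocycle `(χ, F)`, a pair `(β, α) ∈ Aut(V,S) × Aut(g,N)` is inducible if
and only if (1) it is a compatible pair and (2) the transformed 2-cocycle differs
from `(χ, F)` by a coboundary. -/
theorem stmt_12 {k g V e : Type*} [Field k]
    [LieRing g] [LieAlgebra k g] [AddCommGroup V] [Module k V]
    [LieRing e] [LieAlgebra k e]
    (N : g →ₗ[k] g) (S : V →ₗ[k] V) (U : e →ₗ[k] e)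
    (hN : ∀ x y : g, ⁅N x, N y⁆ = N (⁅N x, y⁆ + ⁅x, N y⁆ - N ⁅x, y⁆))
    (hU : ∀ a b : e, ⁅U a, U b⁆ = U (⁅U a, b⁆ + ⁅a, U b⁆ - U ⁅a, b⁆))
    (i : V →ₗ[k] e) (p : e →ₗ[k] g)
    (hab : ∀ u v : V, ⁅i u, i v⁆ = 0)
    (hp : ∀ a b : e, p ⁅a, b⁆ = ⁅p a, p b⁆)
    (hiInj : Function.Injective i) (hpSurj : Function.Surjective p)
    (hexact : LinearMap.range i = LinearMap.ker p)
    (hUi : ∀ v : V, U (i v) = i (S v))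
    (hpU : ∀ a : e, p (U a) = N (p a))
    -- a section of p, the induced Nijenhuis representation and the associated 2-cocycle
    (s : g →ₗ[k] e) (hs : ∀ x : g, p (s x) = x)
    (ρ : g → V → V) (hρ : ∀ (x : g) (v : V), i (ρ x v) = ⁅s x, i v⁆)
    (χ : g → g → V) (F : g → V)
    (hχ : ∀ x y : g, i (χ x y) = ⁅s x, s y⁆ - s ⁅x, y⁆)
    (hF : ∀ x : g, i (F x) = U (s x) - s (N x))
    -- (β, α) ∈ Aut(V, S) × Aut(g, N)
    (β : V ≃ₗ[k] V) (α : g ≃ₗ[k] g)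
    (hβS : ∀ v : V, β (S v) = S (β v))
    (hαLie : ∀ x y : g, α ⁅x, y⁆ = ⁅α x, α y⁆)
    (hαN : ∀ x : g, α (N x) = N (α x)) :
    -- (β, α) is inducible
    (∃ γ : e →ₗ[k] e,
        (∀ a b : e, γ ⁅a, b⁆ = ⁅γ a, γ b⁆) ∧
        Function.Bijective γ ∧
        (∀ a : e, γ (U a) = U (γ a)) ∧
        (∀ v : V, γ (i v) = i (β v)) ∧
        (∀ x : g, p (γ (s x)) = α x))
    ↔
    -- iff (β, α) is a compatible pair and the Wells class vanishes
    ((∀ (x : g) (v : V), β (ρ x v) = ρ (α x) (β v)) ∧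
     (∃ φ : g →ₗ[k] V,
        (∀ x y : g, β (χ (α.symm x) (α.symm y)) - χ x y
            = ρ x (φ y) - ρ y (φ x) - φ ⁅x, y⁆) ∧
        (∀ x : g, β (F (α.symm x)) - F x = S (φ x) - φ (N x)))) := by
  -- a linear retraction of `i`
  obtain ⟨l, hl⟩ := i.exists_leftInverse_of_injective (LinearMap.ker_eq_bot.mpr hiInj)
  have hli : ∀ v : V, l (i v) = v := fun v => LinearMap.congr_fun hl v
  have hpi : ∀ v : V, p (i v) = 0 := by
    intro v
    have hm : i v ∈ LinearMap.ker p := hexact ▸ LinearMap.mem_range_self i v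
    exact hm
  set r : e →ₗ[k] V := l ∘ₗ (LinearMap.id - s ∘ₗ p) with hrdef
  have hr1 : ∀ a : e, i (r a) = a - s (p a) := by
    intro a
    have hmem : a - s (p a) ∈ LinearMap.ker p := by
      simp [LinearMap.mem_ker, hs]
    rw [← hexact] at hmem
    obtain ⟨v, hv⟩ := hmem
    have hra : r a = v := by
      rw [hrdef]
      simp only [LinearMap.comp_apply, LinearMap.sub_apply, LinearMap.id_apply]
      rw [← hv, hli]
    rw [hra, hv]
  have hri : ∀ v : V, r (i v) = v := by
    intro v
    apply hiInj
    rw [hr1, hpi, map_zero, sub_zero]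
  have hrs : ∀ x : g, r (s x) = 0 := by
    intro x
    apply hiInj
    rw [hr1, hs, sub_self, map_zero]
  have hdec : ∀ a : e, a = s (p a) + i (r a) := by
    intro a; rw [hr1]; abel
  have hρadd : ∀ (x : g) (u v : V), ρ x (u + v) = ρ x u + ρ x v := by
    intro x u v
    apply hiInj
    rw [map_add, hρ, hρ, hρ, map_add, lie_add]
  have hαsymmLie : ∀ x y : g, α.symm ⁅x, y⁆ = ⁅α.symm x, α.symm y⁆ := by
    intro x y
    apply α.injective
    rw [hαLie, α.apply_symm_apply, α.apply_symm_apply, α.apply_symm_apply]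
  have hαsymmN : ∀ x : g, α.symm (N x) = N (α.symm x) := by
    intro x
    apply α.injective
    rw [α.apply_symm_apply, hαN, α.apply_symm_apply]
  constructor
  · rintro ⟨γ, hγLie, hγbij, hγU, hγi, hpγs⟩
    set φ : g →ₗ[k] V := r ∘ₗ (γ ∘ₗ s ∘ₗ α.symm.toLinearMap - s) with hφdef
    have hG : ∀ x : g, γ (s (α.symm x)) = s x + i (φ x) := by
      intro x
      have h0 : p (γ (s (α.symm x)) - s x) = 0 := by
        rw [map_sub, hpγs, hs, α.apply_symm_apply, sub_self]
      have hφx : i (φ x) = γ (s (α.symm x)) - s x := by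
        rw [hφdef]
        simp only [LinearMap.comp_apply, LinearMap.sub_apply, LinearEquiv.coe_coe,
          LinearEquiv.coe_toLinearMap]
        rw [hr1, h0, map_zero, sub_zero]
      rw [hφx]; abel
    have hG' : ∀ x : g, γ (s x) = s (α x) + i (φ (α x)) := by
      intro x
      have := hG (α x)
      rwa [α.symm_apply_apply] at this
    refine ⟨?_, φ, ?_, ?_⟩
    · intro x v
      apply hiInj
      calc i (β (ρ x v)) = γ (i (ρ x v)) := (hγi _).symm
        _ = γ ⁅s x, i v⁆ := by rw [hρ]
        _ = ⁅γ (s x), γ (i v)⁆ := hγLie _ _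
        _ = ⁅s (α x) + i (φ (α x)), i (β v)⁆ := by rw [hG', hγi]
        _ = ⁅s (α x), i (β v)⁆ := by rw [add_lie, hab, add_zero]
        _ = i (ρ (α x) (β v)) := (hρ _ _).symm
    · intro x y
      apply hiInj
      simp only [map_sub]
      rw [← hγi, hχ, hχ, map_sub, hγLie, hG, hG,
        show γ (s ⁅α.symm x, α.symm y⁆) = s ⁅x, y⁆ + i (φ ⁅x, y⁆) from by
          rw [← hαsymmLie]; exact hG ⁅x, y⁆]
      rw [add_lie, lie_add, lie_add, hab,
        show ⁅i (φ x), s y⁆ = -⁅s y, i (φ x)⁆ from (lie_skew _ _).symm,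
        ← hρ, ← hρ]
      abel
    · intro x
      apply hiInj
      simp only [map_sub]
      rw [← hγi, hF, map_sub, hγU, hG,
        show γ (s (N (α.symm x))) = s (N x) + i (φ (N x)) from by
          rw [← hαsymmN]; exact hG (N x),
        map_add, hUi, hF]
      abel
  · rintro ⟨hcompat, φ, hχcob, hFcob⟩
    set γ : e →ₗ[k] e :=
      s ∘ₗ α.toLinearMap ∘ₗ p + i ∘ₗ (β.toLinearMap ∘ₗ r + φ ∘ₗ α.toLinearMap ∘ₗ p)
      with hγdef
    have hγa : ∀ a : e, γ a = s (α (p a)) + i (β (r a) + φ (α (p a))) := by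
      intro a
      rw [hγdef]
      simp only [LinearMap.add_apply, LinearMap.comp_apply, LinearEquiv.coe_toLinearMap,
        map_add]
    have hpγ : ∀ a : e, p (γ a) = α (p a) := by
      intro a
      rw [hγa, map_add, hs, hpi, add_zero]
    have hrγ : ∀ a : e, r (γ a) = β (r a) + φ (α (p a)) := by
      intro a
      apply hiInj
      rw [hr1, hpγ, hγa]
      abel
    have hbr : ∀ a b : e,
        ⁅a, b⁆ = s ⁅p a, p b⁆ + i (χ (p a) (p b) + ρ (p a) (r b) - ρ (p b) (r a)) := by
      intro a b
      conv_lhs => rw [hdec a, hdec b]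
      rw [add_lie, lie_add, lie_add, hab, add_zero,
        show ⁅i (r a), s (p b)⁆ = -⁅s (p b), i (r a)⁆ from (lie_skew _ _).symm,
        ← hρ, ← hρ,
        show ⁅s (p a), s (p b)⁆ = i (χ (p a) (p b)) + s ⁅p a, p b⁆ from by
          rw [hχ]; abel]
      simp only [map_sub, map_add]
      abel
    have hrbr : ∀ a b : e,
        r ⁅a, b⁆ = χ (p a) (p b) + ρ (p a) (r b) - ρ (p b) (r a) := by
      intro a b
      apply hiInj
      rw [hr1, hp]
      conv_lhs => rw [hbr a b]
      abel
    have hUa : ∀ a : e, U a = s (N (p a)) + i (F (p a) + S (r a)) := by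
      intro a
      conv_lhs => rw [hdec a]
      rw [map_add, hUi,
        show U (s (p a)) = s (N (p a)) + i (F (p a)) from by rw [hF]; abel]
      rw [map_add]
      abel
    have hrU : ∀ a : e, r (U a) = F (p a) + S (r a) := by
      intro a
      apply hiInj
      rw [hr1, hpU]
      conv_lhs => rw [hUa a]
      abel
    set δ : e →ₗ[k] e :=
      s ∘ₗ α.symm.toLinearMap ∘ₗ p + i ∘ₗ β.symm.toLinearMap ∘ₗ (r - φ ∘ₗ p)
      with hδdef
    have hδa : ∀ a : e, δ a = s (α.symm (p a)) + i (β.symm (r a - φ (p a))) := by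
      intro a
      rw [hδdef]
      simp only [LinearMap.add_apply, LinearMap.comp_apply, LinearEquiv.coe_toLinearMap,
        LinearMap.sub_apply]
    refine ⟨γ, ?_, ?_, ?_, ?_, ?_⟩
    · intro a b
      rw [hγa ⁅a, b⁆, hp, hrbr]
      conv_rhs => rw [hbr (γ a) (γ b)]
      rw [hpγ, hpγ, hrγ, hrγ, hαLie]
      congr 1
      refine congrArg i ?_
      have key := hχcob (α (p a)) (α (p b))
      rw [α.symm_apply_apply, α.symm_apply_apply, sub_eq_iff_eq_add] at key
      rw [← hαLie]
      simp only [map_add, map_sub, hρadd, hcompat, key, hαLie]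
      abel
    · have hδγ : ∀ a : e, δ (γ a) = a := by
        intro a
        rw [hδa, hpγ, hrγ, α.symm_apply_apply]
        rw [show β (r a) + φ (α (p a)) - φ (α (p a)) = β (r a) from by abel,
          β.symm_apply_apply]
        exact (hdec a).symm
      have hpδ : ∀ a : e, p (δ a) = α.symm (p a) := by
        intro a
        rw [hδa, map_add, hs, hpi, add_zero]
      have hrδ : ∀ a : e, r (δ a) = β.symm (r a - φ (p a)) := by
        intro a
        apply hiInj
        rw [hr1, hpδ, hδa]
        abel
      have hγδ : ∀ a : e, γ (δ a) = a := by
        intro a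
        rw [hγa, hpδ, hrδ, α.apply_symm_apply, β.apply_symm_apply]
        rw [show r a - φ (p a) + φ (p a) = r a from by abel]
        exact (hdec a).symm
      exact Function.bijective_iff_has_inverse.mpr ⟨δ, hδγ, hγδ⟩
    · intro a
      rw [hγa (U a), hpU, hrU]
      conv_rhs => rw [hUa (γ a)]
      rw [hpγ, hrγ, hαN]
      congr 1
      refine congrArg i ?_
      have key := hFcob (α (p a))
      rw [α.symm_apply_apply, sub_eq_iff_eq_add] at key
      rw [← hαN]
      simp only [map_add, map_sub, hβS, key, hαN]
      abel
    · intro v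
      rw [hγa, hpi, hri, map_zero, map_zero, map_zero, add_zero, zero_add]
    · intro x
      rw [hpγ, hs]
end

section
/- Let 0 → (V, S) →ⁱ (e, [·,·]_e, U) →ᵖ (g, [·,·]_g, N) → 0 be a split abelian extension, i.e. there is a section s of p which is a Lie algebra homomorphism and satisfies U ∘ s = s ∘ N. Then the 2-cocycle (χ, F) associated to s is identically zero, and for every compatible pair (β, α) (meaning β(ρ_x v) = ρ_{α x}(β v) for all x, v), the map γ_{(β,α)} : e → e defined by γ_{(β,α)}(s x + u) := s(α x) + β u is a Lie algebra automorphism of e commuting with U and preserving V, with γ_{(β,α)}|_V = β and p ∘ γ_{(β,α)} ∘ s = α; moreover (β, α) ↦ γ_{(β,α)} is a group homomorphism splitting τ(γ) = (γ|_V, p γ s). -/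
/-- For a split abelian extension of a Nijenhuis Lie algebra (with a
section `s` that is a morphism of Nijenhuis Lie algebras), the associated 2-cocycle
`(χ, F)` vanishes, and every compatible pair `(β, α)` is induced by the automorphism
`γ_{(β,α)}(s x + u) = s(α x) + β u` of `e`; moreover `(β, α) ↦ γ_{(β,α)}` is a group
homomorphism splitting `τ(γ) = (γ|_V, p γ s)`. -/
theorem stmt_13 {k g V e : Type*} [Field k]
    [LieRing g] [LieAlgebra k g] [AddCommGroup V] [Module k V]
    [LieRing e] [LieAlgebra k e]
    (N : g →ₗ[k] g) (S : V →ₗ[k] V) (U : e →ₗ[k] e)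
    (hN : ∀ x y : g, ⁅N x, N y⁆ = N (⁅N x, y⁆ + ⁅x, N y⁆ - N ⁅x, y⁆))
    (hU : ∀ a b : e, ⁅U a, U b⁆ = U (⁅U a, b⁆ + ⁅a, U b⁆ - U ⁅a, b⁆))
    (i : V →ₗ[k] e) (p : e →ₗ[k] g)
    (hab : ∀ u v : V, ⁅i u, i v⁆ = 0)
    (hp : ∀ a b : e, p ⁅a, b⁆ = ⁅p a, p b⁆)
    (hiInj : Function.Injective i) (hpSurj : Function.Surjective p)
    (hexact : LinearMap.range i = LinearMap.ker p)
    (hUi : ∀ v : V, U (i v) = i (S v))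
    (hpU : ∀ a : e, p (U a) = N (p a))
    -- a splitting: a section of p which is a morphism of Nijenhuis Lie algebras
    (s : g →ₗ[k] e) (hs : ∀ x : g, p (s x) = x)
    (hsLie : ∀ x y : g, s ⁅x, y⁆ = ⁅s x, s y⁆)
    (hsU : ∀ x : g, U (s x) = s (N x))
    -- the induced Nijenhuis representation
    (ρ : g → V → V) (hρ : ∀ (x : g) (v : V), i (ρ x v) = ⁅s x, i v⁆)
    -- a compatible pair (β, α)
    (β : V ≃ₗ[k] V) (α : g ≃ₗ[k] g)
    (hβS : ∀ v : V, β (S v) = S (β v))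
    (hαLie : ∀ x y : g, α ⁅x, y⁆ = ⁅α x, α y⁆)
    (hαN : ∀ x : g, α (N x) = N (α x))
    (hcomp : ∀ (x : g) (v : V), β (ρ x v) = ρ (α x) (β v)) :
    -- the 2-cocycle associated to s vanishes identically
    (∀ x y : g, ⁅s x, s y⁆ - s ⁅x, y⁆ = 0) ∧
    (∀ x : g, U (s x) - s (N x) = 0) ∧
    -- the automorphism γ_{(β,α)} induced by (β, α)
    (∃ γ : e →ₗ[k] e,
        (∀ (x : g) (v : V), γ (s x + i v) = s (α x) + i (β v)) ∧
        (∀ a b : e, γ ⁅a, b⁆ = ⁅γ a, γ b⁆) ∧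
        Function.Bijective γ ∧
        (∀ a : e, γ (U a) = U (γ a)) ∧
        (∀ v : V, γ (i v) = i (β v)) ∧
        (∀ x : g, p (γ (s x)) = α x)) ∧
    -- (β, α) ↦ γ_{(β,α)} is a group homomorphism: it sends composition to composition
    (∀ (β' : V ≃ₗ[k] V) (α' : g ≃ₗ[k] g),
        (∀ v : V, β' (S v) = S (β' v)) →
        (∀ x y : g, α' ⁅x, y⁆ = ⁅α' x, α' y⁆) →
        (∀ x : g, α' (N x) = N (α' x)) →
        (∀ (x : g) (v : V), β' (ρ x v) = ρ (α' x) (β' v)) →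
        ∀ γ γ' γ'' : e →ₗ[k] e,
          (∀ (x : g) (v : V), γ (s x + i v) = s (α x) + i (β v)) →
          (∀ (x : g) (v : V), γ' (s x + i v) = s (α' x) + i (β' v)) →
          (∀ (x : g) (v : V), γ'' (s x + i v) = s (α (α' x)) + i (β (β' v))) →
          γ'' = γ ∘ₗ γ') := by
  -- left inverse of i
  obtain ⟨j, hj⟩ := i.exists_leftInverse_of_injective
    (LinearMap.ker_eq_bot.mpr hiInj)
  have hji : ∀ v, j (i v) = v := fun v => congrArg (· v) hj
  set r : e →ₗ[k] V := j ∘ₗ (LinearMap.id - s ∘ₗ p) with hr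
  have hir : ∀ a : e, i (r a) = a - s (p a) := by
    intro a
    have hm : a - s (p a) ∈ LinearMap.range i := by
      rw [hexact, LinearMap.mem_ker, map_sub, hs]; abel
    obtain ⟨v, hv⟩ := hm
    have : r a = v := by
      simp only [hr, LinearMap.comp_apply, LinearMap.sub_apply,
        LinearMap.id_apply, LinearMap.comp_apply, ← hv, hji]
    rw [this, hv]
  have hdecomp : ∀ a : e, a = s (p a) + i (r a) := by
    intro a; rw [hir]; abel
  have hpi : ∀ v : V, p (i v) = 0 := by
    intro v
    have : i v ∈ LinearMap.ker p := hexact ▸ LinearMap.mem_range_self i v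
    exact this
  have hpkey' : ∀ (x : g) (v : V), p (s x + i v) = x := by
    intro x v; simp [hs, hpi]
  have hrkey : ∀ (x : g) (v : V), r (s x + i v) = v := by
    intro x v
    apply hiInj
    rw [hir, hpkey']; abel

  have hpkey : ∀ (x : g) (v : V), p (s x + i v) = x := hpkey'
  refine ⟨fun x y => by rw [hsLie]; abel, fun x => by rw [hsU]; abel, ?_, ?_⟩
  · -- construct γ for (β, α)
    set γ : e →ₗ[k] e := s ∘ₗ (α : g →ₗ[k] g) ∘ₗ p + i ∘ₗ (β : V →ₗ[k] V) ∘ₗ r with hγ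
    have hγapp : ∀ a : e, γ a = s (α (p a)) + i (β (r a)) := fun a => rfl
    have hγform : ∀ (x : g) (v : V), γ (s x + i v) = s (α x) + i (β v) := by
      intro x v; rw [hγapp, hpkey, hrkey]
    refine ⟨γ, hγform, ?_, ?_, ?_, ?_, ?_⟩
    · -- Lie hom
      intro a b
      have hbr : ∀ c d : e, ⁅c, d⁆ = s ⁅p c, p d⁆ + i (ρ (p c) (r d) - ρ (p d) (r c)) := by
        intro c d
        conv_lhs => rw [hdecomp c, hdecomp d]
        rw [map_sub, hρ, hρ]
        simp only [lie_add, add_lie, hab, hsLie]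
        rw [← lie_skew (s (p d)) (i (r c))]
        abel
      have hpγ : ∀ c : e, p (γ c) = α (p c) := by
        intro c; rw [hγapp, hpkey]
      have hrγ : ∀ c : e, r (γ c) = β (r c) := by
        intro c; rw [hγapp, hrkey]
      rw [hbr a b, hγform, hbr (γ a) (γ b), hpγ, hpγ, hrγ, hrγ, hαLie, map_sub, hcomp, hcomp]
    · -- bijective
      constructor
      · intro a b hab'
        have h1 : α (p a) = α (p b) := by
          have := congrArg p hab'
          rwa [hγapp, hγapp, hpkey, hpkey] at this
        have hpab : p a = p b := α.injective h1
        have h2 : i (β (r a)) = i (β (r b)) := by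
          rw [hγapp, hγapp, hpab] at hab'
          exact add_left_cancel hab'
        have hrab : r a = r b := β.injective (hiInj h2)
        rw [hdecomp a, hdecomp b, hpab, hrab]
      · intro c
        refine ⟨s (α.symm (p c)) + i (β.symm (r c)), ?_⟩
        rw [hγform, α.apply_symm_apply, β.apply_symm_apply, ← hdecomp]
    · -- commutes with U
      intro a
      have hrU : r (U a) = S (r a) := by
        apply hiInj
        have h1 : U a = s (N (p a)) + i (S (r a)) := by
          conv_lhs => rw [hdecomp a]
          rw [map_add, hsU, hUi]
        rw [hir, hpU, h1]; abel
      rw [hγapp, hγapp, hpU, hαN, hrU, hβS, map_add, hsU, hUi]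
    · intro v
      have := hγform 0 v
      simpa using this
    · intro x
      have := hγform x 0
      simp only [map_zero, add_zero] at this
      rw [this, hs]
  · intro β' α' _ _ _ _ γ γ' γ'' hγf hγ'f hγ''f
    apply LinearMap.ext
    intro a
    rw [LinearMap.comp_apply]
    conv_lhs => rw [hdecomp a]
    conv_rhs => rw [hdecomp a]
    rw [hγ''f, hγ'f, hγf]
end

section
/- Let (g, [·,·]_g, N) be a Nijenhuis Lie algebra, (V, ρ, S) a Nijenhuis representation, and (D_V, D_g) ∈ Der(V, S) × Der(g, N) a pair satisfying D_V(ρ_x v) = ρ_{D_g x} v + ρ_x(D_V v) for all x, v. If (χ, F) is a 2-cocycle of (g, N) with coefficients in (V, ρ, S), then the pair (χ_{(D_V,D_g)}, F_{(D_V,D_g)}) defined by χ_{(D_V,D_g)}(x,y) := D_V(χ(x,y)) − χ(D_g x, y) − χ(x, D_g y) and F_{(D_V,D_g)}(x) := D_V(F x) − F(D_g x) is also a 2-cocycle. -/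
/-- A 2-cocycle of the Nijenhuis Lie algebra `(g, N)` with coefficients in the
Nijenhuis representation `(V, ρ, S)`: a pair `(χ, F)` of linear maps `χ : Λ²g → V`,
`F : g → V` satisfying identities (c1) and (c2). -/
def IsNij2Cocycle (k : Type*) {g V : Type*} [Field k]
    [LieRing g] [LieAlgebra k g] [AddCommGroup V] [Module k V]
    (N : g → g) (ρ : g → V → V) (S : V → V) (χ : g → g → V) (F : g → V) : Prop :=
  (∀ x : g, IsLinearMap k (χ x)) ∧ (∀ y : g, IsLinearMap k (fun x => χ x y)) ∧
  IsLinearMap k F ∧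
  (∀ x : g, χ x x = 0) ∧
  (∀ x y z : g, ρ x (χ y z) + ρ y (χ z x) + ρ z (χ x y)
      - χ ⁅x, y⁆ z - χ ⁅y, z⁆ x - χ ⁅z, x⁆ y = 0) ∧
  (∀ x y : g, χ (N x) (N y) - S (χ (N x) y + χ x (N y) - S (χ x y))
      - F (⁅N x, y⁆ + ⁅x, N y⁆ - N ⁅x, y⁆)
      + ρ (N x) (F y) - ρ (N y) (F x)
      - S (ρ x (F y) - ρ y (F x) - F ⁅x, y⁆) = 0)

/-- If `(D_V, D_g)` is a compatible pair of Nijenhuis Lie algebra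
derivations and `(χ, F)` is a 2-cocycle of `(g, N)` with coefficients in the
Nijenhuis representation `(V, ρ, S)`, then the transformed pair
`(χ_{(D_V,D_g)}, F_{(D_V,D_g)})` is also a 2-cocycle. -/
theorem stmt_15 {k g V : Type*} [Field k]
    [LieRing g] [LieAlgebra k g] [AddCommGroup V] [Module k V]
    (N : g →ₗ[k] g)
    (hN : ∀ x y : g, ⁅N x, N y⁆ = N (⁅N x, y⁆ + ⁅x, N y⁆ - N ⁅x, y⁆))
    (ρ : g →ₗ[k] V →ₗ[k] V)
    (hρ : ∀ (x y : g) (v : V), ρ ⁅x, y⁆ v = ρ x (ρ y v) - ρ y (ρ x v))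
    (S : V →ₗ[k] V)
    (hNS : ∀ (x : g) (v : V), ρ (N x) (S v) = S (ρ (N x) v + ρ x (S v) - S (ρ x v)))
    -- a pair (D_V, D_g) ∈ Der(V, S) × Der(g, N) compatible with ρ
    (DV : V →ₗ[k] V) (Dg : g →ₗ[k] g)
    (hDVS : ∀ v : V, DV (S v) = S (DV v))
    (hDgLie : ∀ x y : g, Dg ⁅x, y⁆ = ⁅Dg x, y⁆ + ⁅x, Dg y⁆)
    (hDgN : ∀ x : g, Dg (N x) = N (Dg x))
    (hcomp : ∀ (x : g) (v : V), DV (ρ x v) = ρ (Dg x) v + ρ x (DV v))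
    -- a 2-cocycle (χ, F)
    (χ : g → g → V) (F : g → V)
    (hc : IsNij2Cocycle k (⇑N) (fun x v => ρ x v) (⇑S) χ F) :
    IsNij2Cocycle k (⇑N) (fun x v => ρ x v) (⇑S)
      (fun x y => DV (χ x y) - χ (Dg x) y - χ x (Dg y))
      (fun x => DV (F x) - F (Dg x)) := by
  obtain ⟨hχ1, hχ2, hF, halt, hc1, hc2⟩ := hc
  have hχa1 : ∀ a b c : g, χ (a + b) c = χ a c + χ b c := fun a b c => (hχ2 c).map_add a b
  have hχa2 : ∀ a b c : g, χ a (b + c) = χ a b + χ a c := fun a b c => (hχ1 a).map_add b c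
  have hχs1 : ∀ a b c : g, χ (a - b) c = χ a c - χ b c := fun a b c => by
    have := ((hχ2 c).mk' _).map_sub a b; simpa using this
  have hχs2 : ∀ a b c : g, χ a (b - c) = χ a b - χ a c := fun a b c => by
    have := ((hχ1 a).mk' _).map_sub b c; simpa using this
  have hFa : ∀ a b : g, F (a + b) = F a + F b := fun a b => hF.map_add a b
  have hFs : ∀ a b : g, F (a - b) = F a - F b := fun a b => (hF.mk' _).map_sub a b
  have hskew : ∀ a b : g, χ b a = - χ a b := by
    intro a b
    have h := halt (a + b)
    rw [hχa1, hχa2, hχa2, halt, halt] at h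
    linear_combination (norm := abel) h
  refine ⟨?_, ?_, ?_, ?_, ?_, ?_⟩
  · intro x
    constructor
    · intro a b
      simp only [hχa2, hχa1, map_add]
      abel
    · intro c a
      simp only [(hχ1 _).map_smul, (hχ2 _).map_smul, map_smul, smul_sub]
  · intro y
    constructor
    · intro a b
      simp only [hχa2, hχa1, map_add]
      abel
    · intro c a
      simp only [(hχ1 _).map_smul, (hχ2 _).map_smul, map_smul, smul_sub]
  · constructor
    · intro a b
      simp only [hFa, map_add]
      abel
    · intro c a
      simp only [hF.map_smul, map_smul, smul_sub]
  · intro x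
    simp only [halt, map_zero, hskew x (Dg x)]
    abel
  · intro x y z
    have H0 := congrArg DV (hc1 x y z)
    simp only [map_add, map_sub, map_zero, hcomp] at H0
    have H1 := hc1 (Dg x) y z
    have H2 := hc1 x (Dg y) z
    have H3 := hc1 x y (Dg z)
    simp only [hDgLie, hχa1, hχs1, hχa2, hχs2, map_add, map_sub] at H0 H1 H2 H3 ⊢
    linear_combination (norm := abel) H0 - H1 - H2 - H3
  · intro x y
    have H0 := congrArg DV (hc2 x y)
    simp only [map_add, map_sub, map_zero, hcomp, hDVS] at H0
    have H1 := hc2 (Dg x) y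
    have H2 := hc2 x (Dg y)
    simp only [hDgLie, hDgN, hχa1, hχs1, hχa2, hχs2, hFa, hFs, map_add, map_sub,
      hDVS] at H0 H1 H2 ⊢
    linear_combination (norm := abel) H0 - H1 - H2
end

section
/- Let (g, [·,·]_g, N) be a Nijenhuis Lie algebra, (V, ρ, S) a Nijenhuis representation, and (D_V, D_g) ∈ Der(V, S) × Der(g, N) a pair satisfying D_V(ρ_x v) = ρ_{D_g x} v + ρ_x(D_V v) for all x, v. If (χ, F) and (χ', F') are 2-cocycles that are cohomologous via a linear map φ : g → V, then the 2-cocycles (χ_{(D_V,D_g)}, F_{(D_V,D_g)}) and (χ'_{(D_V,D_g)}, F'_{(D_V,D_g)}) are cohomologous via the map D_V ∘ φ − φ ∘ D_g. -/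
/-- If `(D_V, D_g)` is a compatible pair of Nijenhuis Lie algebra
derivations and the 2-cocycles `(χ, F)` and `(χ', F')` are cohomologous via
`φ : g → V`, then the transformed 2-cocycles `(χ_{(D_V,D_g)}, F_{(D_V,D_g)})` and
`(χ'_{(D_V,D_g)}, F'_{(D_V,D_g)})` are cohomologous via `D_V ∘ φ - φ ∘ D_g`. -/
theorem stmt_16 {k g V : Type*} [Field k]
    [LieRing g] [LieAlgebra k g] [AddCommGroup V] [Module k V]
    (N : g →ₗ[k] g)
    (hN : ∀ x y : g, ⁅N x, N y⁆ = N (⁅N x, y⁆ + ⁅x, N y⁆ - N ⁅x, y⁆))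
    (ρ : g →ₗ[k] V →ₗ[k] V)
    (hρ : ∀ (x y : g) (v : V), ρ ⁅x, y⁆ v = ρ x (ρ y v) - ρ y (ρ x v))
    (S : V →ₗ[k] V)
    (hNS : ∀ (x : g) (v : V), ρ (N x) (S v) = S (ρ (N x) v + ρ x (S v) - S (ρ x v)))
    -- a pair (D_V, D_g) ∈ Der(V, S) × Der(g, N) compatible with ρ
    (DV : V →ₗ[k] V) (Dg : g →ₗ[k] g)
    (hDVS : ∀ v : V, DV (S v) = S (DV v))
    (hDgLie : ∀ x y : g, Dg ⁅x, y⁆ = ⁅Dg x, y⁆ + ⁅x, Dg y⁆)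
    (hDgN : ∀ x : g, Dg (N x) = N (Dg x))
    (hcomp : ∀ (x : g) (v : V), DV (ρ x v) = ρ (Dg x) v + ρ x (DV v))
    -- two cohomologous 2-cocycles
    (χ χ' : g → g → V) (F F' : g → V)
    (hc : IsNij2Cocycle k (⇑N) (fun x v => ρ x v) (⇑S) χ F)
    (hc' : IsNij2Cocycle k (⇑N) (fun x v => ρ x v) (⇑S) χ' F')
    (φ : g →ₗ[k] V)
    (hφ1 : ∀ x y : g, χ x y - χ' x y = ρ x (φ y) - ρ y (φ x) - φ ⁅x, y⁆)
    (hφ2 : ∀ x : g, F x - F' x = S (φ x) - φ (N x)) :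
    -- the transformed 2-cocycles are cohomologous via D_V ∘ φ - φ ∘ D_g
    (∀ x y : g,
      (DV (χ x y) - χ (Dg x) y - χ x (Dg y))
        - (DV (χ' x y) - χ' (Dg x) y - χ' x (Dg y))
      = ρ x (DV (φ y) - φ (Dg y)) - ρ y (DV (φ x) - φ (Dg x))
        - (DV (φ ⁅x, y⁆) - φ (Dg ⁅x, y⁆))) ∧
    (∀ x : g,
      (DV (F x) - F (Dg x)) - (DV (F' x) - F' (Dg x))
      = S (DV (φ x) - φ (Dg x)) - (DV (φ (N x)) - φ (Dg (N x)))) := by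
  constructor
  · intro x y
    have key : DV (χ x y) - χ (Dg x) y - χ x (Dg y)
        - (DV (χ' x y) - χ' (Dg x) y - χ' x (Dg y))
        = DV (χ x y - χ' x y) - (χ (Dg x) y - χ' (Dg x) y)
          - (χ x (Dg y) - χ' x (Dg y)) := by
      rw [map_sub]; abel
    rw [key, hφ1, hφ1, hφ1]
    simp only [map_sub, map_add, hcomp, hDgLie]
    abel
  · intro x
    have key : DV (F x) - F (Dg x) - (DV (F' x) - F' (Dg x))
        = DV (F x - F' x) - (F (Dg x) - F' (Dg x)) := by
      rw [map_sub]; abel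
    rw [key, hφ2, hφ2]
    simp only [map_sub, map_add, hDVS, hDgN]
    abel
end

section
/- Let (g, [·,·]_g, N) be a Nijenhuis Lie algebra and (V, ρ, S) a Nijenhuis representation. For a pair (D_V, D_g) of linear maps D_V : V → V, D_g : g → g and linear maps χ : Λ²g → V, F : g → V, define the action A_{(D_V,D_g)}(χ, F) := (D_V ∘ χ − χ ∘ (D_g ⊗ id) − χ ∘ (id ⊗ D_g), D_V ∘ F − F ∘ D_g). Then for any two pairs (D_V, D_g) and (D'_V, D'_g), one has A_{(D_V,D_g)} ∘ A_{(D'_V,D'_g)} − A_{(D'_V,D'_g)} ∘ A_{(D_V,D_g)} = A_{(D_V D'_V − D'_V D_V, D_g D'_g − D'_g D_g)} on all pairs (χ, F). In particular, the induced map Θ on the second cohomology group defines a representation of the Lie algebra D_ρ of compatible derivation pairs. -/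
/-- The action `A_{(D_V,D_g)}(χ, F) = (D_V∘χ - χ∘(D_g⊗id) - χ∘(id⊗D_g),
D_V∘F - F∘D_g)` on pairs satisfies the commutator identity
`A_{(D_V,D_g)} ∘ A_{(D'_V,D'_g)} - A_{(D'_V,D'_g)} ∘ A_{(D_V,D_g)}
 = A_{([D_V,D'_V], [D_g,D'_g])}`, so the induced map `Θ` on the second cohomology
group defines a representation of the Lie algebra `D_ρ` of compatible derivation
pairs. -/
theorem stmt_17 {k g V : Type*} [Field k]
    [LieRing g] [LieAlgebra k g] [AddCommGroup V] [Module k V]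
    (N : g →ₗ[k] g)
    (hN : ∀ x y : g, ⁅N x, N y⁆ = N (⁅N x, y⁆ + ⁅x, N y⁆ - N ⁅x, y⁆))
    (ρ : g →ₗ[k] V →ₗ[k] V)
    (hρ : ∀ (x y : g) (v : V), ρ ⁅x, y⁆ v = ρ x (ρ y v) - ρ y (ρ x v))
    (S : V →ₗ[k] V)
    (hNS : ∀ (x : g) (v : V), ρ (N x) (S v) = S (ρ (N x) v + ρ x (S v) - S (ρ x v))) :
    -- the action of a pair of linear maps on pairs (χ, F)
    ∀ act : (V →ₗ[k] V) → (g →ₗ[k] g) → (g → g → V) → (g → g → V),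
      act = (fun A B c => fun x y => A (c x y) - c (B x) y - c x (B y)) →
    ∀ actF : (V →ₗ[k] V) → (g →ₗ[k] g) → (g → V) → (g → V),
      actF = (fun A B f => fun x => A (f x) - f (B x)) →
    -- for any two pairs of linear maps, the commutator identity holds on all
    -- bilinear maps χ and all linear maps F
    ∀ DV DV' : V →ₗ[k] V, ∀ Dg Dg' : g →ₗ[k] g,
      (∀ χ : g → g → V,
        (∀ x : g, IsLinearMap k (χ x)) → (∀ y : g, IsLinearMap k (fun x => χ x y)) →
        act DV Dg (act DV' Dg' χ) - act DV' Dg' (act DV Dg χ)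
          = act (DV ∘ₗ DV' - DV' ∘ₗ DV) (Dg ∘ₗ Dg' - Dg' ∘ₗ Dg) χ) ∧
      (∀ F : g → V, IsLinearMap k F →
        actF DV Dg (actF DV' Dg' F) - actF DV' Dg' (actF DV Dg F)
          = actF (DV ∘ₗ DV' - DV' ∘ₗ DV) (Dg ∘ₗ Dg' - Dg' ∘ₗ Dg) F) := by
  intro act hact actF hactF DV DV' Dg Dg'
  subst hact hactF
  constructor
  · intro χ h1 h2
    funext x y
    simp only [Pi.sub_apply, LinearMap.sub_apply, LinearMap.comp_apply, map_sub,
      (h1 _).map_sub, (h2 _).map_sub]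
    abel
  · intro F hF
    funext x
    simp only [Pi.sub_apply, LinearMap.sub_apply, LinearMap.comp_apply, map_sub, hF.map_sub]
    abel
end

section
/- Let 0 → (V, S) →ⁱ (e, [·,·]_e, U) →ᵖ (g, [·,·]_g, N) → 0 be an abelian extension of the Nijenhuis Lie algebra (g, N) with induced Nijenhuis representation (V, ρ, S), let s be a section of p and (χ, F) the associated 2-cocycle. Then a pair (D_V, D_g) ∈ Der(V, S) × Der(g, N) is inducible if and only if both: (1) D_V(ρ_x v) = ρ_{D_g x} v + ρ_x(D_V v) for all x ∈ g, v ∈ V, and (2) the 2-cocycle (χ_{(D_V,D_g)}, F_{(D_V,D_g)}), with χ_{(D_V,D_g)}(x,y) := D_V(χ(x,y)) − χ(D_g x, y) − χ(x, D_g y) and F_{(D_V,D_g)}(x) := D_V(F x) − F(D_g x), is cohomologous to the zero 2-cocycle, i.e. there exists φ : g → V with χ_{(D_V,D_g)}(x,y) = ρ_x(φ y) − ρ_y(φ x) − φ[x,y]_g and F_{(D_V,D_g)}(x) = S(φ x) − φ(N x). -/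
/-- Given an abelian extension of the Nijenhuis Lie algebra `(g, N)`
with induced Nijenhuis representation `(V, ρ, S)`, a section `s` and the associated
2-cocycle `(χ, F)`, a pair `(D_V, D_g) ∈ Der(V,S) × Der(g,N)` is inducible if and
only if (1) it is compatible with `ρ` and (2) the transformed 2-cocycle
`(χ_{(D_V,D_g)}, F_{(D_V,D_g)})` is cohomologous to zero. -/
theorem stmt_18 {k g V e : Type*} [Field k]
    [LieRing g] [LieAlgebra k g] [AddCommGroup V] [Module k V]
    [LieRing e] [LieAlgebra k e]
    (N : g →ₗ[k] g) (S : V →ₗ[k] V) (U : e →ₗ[k] e)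
    (hN : ∀ x y : g, ⁅N x, N y⁆ = N (⁅N x, y⁆ + ⁅x, N y⁆ - N ⁅x, y⁆))
    (hU : ∀ a b : e, ⁅U a, U b⁆ = U (⁅U a, b⁆ + ⁅a, U b⁆ - U ⁅a, b⁆))
    (i : V →ₗ[k] e) (p : e →ₗ[k] g)
    (hab : ∀ u v : V, ⁅i u, i v⁆ = 0)
    (hp : ∀ a b : e, p ⁅a, b⁆ = ⁅p a, p b⁆)
    (hiInj : Function.Injective i) (hpSurj : Function.Surjective p)
    (hexact : LinearMap.range i = LinearMap.ker p)
    (hUi : ∀ v : V, U (i v) = i (S v))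
    (hpU : ∀ a : e, p (U a) = N (p a))
    -- a section of p, the induced Nijenhuis representation, the associated 2-cocycle
    (s : g →ₗ[k] e) (hs : ∀ x : g, p (s x) = x)
    (ρ : g → V → V) (hρ : ∀ (x : g) (v : V), i (ρ x v) = ⁅s x, i v⁆)
    (χ : g → g → V) (F : g → V)
    (hχ : ∀ x y : g, i (χ x y) = ⁅s x, s y⁆ - s ⁅x, y⁆)
    (hF : ∀ x : g, i (F x) = U (s x) - s (N x))
    -- a pair (D_V, D_g) ∈ Der(V, S) × Der(g, N)
    (DV : V →ₗ[k] V) (Dg : g →ₗ[k] g)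
    (hDVS : ∀ v : V, DV (S v) = S (DV v))
    (hDgLie : ∀ x y : g, Dg ⁅x, y⁆ = ⁅Dg x, y⁆ + ⁅x, Dg y⁆)
    (hDgN : ∀ x : g, Dg (N x) = N (Dg x)) :
    -- (D_V, D_g) is inducible
    (∃ D : e →ₗ[k] e,
        (∀ a b : e, D ⁅a, b⁆ = ⁅D a, b⁆ + ⁅a, D b⁆) ∧
        (∀ a : e, D (U a) = U (D a)) ∧
        (∀ v : V, D (i v) = i (DV v)) ∧
        (∀ x : g, p (D (s x)) = Dg x))
    ↔
    -- iff the pair is compatible and the Wells class vanishes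
    ((∀ (x : g) (v : V), DV (ρ x v) = ρ (Dg x) v + ρ x (DV v)) ∧
     (∃ φ : g →ₗ[k] V,
        (∀ x y : g, DV (χ x y) - χ (Dg x) y - χ x (Dg y)
            = ρ x (φ y) - ρ y (φ x) - φ ⁅x, y⁆) ∧
        (∀ x : g, DV (F x) - F (Dg x) = S (φ x) - φ (N x)))) := by
    -- basic consequences of exactness
  have hpi : ∀ v : V, p (i v) = 0 := by
    intro v
    have : i v ∈ LinearMap.ker p := hexact ▸ LinearMap.mem_range_self i v
    exact this
  have hmem : ∀ a : e, a - s (p a) ∈ LinearMap.range i := by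
    intro a
    rw [hexact, LinearMap.mem_ker, map_sub, hs, sub_self]
  -- the retraction r : e → V
  set r : e →ₗ[k] V :=
    ((LinearEquiv.ofInjective i hiInj).symm.toLinearMap).comp
      ((LinearMap.id - s.comp p).codRestrict (LinearMap.range i) (fun a => hmem a)) with hrdef
  have hir : ∀ a : e, i (r a) = a - s (p a) := by
    intro a
    have h1 : (LinearMap.codRestrict (LinearMap.range i) (LinearMap.id - s.comp p)
        (fun a => hmem a)) a = ⟨a - s (p a), hmem a⟩ := by
      apply Subtype.ext
      simp [LinearMap.codRestrict_apply]
    rw [hrdef]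
    simp only [LinearMap.coe_comp, Function.comp_apply, LinearEquiv.coe_coe, h1]
    have h2 := congrArg (Subtype.val)
      ((LinearEquiv.ofInjective i hiInj).apply_symm_apply ⟨a - s (p a), hmem a⟩)
    rw [LinearEquiv.ofInjective_apply] at h2
    exact h2
  have hri : ∀ v : V, r (i v) = v := by
    intro v
    apply hiInj
    rw [hir, hpi, map_zero, sub_zero]
  have hrs : ∀ x : g, r (s x) = 0 := by
    intro x
    apply hiInj
    rw [hir, hs, sub_self, map_zero]
  have hdecomp : ∀ a : e, a = s (p a) + i (r a) := by
    intro a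
    rw [hir]
    abel
  have hext : ∀ c d : e, p c = p d → r c = r d → c = d := by
    intro c d h1 h2
    rw [hdecomp c, hdecomp d, h1, h2]
  -- bracket lemmas
  have hsi : ∀ (x : g) (v : V), ⁅s x, i v⁆ = i (ρ x v) := fun x v => (hρ x v).symm
  have his : ∀ (x : g) (v : V), ⁅i v, s x⁆ = - i (ρ x v) := by
    intro x v
    rw [← lie_skew, hsi]
  have hss : ∀ x y : g, ⁅s x, s y⁆ = i (χ x y) + s ⁅x, y⁆ := by
    intro x y
    rw [hχ]
    abel
  have hUs2 : ∀ x : g, U (s x) = i (F x) + s (N x) := by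
    intro x
    rw [hF]
    abel
  have hρadd : ∀ (x : g) (u v : V), ρ x (u + v) = ρ x u + ρ x v := by
    intro x u v
    apply hiInj
    rw [hρ, map_add, map_add, lie_add, hρ, hρ]
  have hbrab : ∀ a b : e,
      ⁅a, b⁆ = s ⁅p a, p b⁆ + i (χ (p a) (p b) + ρ (p a) (r b) - ρ (p b) (r a)) := by
    intro a b
    conv_lhs => rw [hdecomp a, hdecomp b]
    rw [add_lie, lie_add, lie_add, hss, hsi, his, hab, map_sub, map_add]
    abel
  have hrbr : ∀ a b : e,
      r ⁅a, b⁆ = χ (p a) (p b) + ρ (p a) (r b) - ρ (p b) (r a) := by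
    intro a b
    conv_lhs => rw [hbrab a b]
    rw [map_add, hrs, hri, zero_add]
  have hUa : ∀ a : e, U a = s (N (p a)) + i (F (p a) + S (r a)) := by
    intro a
    conv_lhs => rw [hdecomp a]
    rw [map_add, hUs2, hUi, map_add]
    abel
  have hrU : ∀ a : e, r (U a) = F (p a) + S (r a) := by
    intro a
    conv_lhs => rw [hUa a]
    rw [map_add, hrs, hri, zero_add]
  constructor
  · rintro ⟨D, hDlie, hDU, hDi, hpDs⟩
    set φ : g →ₗ[k] V := r.comp (D.comp s) with hφdef
    have hφ : ∀ x : g, i (φ x) = D (s x) - s (Dg x) := by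
      intro x
      show i (r (D (s x))) = _
      rw [hir, hpDs]
    have hDs : ∀ x : g, D (s x) = s (Dg x) + i (φ x) := by
      intro x
      rw [hφ]
      abel
    refine ⟨?_, φ, ?_, ?_⟩
    · intro x v
      apply hiInj
      calc i (DV (ρ x v)) = D (i (ρ x v)) := (hDi _).symm
        _ = D ⁅s x, i v⁆ := by rw [hsi]
        _ = ⁅D (s x), i v⁆ + ⁅s x, D (i v)⁆ := hDlie _ _
        _ = ⁅s (Dg x) + i (φ x), i v⁆ + ⁅s x, i (DV v)⁆ := by rw [hDs, hDi]
        _ = i (ρ (Dg x) v + ρ x (DV v)) := by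
            rw [add_lie, hsi, hab, hsi, map_add]
            abel
    · intro x y
      have key : i (DV (χ x y))
          = i (χ (Dg x) y + χ x (Dg y) + (ρ x (φ y) - ρ y (φ x) - φ ⁅x, y⁆)) := by
        calc i (DV (χ x y)) = D (i (χ x y)) := (hDi _).symm
          _ = D ⁅s x, s y⁆ - D (s ⁅x, y⁆) := by rw [hχ, map_sub]
          _ = ⁅D (s x), s y⁆ + ⁅s x, D (s y)⁆ - D (s ⁅x, y⁆) := by rw [hDlie]
          _ = ⁅s (Dg x) + i (φ x), s y⁆ + ⁅s x, s (Dg y) + i (φ y)⁆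
              - (s (Dg ⁅x, y⁆) + i (φ ⁅x, y⁆)) := by rw [hDs, hDs, hDs]
          _ = (i (χ (Dg x) y) + s ⁅Dg x, y⁆ - i (ρ y (φ x)))
              + (i (χ x (Dg y)) + s ⁅x, Dg y⁆ + i (ρ x (φ y)))
              - (s ⁅Dg x, y⁆ + s ⁅x, Dg y⁆ + i (φ ⁅x, y⁆)) := by
                rw [add_lie, lie_add, hss, hss, his, hsi, hDgLie, map_add]
                abel
          _ = i (χ (Dg x) y + χ x (Dg y) + (ρ x (φ y) - ρ y (φ x) - φ ⁅x, y⁆)) := by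
                simp only [map_add, map_sub]
                abel
      rw [hiInj key]
      abel
    · intro x
      have key : i (DV (F x)) = i (F (Dg x) + (S (φ x) - φ (N x))) := by
        calc i (DV (F x)) = D (i (F x)) := (hDi _).symm
          _ = D (U (s x)) - D (s (N x)) := by rw [hF, map_sub]
          _ = U (D (s x)) - (s (Dg (N x)) + i (φ (N x))) := by rw [hDU, hDs (N x)]
          _ = U (s (Dg x)) + U (i (φ x)) - (s (N (Dg x)) + i (φ (N x))) := by
              rw [hDs x, map_add, hDgN]
          _ = i (F (Dg x)) + s (N (Dg x)) + i (S (φ x)) - (s (N (Dg x)) + i (φ (N x))) := by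
              rw [hUs2, hUi]
          _ = i (F (Dg x) + (S (φ x) - φ (N x))) := by
              simp only [map_add, map_sub]
              abel
      rw [hiInj key]
      abel
  · rintro ⟨h1, φ, h2a, h2b⟩
    set D : e →ₗ[k] e := s.comp (Dg.comp p) + i.comp (φ.comp p) + i.comp (DV.comp r)
      with hDdef
    have hDapp : ∀ a : e, D a = s (Dg (p a)) + i (φ (p a) + DV (r a)) := by
      intro a
      rw [hDdef]
      simp only [LinearMap.add_apply, LinearMap.coe_comp, Function.comp_apply, map_add]
      abel
    have hpD : ∀ a : e, p (D a) = Dg (p a) := by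
      intro a
      rw [hDapp, map_add, hs, hpi, add_zero]
    have hrD : ∀ a : e, r (D a) = φ (p a) + DV (r a) := by
      intro a
      rw [hDapp, map_add, hrs, hri, zero_add]
    have hDi : ∀ v : V, D (i v) = i (DV v) := by
      intro v
      rw [hDapp, hpi, hri]
      simp
    refine ⟨D, ?_, ?_, hDi, ?_⟩
    · intro a b
      apply hext
      · rw [hpD, map_add, hp a b, hp (D a) b, hp a (D b), hpD, hpD, hDgLie]
      · rw [hrD, hrbr a b, map_add r ⁅D a, b⁆ ⁅a, D b⁆, hrbr (D a) b, hrbr a (D b),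
          hp a b, hpD a, hpD b, hrD a, hrD b]
        rw [map_sub DV (χ (p a) (p b) + ρ (p a) (r b)) (ρ (p b) (r a)),
          map_add DV (χ (p a) (p b)) (ρ (p a) (r b)), h1 (p a) (r b), h1 (p b) (r a)]
        rw [hρadd (p b) (φ (p a)) (DV (r a)), hρadd (p a) (φ (p b)) (DV (r b))]
        have e1 : DV (χ (p a) (p b))
            = ρ (p a) (φ (p b)) - ρ (p b) (φ (p a)) - φ ⁅p a, p b⁆
              + (χ (Dg (p a)) (p b) + χ (p a) (Dg (p b))) := by
          have h := h2a (p a) (p b)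
          rw [sub_sub, sub_eq_iff_eq_add] at h
          exact h
        rw [e1]
        abel
    · intro a
      apply hext
      · rw [hpD, hpU, hpU, hpD, hDgN]
      · rw [hrD, hrU a, hrU (D a), hrD a, hpU a, hpD a]
        rw [map_add DV (F (p a)) (S (r a)), map_add S (φ (p a)) (DV (r a)), hDVS]
        have e2 : DV (F (p a)) = S (φ (p a)) - φ (N (p a)) + F (Dg (p a)) := by
          have h := h2b (p a)
          rw [sub_eq_iff_eq_add] at h
          exact h
        rw [e2]
        abel
    · intro x
      rw [hpD, hs]
end

section
/- Let 0 → (V, S) →ⁱ (e, [·,·]_e, U) →ᵖ (g, [·,·]_g, N) → 0 be an abelian extension of the Nijenhuis Lie algebra (g, N) with induced Nijenhuis representation (V, ρ, S), and let s be a section of p. Define ι : Der((g, N); (V, S)) → Der_V(e, U) by ι(d) := i ∘ d ∘ p. Then ι is well defined (i ∘ d ∘ p is indeed a derivation of e commuting with U and preserving V) and injective, and for D ∈ Der_V(e, U) one has D|_V = 0 and p ∘ D ∘ s = 0 if and only if D = ι(d) for some d ∈ Der((g, N); (V, S)); i.e. the sequence 0 → Der((g, N); (V, S)) →^ι Der_V(e,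 U) →^η Der(V, S) × Der(g, N) with η(D) = (D|_V, p D s) is exact at the first two places. -/
/-- For an abelian extension of a Nijenhuis Lie algebra with induced
Nijenhuis representation `(V, ρ, S)` and a section `s`, the map
`ι(d) := i ∘ d ∘ p` is well defined from `Der((g,N);(V,S))` to `Der_V(e,U)` and
injective, and a derivation `D ∈ Der_V(e,U)` satisfies `D|_V = 0` and `p∘D∘s = 0`
iff `D = ι(d)` for some `d ∈ Der((g,N);(V,S))`; i.e. the sequence
`0 → Der((g,N);(V,S)) → Der_V(e,U) → Der(V,S) × Der(g,N)` is exact at the first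
two places. -/
theorem stmt_19 {k g V e : Type*} [Field k]
    [LieRing g] [LieAlgebra k g] [AddCommGroup V] [Module k V]
    [LieRing e] [LieAlgebra k e]
    (N : g →ₗ[k] g) (S : V →ₗ[k] V) (U : e →ₗ[k] e)
    (hN : ∀ x y : g, ⁅N x, N y⁆ = N (⁅N x, y⁆ + ⁅x, N y⁆ - N ⁅x, y⁆))
    (hU : ∀ a b : e, ⁅U a, U b⁆ = U (⁅U a, b⁆ + ⁅a, U b⁆ - U ⁅a, b⁆))
    (i : V →ₗ[k] e) (p : e →ₗ[k] g)
    (hab : ∀ u v : V, ⁅i u, i v⁆ = 0)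
    (hp : ∀ a b : e, p ⁅a, b⁆ = ⁅p a, p b⁆)
    (hiInj : Function.Injective i) (hpSurj : Function.Surjective p)
    (hexact : LinearMap.range i = LinearMap.ker p)
    (hUi : ∀ v : V, U (i v) = i (S v))
    (hpU : ∀ a : e, p (U a) = N (p a))
    -- a section of p and the induced Nijenhuis representation
    (s : g →ₗ[k] e) (hs : ∀ x : g, p (s x) = x)
    (ρ : g → V → V) (hρ : ∀ (x : g) (v : V), i (ρ x v) = ⁅s x, i v⁆) :
    -- ι is well defined: for d ∈ Der((g,N);(V,S)), i∘d∘p lies in Der_V(e,U)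
    (∀ d : g →ₗ[k] V,
        (∀ x : g, S (d x) = d (N x)) →
        (∀ x y : g, d ⁅x, y⁆ = ρ x (d y) - ρ y (d x)) →
        (∀ a b : e, (i ∘ₗ d ∘ₗ p) ⁅a, b⁆
            = ⁅(i ∘ₗ d ∘ₗ p) a, b⁆ + ⁅a, (i ∘ₗ d ∘ₗ p) b⁆) ∧
        (∀ a : e, (i ∘ₗ d ∘ₗ p) (U a) = U ((i ∘ₗ d ∘ₗ p) a)) ∧
        (∀ v : V, ∃ w : V, (i ∘ₗ d ∘ₗ p) (i v) = i w)) ∧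
    -- ι is injective
    (∀ d d' : g →ₗ[k] V, i ∘ₗ d ∘ₗ p = i ∘ₗ d' ∘ₗ p → d = d') ∧
    -- exactness at Der_V(e,U): ker η = im ι
    (∀ D : e →ₗ[k] e,
        (∀ a b : e, D ⁅a, b⁆ = ⁅D a, b⁆ + ⁅a, D b⁆) →
        (∀ a : e, D (U a) = U (D a)) →
        (∀ v : V, ∃ w : V, D (i v) = i w) →
        (((∀ v : V, D (i v) = 0) ∧ (∀ x : g, p (D (s x)) = 0)) ↔
          (∃ d : g →ₗ[k] V,
            (∀ x : g, S (d x) = d (N x)) ∧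
            (∀ x y : g, d ⁅x, y⁆ = ρ x (d y) - ρ y (d x)) ∧
            D = i ∘ₗ d ∘ₗ p))) := by
  have hpi : ∀ v : V, p (i v) = 0 := by
    intro v
    have : i v ∈ LinearMap.ker p := hexact ▸ LinearMap.mem_range_self i v
    exact this
  have hkerp : ∀ a : e, p a = 0 → ∃ w : V, i w = a := by
    intro a ha
    have : a ∈ LinearMap.ker p := ha
    rw [← hexact] at this
    exact this
  have hbr : ∀ (a : e) (v : V), ⁅a, i v⁆ = ⁅s (p a), i v⁆ := by
    intro a v
    obtain ⟨w, hw⟩ := hkerp (a - s (p a)) (by simp [map_sub, hs])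
    have h0 : ⁅a, i v⁆ - ⁅s (p a), i v⁆ = 0 := by rw [← sub_lie, ← hw, hab]
    exact sub_eq_zero.mp h0
  refine ⟨?_, ?_, ?_⟩
  · intro d hd1 hd2
    refine ⟨?_, ?_, ?_⟩
    · intro a b
      simp only [LinearMap.comp_apply, hp, hd2]
      rw [map_sub, hρ, hρ, hbr a (d (p b)),
        ← lie_skew (i (d (p a))) b, hbr b]
      abel
    · intro a
      simp only [LinearMap.comp_apply, hpU, ← hd1, hUi]
    · intro v
      exact ⟨d (p (i v)), rfl⟩
  · intro d d' h
    ext x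
    apply hiInj
    have := LinearMap.congr_fun h (s x)
    simpa [hs] using this
  · intro D hD1 hD2 hD3
    constructor
    · rintro ⟨hDV, hpDs⟩
      have hDker : ∀ a : e, p a = 0 → D a = 0 := by
        intro a ha
        obtain ⟨w, hw⟩ := hkerp a ha
        rw [← hw, hDV]
      set iR := LinearEquiv.ofInjective i hiInj with hiR
      have hmem : ∀ x : g, (D ∘ₗ s) x ∈ LinearMap.range i := by
        intro x; rw [hexact]; exact hpDs x
      set d : g →ₗ[k] V :=
        iR.symm.toLinearMap ∘ₗ LinearMap.codRestrict (LinearMap.range i) (D ∘ₗ s) hmem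
        with hdDef
      have hd : ∀ x : g, i (d x) = D (s x) := by
        intro x
        have h1 : (iR (d x) : e) = i (d x) := LinearEquiv.ofInjective_apply i (d x)
        have h2 : iR (d x) = ⟨D (s x), hmem x⟩ := by
          simp [hdDef, LinearMap.codRestrict]
        rw [← h1, h2]
      refine ⟨d, ?_, ?_, ?_⟩
      · intro x
        apply hiInj
        have h3 : D (U (s x)) = D (s (N x)) := by
          have := hDker (U (s x) - s (N x)) (by simp [map_sub, hpU, hs])
          rw [map_sub, sub_eq_zero] at this
          exact this
        rw [← hUi, hd, hd, ← hD2, h3]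
      · intro x y
        apply hiInj
        have h4 : D (s ⁅x, y⁆) = D ⁅s x, s y⁆ := by
          have := hDker (s ⁅x, y⁆ - ⁅s x, s y⁆) (by simp [map_sub, hp, hs])
          rw [map_sub, sub_eq_zero] at this
          exact this
        rw [hd, h4, hD1, map_sub, hρ, hρ, hd, hd, ← lie_skew (D (s x)) (s y)]
        abel
      · ext a
        have h5 : D (a - s (p a)) = 0 := hDker _ (by simp [map_sub, hs])
        rw [map_sub, sub_eq_zero] at h5
        simp only [LinearMap.comp_apply]
        rw [h5, hd]
    · rintro ⟨d, hd1, hd2, rfl⟩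
      constructor
      · intro v
        simp [hpi]
      · intro x
        simp [hpi]
end
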